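/- arXiv:1106.2985 — 7 statements merged into one kernel-verified Lean document; each statement's English description precedes it below -/
import Mathlib

section
/- Let m > 0. There exists f ∈ L¹(ℝ;ℂ), not zero almost everywhere, such that ∫_ℝ f(t)·exp(iπτt) dt = 0 for all τ ≥ 0, and whose hyperbola Fourier transform vanishes on the whole closed space-like quarter-plane: F_f(ξ₁,ξ₂) = ∫_ℝ f(t)·exp(iπ(ξ₁t − m²ξ₂/(4π²t))) dt = 0 for all ξ₁ ≥ 0 and ξ₂ ≥ 0. (Hence the closed quarter-plane cl(ℝ₊×ℝ₊) is not a Fourier uniqueness set for the Hardy-type measures ACH(Γ_m) on the hyperbola.) -/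
open MeasureTheory Real

open Complex Filter Topology

set_option maxHeartbeats 1000000

noncomputable def phih (a s : ℝ) (z : ℂ) : ℂ :=
  Complex.exp (Complex.I * (a * z - s * z⁻¹)) * ((z + Complex.I) ^ 2)⁻¹

lemma phih_norm_le (a s : ℝ) (ha : 0 ≤ a) (hs : 0 ≤ s) (z : ℂ) (hz : 0 ≤ z.im) :
    ‖phih a s z‖ ≤ (z.re ^ 2 + (z.im + 1) ^ 2)⁻¹ := by
  have h1 : ‖Complex.exp (Complex.I * (a * z - s * z⁻¹))‖ ≤ 1 := by
    rw [Complex.norm_exp]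
    have : (Complex.I * (a * z - s * z⁻¹)).re = -(a * z.im) - s * (z.im / Complex.normSq z) := by
      simp [Complex.mul_re, Complex.mul_im, Complex.inv_im, Complex.inv_re]
      ring
    rw [this]
    have h2 : 0 ≤ a * z.im := mul_nonneg ha hz
    have h3 : 0 ≤ s * (z.im / Complex.normSq z) :=
      mul_nonneg hs (div_nonneg hz (Complex.normSq_nonneg z))
    exact Real.exp_le_one_iff.mpr (by linarith)
  have h2 : ‖((z + Complex.I) ^ 2)⁻¹‖ = (z.re ^ 2 + (z.im + 1) ^ 2)⁻¹ := by
    rw [norm_inv, norm_pow, ← Complex.normSq_eq_norm_sq]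
    congr 1
    simp [Complex.normSq_apply]
    ring
  calc ‖phih a s z‖ ≤ 1 * ‖((z + Complex.I) ^ 2)⁻¹‖ := by
        rw [phih, norm_mul]; exact mul_le_mul_of_nonneg_right h1 (norm_nonneg _)
    _ = (z.re ^ 2 + (z.im + 1) ^ 2)⁻¹ := by rw [one_mul, h2]

lemma phih_norm_le' (a s : ℝ) (ha : 0 ≤ a) (hs : 0 ≤ s) (z : ℂ) (hz : 0 ≤ z.im) :
    ‖phih a s z‖ ≤ (z.re ^ 2 + 1)⁻¹ := by
  refine (phih_norm_le a s ha hs z hz).trans ?_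
  apply inv_anti₀
  · positivity
  · nlinarith

lemma phih_meas (a s : ℝ) (y : ℝ) :
    AEStronglyMeasurable (fun x : ℝ => phih a s (x + y * Complex.I)) volume := by
  apply Measurable.aestronglyMeasurable
  unfold phih
  fun_prop

lemma phih_integrable (a s : ℝ) (ha : 0 ≤ a) (hs : 0 ≤ s) (y : ℝ) (hy : 0 ≤ y) :
    Integrable (fun x : ℝ => phih a s (x + y * Complex.I)) volume := by
  have hbd : Integrable (fun x : ℝ => (x ^ 2 + 1)⁻¹) volume := by
    simpa [add_comm] using integrable_inv_one_add_sq
  refine hbd.mono' (phih_meas a s y) ?_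
  filter_upwards with x
  have := phih_norm_le' a s ha hs (x + y * Complex.I) (by simp [hy])
  simpa using this

lemma phih_diff (a s : ℝ) {z : ℂ} (hz : 0 < z.im) :
    DifferentiableAt ℂ (phih a s) z := by
  have hz0 : z ≠ 0 := by intro h; rw [h] at hz; simp at hz
  have hzi : z + Complex.I ≠ 0 := by
    intro h
    have : (z + Complex.I).im = 0 := by rw [h]; simp
    simp [Complex.add_im] at this
    linarith
  apply DifferentiableAt.mul
  · apply DifferentiableAt.cexp
    exact DifferentiableAt.const_mul
      ((differentiableAt_id.const_mul _).sub ((differentiableAt_id.inv hz0).const_mul _)) _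
  · exact (DifferentiableAt.pow (differentiableAt_id.add_const _) 2).inv (pow_ne_zero 2 hzi)

lemma phih_J_const (a s : ℝ) (ha : 0 ≤ a) (hs : 0 ≤ s) {y₁ y₂ : ℝ}
    (h1 : 0 < y₁) (h12 : y₁ ≤ y₂) :
    ∫ x : ℝ, phih a s (x + y₁ * Complex.I) = ∫ x : ℝ, phih a s (x + y₂ * Complex.I) := by
  set f := phih a s
  -- rectangle identity
  have hrect : ∀ R : ℝ,
      (∫ x in (-R)..R, f (x + y₁ * Complex.I)) - (∫ x in (-R)..R, f (x + y₂ * Complex.I))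
      + Complex.I • (∫ y in y₁..y₂, f ((R : ℂ) + y * Complex.I))
      - Complex.I • (∫ y in y₁..y₂, f (-(R : ℂ) + y * Complex.I)) = 0 := by
    intro R
    have hd : DifferentiableOn ℂ f
        (Set.uIcc ((-R : ℂ) + y₁ * Complex.I).re ((R : ℂ) + y₂ * Complex.I).re ×ℂ
         Set.uIcc ((-R : ℂ) + y₁ * Complex.I).im ((R : ℂ) + y₂ * Complex.I).im) := by
      intro z hz
      refine (phih_diff a s ?_).differentiableWithinAt
      have hzim : z.im ∈ Set.uIcc y₁ y₂ := by
        simpa using hz.2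
      rw [Set.uIcc_of_le h12] at hzim
      exact lt_of_lt_of_le h1 hzim.1
    have := Complex.integral_boundary_rect_eq_zero_of_differentiableOn f
      ((-R : ℂ) + y₁ * Complex.I) ((R : ℂ) + y₂ * Complex.I) hd
    simpa using this
  -- limits
  have hT1 : Tendsto (fun R : ℝ => ∫ x in (-R)..R, f (x + y₁ * Complex.I)) atTop
      (𝓝 (∫ x : ℝ, f (x + y₁ * Complex.I))) :=
    intervalIntegral_tendsto_integral (phih_integrable a s ha hs y₁ h1.le)
      tendsto_neg_atTop_atBot tendsto_id
  have hT2 : Tendsto (fun R : ℝ => ∫ x in (-R)..R, f (x + y₂ * Complex.I)) atTop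
      (𝓝 (∫ x : ℝ, f (x + y₂ * Complex.I))) :=
    intervalIntegral_tendsto_integral (phih_integrable a s ha hs y₂ (h1.le.trans h12))
      tendsto_neg_atTop_atBot tendsto_id
  have hvert : ∀ c : ℝ → ℝ, (∀ R, c R = R ∨ c R = -R) →
      Tendsto (fun R : ℝ => ∫ y in y₁..y₂, f (c R + y * Complex.I)) atTop (𝓝 0) := by
    intro c hc
    apply squeeze_zero_norm (a := fun R => (R ^ 2 + 1)⁻¹ * |y₂ - y₁|)
    · intro R
      apply intervalIntegral.norm_integral_le_of_norm_le_const
      intro y hy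
      have hy0 : 0 ≤ y := by
        rcases hy with ⟨hy1, _⟩
        rw [min_eq_left h12] at hy1
        linarith
      have := phih_norm_le' a s ha hs ((c R : ℂ) + y * Complex.I) (by simp [hy0])
      have hre : ((c R : ℂ) + y * Complex.I).re = c R := by simp
      rw [hre] at this
      refine this.trans ?_
      have : (c R) ^ 2 = R ^ 2 := by rcases hc R with h | h <;> rw [h] <;> ring
      rw [this]
    · have h1' : Tendsto (fun R : ℝ => (R ^ 2 + 1)⁻¹) atTop (𝓝 0) := by
        apply tendsto_inv_atTop_zero.comp
        apply tendsto_atTop_add_const_right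
        exact tendsto_pow_atTop two_ne_zero
      simpa using h1'.mul_const |y₂ - y₁|
  have hT3 : Tendsto (fun R : ℝ => ∫ y in y₁..y₂, f ((R : ℂ) + y * Complex.I)) atTop (𝓝 0) := by
    simpa using hvert (fun R => R) (fun R => Or.inl rfl)
  have hT4 : Tendsto (fun R : ℝ => ∫ y in y₁..y₂, f (-(R : ℂ) + y * Complex.I)) atTop (𝓝 0) := by
    simpa [Complex.ofReal_neg] using hvert (fun R => -R) (fun R => Or.inr rfl)
  have hsum : Tendsto (fun R : ℝ =>
      (∫ x in (-R)..R, f (x + y₁ * Complex.I)) - (∫ x in (-R)..R, f (x + y₂ * Complex.I))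
      + Complex.I * (∫ y in y₁..y₂, f ((R : ℂ) + y * Complex.I))
      - Complex.I * (∫ y in y₁..y₂, f (-(R : ℂ) + y * Complex.I))) atTop
      (𝓝 ((∫ x : ℝ, f (x + y₁ * Complex.I)) - (∫ x : ℝ, f (x + y₂ * Complex.I)) +
        Complex.I * (0 : ℂ) - Complex.I * (0 : ℂ))) := by
    apply Tendsto.sub
    apply Tendsto.add
    · exact hT1.sub hT2
    · exact hT3.const_mul _
    · exact hT4.const_mul _
  have hrect' : ∀ R : ℝ,
      (∫ x in (-R)..R, f (x + y₁ * Complex.I)) - (∫ x in (-R)..R, f (x + y₂ * Complex.I))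
      + Complex.I * (∫ y in y₁..y₂, f ((R : ℂ) + y * Complex.I))
      - Complex.I * (∫ y in y₁..y₂, f (-(R : ℂ) + y * Complex.I)) = 0 := by
    intro R
    have := hrect R
    simpa [smul_eq_mul] using this
  have h0 : Tendsto (fun _ : ℝ => (0 : ℂ)) atTop (𝓝 0) := tendsto_const_nhds
  have heq : (fun R : ℝ =>
      (∫ x in (-R)..R, f (x + y₁ * Complex.I)) - (∫ x in (-R)..R, f (x + y₂ * Complex.I))
      + Complex.I * (∫ y in y₁..y₂, f ((R : ℂ) + y * Complex.I))
      - Complex.I * (∫ y in y₁..y₂, f (-(R : ℂ) + y * Complex.I))) = fun _ : ℝ => (0 : ℂ) :=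
    funext hrect'
  rw [heq] at hsum
  have := tendsto_nhds_unique hsum h0
  have h2 : (∫ (x : ℝ), f (↑x + ↑y₁ * Complex.I)) - ∫ (x : ℝ), f (↑x + ↑y₂ * Complex.I) = 0 := by
    rw [mul_zero] at this; linear_combination this
  exact sub_eq_zero.mp h2

lemma phih_J_atTop (a s : ℝ) (ha : 0 ≤ a) (hs : 0 ≤ s) :
    Tendsto (fun y : ℝ => ∫ x : ℝ, phih a s (x + y * Complex.I)) atTop (𝓝 0) := by
  have h0 : (0 : ℂ) = ∫ x : ℝ, (0 : ℂ) := by simp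
  rw [h0]
  apply tendsto_integral_filter_of_dominated_convergence (fun x : ℝ => (x ^ 2 + 1)⁻¹)
  · filter_upwards with y using phih_meas a s y
  · filter_upwards [eventually_ge_atTop (0 : ℝ)] with y hy
    filter_upwards with x
    simpa using phih_norm_le' a s ha hs (x + y * Complex.I) (by simp [hy])
  · simpa [add_comm] using integrable_inv_one_add_sq
  · filter_upwards with x
    apply squeeze_zero_norm' (a := fun y : ℝ => (x ^ 2 + (y + 1) ^ 2)⁻¹)
    · filter_upwards [eventually_ge_atTop (0 : ℝ)] with y hy
      simpa using phih_norm_le a s ha hs (x + y * Complex.I) (by simp [hy])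
    · apply tendsto_inv_atTop_zero.comp
      apply tendsto_atTop_add_const_left
      have : Tendsto (fun y : ℝ => y + 1) atTop atTop := tendsto_atTop_add_const_right _ _ tendsto_id
      exact (tendsto_pow_atTop two_ne_zero).comp this

lemma phih_cont_at (a s : ℝ) {x : ℝ} (hx : x ≠ 0) :
    ContinuousAt (phih a s) (x : ℂ) := by
  have hx0 : (x : ℂ) ≠ 0 := Complex.ofReal_ne_zero.mpr hx
  have hxi : ((x : ℂ) + Complex.I) ^ 2 ≠ 0 := by
    apply pow_ne_zero
    intro h
    have : ((x : ℂ) + Complex.I).im = 0 := by rw [h]; simp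
    simp at this
  have c1 : ContinuousAt (fun z : ℂ => (a : ℂ) * z) (x : ℂ) :=
    (continuous_const.mul continuous_id).continuousAt
  have c2 : ContinuousAt (fun z : ℂ => (s : ℂ) * z⁻¹) (x : ℂ) :=
    continuousAt_const.mul (continuousAt_inv₀ hx0)
  have c3 : ContinuousAt (fun z : ℂ => Complex.I * ((a : ℂ) * z - (s : ℂ) * z⁻¹)) (x : ℂ) :=
    continuousAt_const.mul (c1.sub c2)
  have c4 : ContinuousAt (fun z : ℂ => (((z + Complex.I) ^ 2)⁻¹ : ℂ)) (x : ℂ) := by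
    exact ContinuousAt.inv₀ (((continuous_id.add continuous_const).pow 2).continuousAt) hxi
  exact (Complex.continuous_exp.continuousAt.comp c3).mul c4

lemma phih_J_zeroLim (a s : ℝ) (ha : 0 ≤ a) (hs : 0 ≤ s) :
    Tendsto (fun y : ℝ => ∫ x : ℝ, phih a s (x + y * Complex.I)) (𝓝[>] (0:ℝ))
      (𝓝 (∫ x : ℝ, phih a s x)) := by
  apply tendsto_integral_filter_of_dominated_convergence (fun x : ℝ => (x ^ 2 + 1)⁻¹)
  · filter_upwards with y using phih_meas a s y
  · filter_upwards [self_mem_nhdsWithin] with y hy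
    filter_upwards with x
    simpa using phih_norm_le' a s ha hs (x + y * Complex.I) (by simp [le_of_lt (Set.mem_Ioi.mp hy)])
  · simpa [add_comm] using integrable_inv_one_add_sq
  · have hae : ∀ᵐ x : ℝ ∂volume, x ≠ 0 := by
      rw [ae_iff]
      simp
    filter_upwards [hae] with x hx
    have h1 : Tendsto (fun y : ℝ => (x : ℂ) + y * Complex.I) (𝓝[>] (0:ℝ)) (𝓝 (x : ℂ)) := by
      have : Tendsto (fun y : ℝ => (x : ℂ) + y * Complex.I) (𝓝 (0:ℝ))
          (𝓝 ((x : ℂ) + (0:ℝ) * Complex.I)) := by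
        apply Tendsto.const_add
        exact (Complex.continuous_ofReal.tendsto _).mul_const _
      simpa using this.mono_left nhdsWithin_le_nhds
    exact (phih_cont_at a s hx).tendsto.comp h1

lemma phih_integral_zero (a s : ℝ) (ha : 0 ≤ a) (hs : 0 ≤ s) :
    ∫ t : ℝ, phih a s t = 0 := by
  set J : ℝ → ℂ := fun y => ∫ x : ℝ, phih a s (x + y * Complex.I) with hJ
  have hconst : ∀ y : ℝ, 0 < y → J y = J 1 := by
    intro y hy
    rcases le_total y 1 with h | h
    · exact phih_J_const a s ha hs hy h
    · exact (phih_J_const a s ha hs one_pos h).symm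
  have hJ1 : J 1 = 0 := by
    have h1 : Tendsto J atTop (𝓝 0) := phih_J_atTop a s ha hs
    have h2 : J =ᶠ[atTop] fun _ => J 1 := by
      filter_upwards [eventually_gt_atTop (0:ℝ)] with y hy using hconst y hy
    have h3 : Tendsto (fun _ : ℝ => J 1) atTop (𝓝 0) := h1.congr' h2
    exact tendsto_nhds_unique tendsto_const_nhds h3
  have h4 : Tendsto J (𝓝[>] (0:ℝ)) (𝓝 (∫ x : ℝ, phih a s x)) := phih_J_zeroLim a s ha hs
  have h5 : J =ᶠ[𝓝[>] (0:ℝ)] fun _ => (0 : ℂ) := by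
    filter_upwards [self_mem_nhdsWithin] with y hy
    rw [hconst y hy, hJ1]
  have h6 : Tendsto (fun _ : ℝ => (0:ℂ)) (𝓝[>] (0:ℝ)) (𝓝 (∫ x : ℝ, phih a s x)) := h4.congr' h5
  exact (tendsto_nhds_unique h6 tendsto_const_nhds)

/-- The closed space-like quarter-plane `cl(ℝ₊ × ℝ₊)` is not a Fourier uniqueness
set for the Hardy-type measures `ACH(Γ_m)` on the hyperbola: there is a nonzero
integrable density `f` (in `H¹₊(ℝ)`) whose hyperbola Fourier transform
`F_f(ξ₁,ξ₂) = ∫ f(t) exp(iπ(ξ₁t − m²ξ₂/(4π²t))) dt` vanishes for all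
`ξ₁ ≥ 0`, `ξ₂ ≥ 0`. -/
theorem stmt3 (m : ℝ) (hm : 0 < m) :
    ∃ f : ℝ → ℂ, Integrable f ∧ ¬ (f =ᵐ[volume] 0) ∧
      (∀ τ : ℝ, 0 ≤ τ →
        ∫ t : ℝ, f t * Complex.exp (Complex.I * ((π * τ * t : ℝ) : ℂ)) = 0) ∧
      (∀ ξ₁ ξ₂ : ℝ, 0 ≤ ξ₁ → 0 ≤ ξ₂ →
        ∫ t : ℝ, f t * Complex.exp
          (Complex.I * ((π * (ξ₁ * t - m ^ 2 * ξ₂ / (4 * π ^ 2 * t)) : ℝ) : ℂ)) = 0) := by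
  set f : ℝ → ℂ := fun t => (((t : ℂ) + Complex.I) ^ 2)⁻¹ with hf
  have hfnorm : ∀ t : ℝ, ‖f t‖ = (t ^ 2 + 1)⁻¹ := by
    intro t
    rw [hf]
    rw [norm_inv, norm_pow]
    rw [Complex.sq_norm]
    congr 1
    simp [Complex.normSq_apply]; ring
  have hfc : Continuous f := by
    rw [hf]
    apply Continuous.inv₀
    · fun_prop
    · intro t
      apply pow_ne_zero
      intro h
      have : ((t : ℂ) + Complex.I).im = 0 := by rw [h]; simp
      simp at this
  have hint : Integrable f := by
    have hbd : Integrable (fun x : ℝ => (x ^ 2 + 1)⁻¹) volume := by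
      simpa [add_comm] using integrable_inv_one_add_sq
    refine hbd.mono' hfc.aestronglyMeasurable ?_
    filter_upwards with t using le_of_eq (hfnorm t)
  have hne : ¬ (f =ᵐ[volume] 0) := by
    intro h
    have h2 : f = 0 := (hfc.ae_eq_iff_eq volume continuous_const).mp h
    have h3 : f 0 = 0 := by rw [h2]; rfl
    rw [hf] at h3
    simp [Complex.I_sq] at h3
  -- the key vanishing result, phrased for a general phase
  have key : ∀ (a s : ℝ), 0 ≤ a → 0 ≤ s → ∀ c : ℝ → ℝ, (∀ t, c t = a * t - s * t⁻¹) →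
      ∫ t : ℝ, f t * Complex.exp (Complex.I * ((c t : ℝ) : ℂ)) = 0 := by
    intro a s ha hs c hc
    have hfun : ∀ t : ℝ, f t * Complex.exp (Complex.I * ((c t : ℝ) : ℂ)) = phih a s t := by
      intro t
      rw [phih, mul_comm]
      congr 2
      rw [hc t]
      push_cast
      ring
    calc ∫ t : ℝ, f t * Complex.exp (Complex.I * ((c t : ℝ) : ℂ))
        = ∫ t : ℝ, phih a s t := by simp only [hfun]
      _ = 0 := phih_integral_zero a s ha hs
  refine ⟨f, hint, hne, ?_, ?_⟩
  · intro τ hτ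
    apply key (π * τ) 0 (by positivity) le_rfl
    intro t
    ring
  · intro ξ₁ ξ₂ h1 h2
    apply key (π * ξ₁) (m ^ 2 * ξ₂ / (4 * π)) (by positivity) (by positivity)
    intro t
    rcases eq_or_ne t 0 with h | h
    · simp [h]
    · field_simp
end

section
/- Let β > 0 and let z₀ ∈ ℂ with Im z₀ > 0. Define f : ℝ → ℂ by f(t) = 1/(t − z₀) − 1/(t − 2 − z₀). Then: (i) f is integrable on ℝ and not zero almost everywhere; (ii) ∫_ℝ f(t)·exp(iπτt) dt = 0 for all τ < 0; (iii) ∫_ℝ f(t)·exp(iπjt) dt = 2πi(e^{iπjz₀} − e^{iπj(z₀+2)}) = 0 for every integer j ≥ 0; (iv) ∫_ℝ f(t)·exp(iπβk/t) dt = 0 for every integer k ≥ 0. -/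
open MeasureTheory Real
open Complex Set FourierTransform
open MeasureTheory Real Complex Set FourierTransform

lemma aux_ne (t : ℝ) (w : ℂ) (hw : w.im ≠ 0) : (t : ℂ) - w ≠ 0 := by
  intro h
  have := congrArg Complex.im h
  simp at this
  exact hw this

lemma aux_intOn (c : ℂ) (hc : c.re < 0) :
    IntegrableOn (fun s : ℝ => Complex.exp (c * s)) (Ioi 0) := by
  apply Integrable.mono' (g := fun s : ℝ => rexp (-(-c.re) * s))
    (exp_neg_integrableOn_Ioi 0 (by linarith))
  · exact (Complex.continuous_exp.comp (continuous_const.mul Complex.continuous_ofReal)).aestronglyMeasurable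
  · filter_upwards with s
    simp [Complex.norm_exp, Complex.mul_re]

lemma aux_deriv (c : ℂ) (s : ℝ) :
    HasDerivAt (fun s : ℝ => Complex.exp (c * s)) (Complex.exp (c * s) * c) s := by
  have h : HasDerivAt (fun s : ℝ => c * (s:ℂ)) c s := by
    simpa using (Complex.ofRealCLM.hasDerivAt (x := s)).const_mul c
  exact h.cexp

lemma aux_int (c : ℂ) (hc : c.re < 0) :
    ∫ s in Ioi (0:ℝ), Complex.exp (c * s) = -c⁻¹ := by
  have hcne : c ≠ 0 := fun h => by simp [h] at hc
  have hD : ∀ s : ℝ, HasDerivAt (fun s : ℝ => c⁻¹ * Complex.exp (c * s))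
      (Complex.exp (c * s)) s := by
    intro s
    have := (aux_deriv c s).const_mul c⁻¹
    refine this.congr_deriv ?_
    rw [mul_comm (Complex.exp (c * s)) c, ← mul_assoc, inv_mul_cancel₀ hcne, one_mul]

  have hT : Filter.Tendsto (fun s : ℝ => c⁻¹ * Complex.exp (c * s)) Filter.atTop (nhds 0) := by
    rw [tendsto_zero_iff_norm_tendsto_zero]
    have he : (fun s : ℝ => ‖c⁻¹ * Complex.exp (c * s)‖) = fun s => ‖c⁻¹‖ * rexp (c.re * s) := by
      funext s
      simp [Complex.norm_exp, Complex.mul_re]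
    rw [he, show (0:ℝ) = ‖c⁻¹‖ * 0 by ring]
    apply Filter.Tendsto.const_mul
    exact Real.tendsto_exp_atBot.comp (Filter.Tendsto.const_mul_atTop_of_neg hc Filter.tendsto_id)
  have := integral_Ioi_of_hasDerivAt_of_tendsto' (fun x _ => hD x) (aux_intOn c hc) hT
  rw [this]
  simp

lemma aux_normge_im (t : ℝ) (w : ℂ) : |w.im| ≤ ‖(t:ℂ) - w‖ := by
  have := Complex.abs_im_le_norm ((t:ℂ) - w)
  simpa using this

lemma aux_normge_re (t : ℝ) (w : ℂ) : |t - w.re| ≤ ‖(t:ℂ) - w‖ := by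
  have := Complex.abs_re_le_norm ((t:ℂ) - w)
  simpa using this

lemma aux_cont (w₁ w₂ : ℂ) (h₁ : 0 < w₁.im) (h₂ : 0 < w₂.im) :
    Continuous (fun t : ℝ => 1/((t:ℂ) - w₁) - 1/((t:ℂ) - w₂)) := by
  apply Continuous.sub <;>
  · apply Continuous.div continuous_const
      (Complex.continuous_ofReal.sub continuous_const)
    intro t
    exact aux_ne t _ (by first | exact ne_of_gt h₁ | exact ne_of_gt h₂)

lemma aux_integrable (w₁ w₂ : ℂ) (h₁ : 0 < w₁.im) (h₂ : 0 < w₂.im) :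
    Integrable (fun t : ℝ => 1/((t:ℂ) - w₁) - 1/((t:ℂ) - w₂)) := by
  set x₁ := w₁.re
  set d := |w₁.re - w₂.re| with hd
  set c : ℝ := min (1/4) (w₁.im * w₂.im / (1 + 4*(d+1)^2)) with hc
  have hdnn : 0 ≤ d := abs_nonneg _
  have hcpos : 0 < c := by
    apply lt_min (by norm_num)
    apply div_pos (mul_pos h₁ h₂)
    positivity
  set D : ℝ := ‖w₁ - w₂‖ with hD
  have key : ∀ t : ℝ, ‖1/((t:ℂ) - w₁) - 1/((t:ℂ) - w₂)‖ ≤ (D/c) * (1 + (t - x₁)^2)⁻¹ := by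
    intro t
    have hne1 : (t:ℂ) - w₁ ≠ 0 := aux_ne t _ (ne_of_gt h₁)
    have hne2 : (t:ℂ) - w₂ ≠ 0 := aux_ne t _ (ne_of_gt h₂)
    have heq : 1/((t:ℂ) - w₁) - 1/((t:ℂ) - w₂)
        = (w₁ - w₂) * (((t:ℂ) - w₁)⁻¹ * ((t:ℂ) - w₂)⁻¹) := by
      field_simp
      ring
    rw [heq]
    rw [norm_mul, norm_mul, norm_inv, norm_inv]
    set a := ‖(t:ℂ) - w₁‖ with ha
    set b := ‖(t:ℂ) - w₂‖ with hb
    have hapos : 0 < a := norm_pos_iff.mpr hne1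
    have hbpos : 0 < b := norm_pos_iff.mpr hne2
    have hay : w₁.im ≤ a := le_trans (le_abs_self _) (aux_normge_im t w₁)
    have hby : w₂.im ≤ b := le_trans (le_abs_self _) (aux_normge_im t w₂)
    have has : |t - x₁| ≤ a := aux_normge_re t w₁
    have hbs : |t - x₁| - d ≤ b := by
      have h1 : |t - w₂.re| ≤ b := aux_normge_re t w₂
      have h2 : |t - x₁| ≤ |t - w₂.re| + d := by
        have h4 : |t - x₁| ≤ |t - w₂.re| + |w₂.re - x₁| := by
          calc |t - x₁| = |(t - w₂.re) + (w₂.re - x₁)| := by ring_nf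
            _ ≤ |t - w₂.re| + |w₂.re - x₁| := abs_add_le _ _
        have h5 : |w₂.re - x₁| = d := by rw [hd, abs_sub_comm]
        linarith
      linarith
    -- main: c * (1 + (t-x₁)^2) ≤ a * b
    have main : c * (1 + (t - x₁)^2) ≤ a * b := by
      set s := |t - x₁| with hs
      have hs0 : 0 ≤ s := abs_nonneg _
      have hs2 : (t - x₁)^2 = s^2 := (_root_.sq_abs _).symm
      rw [hs2]
      rcases le_or_gt s (2*(d+1)) with hcase | hcase
      · -- small s : a*b ≥ y₁ y₂ ≥ c (1+s²)
        have h1 : c * (1 + s^2) ≤ c * (1 + 4*(d+1)^2) := by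
          apply mul_le_mul_of_nonneg_left _ hcpos.le
          nlinarith
        have h2 : c * (1 + 4*(d+1)^2) ≤ w₁.im * w₂.im := by
          rw [hc]
          have : min (1/4) (w₁.im * w₂.im / (1 + 4*(d+1)^2)) ≤ w₁.im * w₂.im / (1 + 4*(d+1)^2) :=
            min_le_right _ _
          have hpos : (0:ℝ) < 1 + 4*(d+1)^2 := by positivity
          calc min (1/4) (w₁.im * w₂.im / (1 + 4*(d+1)^2)) * (1 + 4*(d+1)^2)
              ≤ (w₁.im * w₂.im / (1 + 4*(d+1)^2)) * (1 + 4*(d+1)^2) := by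
                apply mul_le_mul_of_nonneg_right this hpos.le
            _ = w₁.im * w₂.im := by field_simp
        have h3 : w₁.im * w₂.im ≤ a * b := by
          apply mul_le_mul hay hby h₂.le (by linarith)
        linarith
      · -- large s: a ≥ s, b ≥ s - d ≥ s/2+1 ≥ ...
        have hs1 : 2*(d+1) < s := hcase
        have hbge : s/2 + 1 ≤ b := by linarith
        have hage : s ≤ a := by rw [hs] at *; linarith [has]
        have hc4 : c ≤ 1/4 := min_le_left _ _
        nlinarith [mul_le_mul hage hbge (by linarith) (by linarith : (0:ℝ) ≤ a)]
    calc D * (a⁻¹ * b⁻¹) = D * (a*b)⁻¹ := by rw [mul_inv]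
      _ ≤ D * (c*(1 + (t - x₁)^2))⁻¹ := by
          apply mul_le_mul_of_nonneg_left _ (norm_nonneg _)
          exact inv_anti₀ (by positivity) main
      _ = (D/c) * (1 + (t - x₁)^2)⁻¹ := by
          rw [mul_inv]
          ring
  apply Integrable.mono' (((integrable_inv_one_add_sq).comp_sub_right x₁).const_mul (D/c))
    (aux_cont w₁ w₂ h₁ h₂).aestronglyMeasurable
  filter_upwards with t
  simpa using key t

noncomputable def auxh (w₁ w₂ : ℂ) : ℝ → ℂ := fun s =>
  if 0 ≤ s then (2*π*Complex.I) * (Complex.exp (2*π*Complex.I*s*w₁)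
    - Complex.exp (2*π*Complex.I*s*w₂)) else 0

lemma auxh_cont (w₁ w₂ : ℂ) : Continuous (auxh w₁ w₂) := by
  unfold auxh
  apply Continuous.if_le _ continuous_const continuous_const continuous_id
  · intro s hs
    have : s = 0 := hs.symm
    simp [this]
  · apply Continuous.mul continuous_const
    apply Continuous.sub <;>
    · apply Continuous.cexp
      apply Continuous.mul _ continuous_const
      exact continuous_const.mul Complex.continuous_ofReal

lemma auxh_indicator (w₁ w₂ : ℂ) : auxh w₁ w₂ = Set.indicator (Ici (0:ℝ))
    (fun s => (2*π*Complex.I) * (Complex.exp (2*π*Complex.I*s*w₁)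
      - Complex.exp (2*π*Complex.I*s*w₂))) := by
  funext s
  rw [Set.indicator_apply, auxh]
  simp [mem_Ici]

lemma aux_re0 (w : ℂ) (hw : 0 < w.im) : (2*π*Complex.I*w).re < 0 := by
  have h : (2*π*Complex.I*w).re = -(2*π*w.im) := by
    simp [Complex.mul_re, Complex.mul_im]
  rw [h]
  have := Real.pi_pos
  nlinarith

lemma aux_re (w : ℂ) (ξ : ℝ) (hw : 0 < w.im) : (2*π*Complex.I*(w - ξ)).re < 0 := by
  have h : (w - (ξ:ℂ)).im = w.im := by simp
  have := aux_re0 (w - ξ) (by rw [h]; exact hw)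
  exact this

lemma aux_exp_integrableOn (w : ℂ) (hw : 0 < w.im) :
    IntegrableOn (fun s : ℝ => Complex.exp (2*π*Complex.I*s*w)) (Ici (0:ℝ)) := by
  rw [integrableOn_Ici_iff_integrableOn_Ioi]
  have he : (fun s : ℝ => Complex.exp (2*π*Complex.I*s*w))
      = fun s : ℝ => Complex.exp ((2*π*Complex.I*w) * s) := by
    funext s; ring_nf
  rw [he]
  exact aux_intOn _ (aux_re0 w hw)

lemma auxh_integrable (w₁ w₂ : ℂ) (h₁ : 0 < w₁.im) (h₂ : 0 < w₂.im) :
    Integrable (auxh w₁ w₂) := by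
  rw [auxh_indicator, integrable_indicator_iff measurableSet_Ici]
  exact ((aux_exp_integrableOn w₁ h₁).sub (aux_exp_integrableOn w₂ h₂)).const_mul _

lemma aux_fourier (w₁ w₂ : ℂ) (h₁ : 0 < w₁.im) (h₂ : 0 < w₂.im) :
    𝓕 (auxh w₁ w₂) = fun ξ : ℝ => 1/((ξ:ℂ)-w₁) - 1/((ξ:ℂ)-w₂) := by
  funext ξ
  rw [Real.fourier_real_eq_integral_exp_smul]
  have hrw : (fun v : ℝ => Complex.exp (↑(-2*π*v*ξ)*Complex.I) • auxh w₁ w₂ v)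
      = Set.indicator (Ici (0:ℝ)) (fun v => (2*π*Complex.I) *
        (Complex.exp ((2*π*Complex.I*(w₁-ξ))*v) - Complex.exp ((2*π*Complex.I*(w₂-ξ))*v))) := by
    funext v
    rw [Set.indicator_apply, auxh]
    by_cases hv : (0:ℝ) ≤ v
    · simp only [if_pos hv, mem_Ici, hv, smul_eq_mul]
      have key : ∀ w : ℂ, Complex.exp (↑(-2*π*v*ξ)*Complex.I) * Complex.exp (2*π*Complex.I*v*w)
          = Complex.exp ((2*π*Complex.I*(w-ξ))*v) := by
        intro w
        rw [← Complex.exp_add]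
        congr 1
        push_cast
        ring
      calc Complex.exp (↑(-2*π*v*ξ)*Complex.I) * ((2*π*Complex.I) *
            (Complex.exp (2*π*Complex.I*v*w₁) - Complex.exp (2*π*Complex.I*v*w₂)))
          = (2*π*Complex.I) * (Complex.exp (↑(-2*π*v*ξ)*Complex.I) * Complex.exp (2*π*Complex.I*v*w₁)
            - Complex.exp (↑(-2*π*v*ξ)*Complex.I) * Complex.exp (2*π*Complex.I*v*w₂)) := by ring
        _ = (2*π*Complex.I) * (Complex.exp ((2*π*Complex.I*(w₁-ξ))*v)
            - Complex.exp ((2*π*Complex.I*(w₂-ξ))*v)) := by rw [key w₁, key w₂]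
    · simp [if_neg hv, mem_Ici, hv]
  rw [hrw, integral_indicator measurableSet_Ici, MeasureTheory.integral_Ici_eq_integral_Ioi]
  rw [MeasureTheory.integral_const_mul]
  rw [integral_sub (aux_intOn _ (aux_re w₁ ξ h₁)) (aux_intOn _ (aux_re w₂ ξ h₂))]
  rw [aux_int _ (aux_re w₁ ξ h₁), aux_int _ (aux_re w₂ ξ h₂)]
  have hne1 : (ξ:ℂ) - w₁ ≠ 0 := aux_ne ξ w₁ (ne_of_gt h₁)
  have hne2 : (ξ:ℂ) - w₂ ≠ 0 := aux_ne ξ w₂ (ne_of_gt h₂)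
  have hne1' : w₁ - (ξ:ℂ) ≠ 0 := fun h => hne1 (by rw [← neg_sub]; simp [h])
  have hne2' : w₂ - (ξ:ℂ) ≠ 0 := fun h => hne2 (by rw [← neg_sub]; simp [h])
  have hπ : (π:ℂ) ≠ 0 := Complex.ofReal_ne_zero.mpr Real.pi_ne_zero
  have h2πI : (2*(π:ℂ)*Complex.I) ≠ 0 := by
    simp [hπ, Complex.I_ne_zero]
  have e1 : -(2*(π:ℂ)*Complex.I*(w₁-ξ))⁻¹ = (2*(π:ℂ)*Complex.I)⁻¹ * ((ξ:ℂ)-w₁)⁻¹ := by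
    rw [show (2*(π:ℂ)*Complex.I*(w₁-ξ)) = -(2*(π:ℂ)*Complex.I*((ξ:ℂ)-w₁)) by ring, inv_neg,
      neg_neg, mul_inv]
  have e2 : -(2*(π:ℂ)*Complex.I*(w₂-ξ))⁻¹ = (2*(π:ℂ)*Complex.I)⁻¹ * ((ξ:ℂ)-w₂)⁻¹ := by
    rw [show (2*(π:ℂ)*Complex.I*(w₂-ξ)) = -(2*(π:ℂ)*Complex.I*((ξ:ℂ)-w₂)) by ring, inv_neg,
      neg_neg, mul_inv]
  rw [e1, e2, one_div, one_div, ← mul_sub, ← mul_assoc, mul_inv_cancel₀ h2πI, one_mul]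


lemma aux_invF (w₁ w₂ : ℂ) (h₁ : 0 < w₁.im) (h₂ : 0 < w₂.im) (σ : ℝ) :
    𝓕⁻ (fun ξ : ℝ => 1/((ξ:ℂ)-w₁) - 1/((ξ:ℂ)-w₂)) σ = auxh w₁ w₂ σ := by
  rw [← aux_fourier w₁ w₂ h₁ h₂]
  exact (auxh_integrable w₁ w₂ h₁ h₂).fourierInv_fourier_eq
    (by rw [aux_fourier w₁ w₂ h₁ h₂]; exact aux_integrable w₁ w₂ h₁ h₂)
    (auxh_cont w₁ w₂).continuousAt

lemma auxB (w₁ w₂ : ℂ) (h₁ : 0 < w₁.im) (h₂ : 0 < w₂.im) (a : ℝ) :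
    ∫ t : ℝ, (1/((t:ℂ)-w₁) - 1/((t:ℂ)-w₂)) * Complex.exp (Complex.I * ((a*t : ℝ):ℂ))
      = if 0 ≤ a then (2*(π:ℂ)*Complex.I) * (Complex.exp (Complex.I*a*w₁)
        - Complex.exp (Complex.I*a*w₂)) else 0 := by
  have hπ : (0:ℝ) < 2*π := by positivity
  have hπ' : (π:ℂ) ≠ 0 := Complex.ofReal_ne_zero.mpr Real.pi_ne_zero
  have hinv := aux_invF w₁ w₂ h₁ h₂ (a/(2*π))
  rw [Real.fourierInv_eq'] at hinv
  simp only [RCLike.inner_apply, conj_trivial] at hinv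
  have hrw : (fun v : ℝ => Complex.exp (↑(2 * π * (a/(2*π) * v)) * Complex.I) •
      ((1:ℂ)/((v:ℂ)-w₁) - 1/((v:ℂ)-w₂)))
      = fun t : ℝ => (1/((t:ℂ)-w₁) - 1/((t:ℂ)-w₂)) * Complex.exp (Complex.I * ((a*t : ℝ):ℂ)) := by
    funext v
    rw [smul_eq_mul, mul_comm]
    congr 2
    rw [show 2 * π * (a/(2*π) * v) = a * v by field_simp]
    ring
  rw [hrw] at hinv
  rw [hinv]
  unfold auxh
  have hiff : (0 ≤ a/(2*π)) ↔ (0 ≤ a) := by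
    rw [le_div_iff₀ hπ, zero_mul]
  by_cases ha : 0 ≤ a
  · rw [if_pos (hiff.mpr ha), if_pos ha]
    congr 2 <;>
    · congr 1
      push_cast
      field_simp
  · rw [if_neg (fun h => ha (hiff.mp h)), if_neg ha]

lemma aux_phase_integrable (F : ℝ → ℂ) (hF : Integrable F) (φ : ℝ → ℝ) (hφ : Measurable φ) :
    Integrable (fun t => F t * Complex.exp (Complex.I * ((φ t : ℝ) : ℂ))) := by
  apply Integrable.mono' hF.norm
  · apply AEStronglyMeasurable.mul hF.aestronglyMeasurable
    exact (Complex.measurable_exp.comp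
      (measurable_const.mul (Complex.measurable_ofReal.comp hφ))).aestronglyMeasurable
  · filter_upwards with t
    rw [norm_mul, mul_comm Complex.I, Complex.norm_exp_ofReal_mul_I, mul_one]

lemma aux_img1 : (fun u : ℝ => -u⁻¹) '' (Iio 0) = Ioi 0 := by
  ext y
  constructor
  · rintro ⟨u, hu, rfl⟩
    simp only [mem_Iio] at hu
    simp only [mem_Ioi]
    have : u⁻¹ < 0 := inv_neg''.mpr hu
    linarith
  · intro hy
    simp only [mem_Ioi] at hy
    refine ⟨-y⁻¹, ?_, ?_⟩
    · simp only [mem_Iio]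
      have : 0 < y⁻¹ := by positivity
      linarith
    · show -(-y⁻¹)⁻¹ = y
      rw [inv_neg, inv_inv, neg_neg]

lemma aux_img2 : (fun u : ℝ => -u⁻¹) '' (Ioi 0) = Iio 0 := by
  ext y
  constructor
  · rintro ⟨u, hu, rfl⟩
    simp only [mem_Ioi] at hu
    simp only [mem_Iio]
    have : 0 < u⁻¹ := by positivity
    linarith
  · intro hy
    simp only [mem_Iio] at hy
    refine ⟨-y⁻¹, ?_, ?_⟩
    · simp only [mem_Ioi]
      have : y⁻¹ < 0 := inv_neg''.mpr hy
      linarith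
    · show -(-y⁻¹)⁻¹ = y
      rw [inv_neg, inv_inv, neg_neg]

lemma aux_derivWithin (s : Set ℝ) (u : ℝ) (hu : u ≠ 0) :
    HasDerivWithinAt (fun u : ℝ => -u⁻¹) ((u^2)⁻¹) s u := by
  have := (hasDerivAt_inv hu).neg
  simp only [neg_neg] at this
  exact this.hasDerivWithinAt

lemma aux_injOn (s : Set ℝ) : InjOn (fun u : ℝ => -u⁻¹) s := by
  intro u _ v _ h
  simp only at h
  exact inv_injective (neg_injective h)

lemma aux_subst (G : ℝ → ℂ) (hG : Integrable G)
    (hH : Integrable (fun u : ℝ => ((u^2)⁻¹ : ℝ) • G (-u⁻¹))) :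
    ∫ t : ℝ, G t = ∫ u : ℝ, ((u^2)⁻¹ : ℝ) • G (-u⁻¹) := by
  set H : ℝ → ℂ := fun u => ((u^2)⁻¹ : ℝ) • G (-u⁻¹) with hHdef
  have habs : ∀ (s : Set ℝ), ∫ u in s, |(u^2)⁻¹| • G (-u⁻¹) = ∫ u in s, H u := by
    intro s
    apply integral_congr_ae
    filter_upwards with u
    rw [hHdef]
    simp only
    rw [_root_.abs_of_nonneg (by positivity : (0:ℝ) ≤ (u^2)⁻¹)]
  have sub1 : ∫ x in Ioi (0:ℝ), G x = ∫ u in Iio (0:ℝ), H u := by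
    rw [← aux_img1,
      integral_image_eq_integral_abs_deriv_smul measurableSet_Iio
        (fun u hu => aux_derivWithin _ u (ne_of_lt hu)) (aux_injOn _) G,
      habs]
  have sub2 : ∫ x in Iio (0:ℝ), G x = ∫ u in Ioi (0:ℝ), H u := by
    rw [← aux_img2,
      integral_image_eq_integral_abs_deriv_smul measurableSet_Ioi
        (fun u hu => aux_derivWithin _ u (ne_of_gt hu)) (aux_injOn _) G,
      habs]
  have splitG := integral_add_compl (measurableSet_Ioi (a := (0:ℝ))) hG (f := G)
  have splitH := integral_add_compl (measurableSet_Ioi (a := (0:ℝ))) hH (f := H)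
  rw [compl_Ioi, MeasureTheory.integral_Iic_eq_integral_Iio] at splitG splitH
  calc ∫ t : ℝ, G t = (∫ x in Ioi (0:ℝ), G x) + ∫ x in Iio (0:ℝ), G x := splitG.symm
    _ = (∫ u in Iio (0:ℝ), H u) + ∫ u in Ioi (0:ℝ), H u := by rw [sub1, sub2]
    _ = (∫ u in Ioi (0:ℝ), H u) + ∫ u in Iio (0:ℝ), H u := by ring
    _ = ∫ u : ℝ, H u := splitH


/-- For `z₀` in the upper half-plane, the function
`f(t) = 1/(t − z₀) − 1/(t − 2 − z₀)` is a nonzero integrable function lying in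
`H¹₋(ℝ)` which annihilates the exponentials `e^{iπjt}` (by residue calculus the
integral equals `2πi(e^{iπjz₀} − e^{iπj(z₀+2)}) = 0`) and the exponentials
`e^{iπβk/t}` for all integers `j, k ≥ 0`. -/
theorem stmt5 (β : ℝ) (hβ : 0 < β) (z₀ : ℂ) (hz₀ : 0 < z₀.im)
    (f : ℝ → ℂ) (hf : ∀ t : ℝ, f t = 1 / ((t : ℂ) - z₀) - 1 / ((t : ℂ) - 2 - z₀)) :
    Integrable f ∧ ¬ (f =ᵐ[volume] 0) ∧
    (∀ τ : ℝ, τ < 0 →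
      ∫ t : ℝ, f t * Complex.exp (Complex.I * ((π * τ * t : ℝ) : ℂ)) = 0) ∧
    (∀ j : ℤ, 0 ≤ j →
      (∫ t : ℝ, f t * Complex.exp (Complex.I * ((π * j * t : ℝ) : ℂ))) =
        2 * (π : ℂ) * Complex.I *
          (Complex.exp (Complex.I * (π : ℂ) * (j : ℂ) * z₀) -
           Complex.exp (Complex.I * (π : ℂ) * (j : ℂ) * (z₀ + 2))) ∧
      (∫ t : ℝ, f t * Complex.exp (Complex.I * ((π * j * t : ℝ) : ℂ))) = 0) ∧
    (∀ k : ℤ, 0 ≤ k →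
      ∫ t : ℝ, f t * Complex.exp (Complex.I * ((π * β * k / t : ℝ) : ℂ)) = 0) := by
  have h₂im : (0:ℝ) < (2 + z₀).im := by simp [hz₀]
  have hfF : f = fun t : ℝ => 1/((t:ℂ) - z₀) - 1/((t:ℂ) - (2 + z₀)) := by
    funext t
    rw [hf t, sub_add_eq_sub_sub]
  have hfint : Integrable f := by
    rw [hfF]; exact aux_integrable z₀ (2+z₀) hz₀ h₂im
  refine ⟨hfint, ?_, ?_, ?_, ?_⟩
  · -- not a.e. zero
    intro h
    rw [hfF] at h
    have hcont := aux_cont z₀ (2+z₀) hz₀ h₂im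
    have heq := (hcont.ae_eq_iff_eq volume continuous_zero).mp h
    have h0 := congrFun heq 0
    rw [Pi.zero_apply, Complex.ofReal_zero, zero_sub, zero_sub, sub_eq_zero,
      one_div, one_div] at h0
    have h2 := inv_injective h0
    have h3 : (2:ℂ) = 0 := by linear_combination h2
    norm_num at h3
  · -- τ < 0
    intro τ hτ
    rw [hfF]
    have := auxB z₀ (2+z₀) hz₀ h₂im (π * τ)
    rw [if_neg (by push_neg; exact mul_neg_of_pos_of_neg Real.pi_pos hτ)] at this
    simpa using this
  · -- j ≥ 0
    intro j hj
    rw [hfF]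
    have ha : (0:ℝ) ≤ π * (j:ℝ) := by
      apply mul_nonneg Real.pi_pos.le
      exact_mod_cast hj
    have := auxB z₀ (2+z₀) hz₀ h₂im (π * (j:ℝ))
    rw [if_pos ha] at this
    have hval : (∫ t : ℝ, (1/((t:ℂ) - z₀) - 1/((t:ℂ) - (2 + z₀)))
        * Complex.exp (Complex.I * ((π * (j:ℝ) * t : ℝ) : ℂ)))
        = 2 * (π:ℂ) * Complex.I * (Complex.exp (Complex.I * (π:ℂ) * (j:ℂ) * z₀)
          - Complex.exp (Complex.I * (π:ℂ) * (j:ℂ) * (z₀ + 2))) := by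
      rw [this]
      congr 2 <;> · congr 1; push_cast; ring
    constructor
    · exact hval
    · rw [hval]
      have hY : Complex.exp (Complex.I * (π:ℂ) * (j:ℂ) * (z₀ + 2))
          = Complex.exp (Complex.I * (π:ℂ) * (j:ℂ) * z₀) := by
        rw [show Complex.I * (π:ℂ) * (j:ℂ) * (z₀ + 2)
            = Complex.I * (π:ℂ) * (j:ℂ) * z₀ + (j:ℂ) * (2 * (π:ℂ) * Complex.I) by ring,
          Complex.exp_add, Complex.exp_int_mul_two_pi_mul_I, mul_one]
      rw [hY, sub_self, mul_zero]
  · -- k ≥ 0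
    intro k hk
    set c : ℝ := π * β * (k:ℝ) with hcdef
    have hc0 : 0 ≤ c := by
      apply mul_nonneg (mul_nonneg Real.pi_pos.le hβ.le)
      exact_mod_cast hk
    have hz₀ne : z₀ ≠ 0 := fun h => by simp [h] at hz₀
    have hz₂ne : (2+z₀) ≠ 0 := fun h => by rw [h] at h₂im; simp at h₂im
    set v₁ : ℂ := -z₀⁻¹ with hv₁def
    set v₂ : ℂ := -(2+z₀)⁻¹ with hv₂def
    have hv₁ : 0 < v₁.im := by
      rw [hv₁def]
      simp only [Complex.neg_im, Complex.inv_im, neg_div, neg_neg]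
      exact div_pos hz₀ (Complex.normSq_pos.mpr hz₀ne)
    have hv₂ : 0 < v₂.im := by
      rw [hv₂def]
      simp only [Complex.neg_im, Complex.inv_im, neg_div, neg_neg]
      exact div_pos h₂im (Complex.normSq_pos.mpr hz₂ne)
    set G : ℝ → ℂ := fun t => f t * Complex.exp (Complex.I * ((c/t : ℝ):ℂ)) with hGdef
    set K : ℝ → ℂ := fun u => (1/((u:ℂ)-v₁) - 1/((u:ℂ)-v₂))
      * Complex.exp (Complex.I * (((-c)*u : ℝ):ℂ)) with hKdef
    have hGint : Integrable G :=
      aux_phase_integrable f hfint (fun t => c/t) (measurable_const.div measurable_id)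
    have hKint : Integrable K :=
      aux_phase_integrable _ (aux_integrable v₁ v₂ hv₁ hv₂) (fun u => (-c)*u)
        (measurable_id.const_mul _)
    have h0ae : ∀ᵐ (u : ℝ) ∂volume, u ≠ 0 := by
      simpa using measure_eq_zero_iff_ae_notMem.mp (measure_singleton (0:ℝ))
    have haeHK : (fun u : ℝ => ((u^2)⁻¹ : ℝ) • G (-u⁻¹)) =ᵐ[volume] K := by
      filter_upwards [h0ae] with u hu
      simp only [hGdef, hKdef]
      have hexp : c / (-u⁻¹) = (-c) * u := by
        rw [div_eq_mul_inv, inv_neg, inv_inv]; ring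
      rw [hexp, hf (-u⁻¹)]
      have halg : ((u^2)⁻¹ : ℝ) • (1/((((-u⁻¹ : ℝ)):ℂ) - z₀) - 1/((((-u⁻¹ : ℝ)):ℂ) - 2 - z₀))
          = 1/((u:ℂ)-v₁) - 1/((u:ℂ)-v₂) := by
        have hu' : (u:ℂ) ≠ 0 := Complex.ofReal_ne_zero.mpr hu
        have hd₁ : (((-u⁻¹ : ℝ)):ℂ) - z₀ ≠ 0 := aux_ne _ _ (ne_of_gt hz₀)
        have hd₂ : (((-u⁻¹ : ℝ)):ℂ) - (2+z₀) ≠ 0 := aux_ne _ _ (ne_of_gt h₂im)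
        have hd₂' : (((-u⁻¹ : ℝ)):ℂ) - 2 - z₀ ≠ 0 := by
          rw [sub_sub]; exact hd₂
        have he₁ : (u:ℂ) - v₁ ≠ 0 := aux_ne u v₁ (ne_of_gt hv₁)
        have he₂ : (u:ℂ) - v₂ ≠ 0 := aux_ne u v₂ (ne_of_gt hv₂)
        have k₁ : (1:ℂ) + (u:ℂ)*z₀ ≠ 0 := by
          intro hcontra
          have := congrArg Complex.im hcontra
          simp [Complex.add_im, Complex.mul_im] at this
          rcases this with h' | h'
          · exact hu h'
          · exact (ne_of_gt hz₀) h'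
        have k₂ : (1:ℂ) + (u:ℂ)*2 + (u:ℂ)*z₀ ≠ 0 := by
          intro hcontra
          have := congrArg Complex.im hcontra
          simp [Complex.add_im, Complex.mul_im] at this
          rcases this with h' | h'
          · exact hu h'
          · exact (ne_of_gt hz₀) h'
        have m₁ : ((u:ℂ)*z₀ + 1 : ℂ) ≠ 0 := fun h => k₁ (by linear_combination h)
        have m₂ : ((u:ℂ)*(2+z₀) + 1 : ℂ) ≠ 0 := fun h => k₂ (by linear_combination h)
        have m₃ : ((-1:ℂ) - (u:ℂ)*z₀ : ℂ) ≠ 0 := fun h => k₁ (by linear_combination -h)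
        have m₄ : ((-1:ℂ) - (u:ℂ)*2 - (u:ℂ)*z₀ : ℂ) ≠ 0 := fun h => k₂ (by linear_combination -h)
        have m₅ : ((-1:ℂ) + (-((u:ℂ)*2) - (u:ℂ)*z₀) : ℂ) ≠ 0 := fun h => k₂ (by linear_combination -h)
        have k₂' : (1:ℂ) + (u:ℂ)*(2+z₀) ≠ 0 := by rw [mul_add, ← add_assoc]; exact k₂
        have e1 : (((-u⁻¹ : ℝ)):ℂ) - z₀ = -(1 + (u:ℂ)*z₀) / u := by push_cast; field_simp; ring
        have e2 : (((-u⁻¹ : ℝ)):ℂ) - 2 - z₀ = -(1 + (u:ℂ)*(2+z₀)) / u := by push_cast; field_simp; ring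
        have e3 : (u:ℂ) - v₁ = (1 + (u:ℂ)*z₀) / z₀ := by rw [hv₁def]; field_simp; ring
        have e4 : (u:ℂ) - v₂ = (1 + (u:ℂ)*(2+z₀)) / (2+z₀) := by rw [hv₂def]; field_simp; ring
        rw [Complex.real_smul, e1, e2, e3, e4]
        push_cast
        field_simp
        ring
      rw [← smul_mul_assoc, halg]
    have hHint : Integrable (fun u : ℝ => ((u^2)⁻¹ : ℝ) • G (-u⁻¹)) :=
      (integrable_congr haeHK).mpr hKint
    have step1 : ∫ t : ℝ, G t = ∫ u : ℝ, K u := by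
      rw [aux_subst G hGint hHint]
      exact integral_congr_ae haeHK
    have step2 : ∫ u : ℝ, K u = 0 := by
      rw [hKdef]
      have := auxB v₁ v₂ hv₁ hv₂ (-c)
      rw [this]
      rcases eq_or_lt_of_le hc0 with hceq | hclt
      · rw [if_pos (by simp [← hceq])]
        rw [← hceq]
        simp
      · rw [if_neg (by simpa using hclt)]
    exact step1.trans step2
end

section
/- Let β > 0. The ℂ-linear subspace of L¹(ℝ;ℂ) (functions identified when equal almost everywhere) consisting of all f such that ∫_ℝ f(t)·exp(iπjt) dt = 0 for every integer j ≥ 0 and ∫_ℝ f(t)·exp(iπβk/t) dt = 0 for every integer k ≥ 0, is infinite-dimensional. -/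
open MeasureTheory Real Set Filter Topology Complex
open scoped FourierTransform

noncomputable section Stmt6Aux
namespace Stmt6Aux



/-- Kernel with a double pole at `-w`. -/
def K (w : ℂ) (t : ℝ) : ℂ := (((t : ℂ) + w) ^ 2)⁻¹

lemma add_ne_zero' {w : ℂ} (hw : w.im ≠ 0) (t : ℝ) : (t : ℂ) + w ≠ 0 := by
  intro h
  have h2 : ((t : ℂ) + w).im = 0 := by rw [h]; simp
  simp only [Complex.add_im, Complex.ofReal_im, zero_add] at h2
  exact hw h2

lemma K_continuous {w : ℂ} (hw : w.im ≠ 0) : Continuous (K w) := by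
  apply Continuous.inv₀
  · fun_prop
  · exact fun t => pow_ne_zero 2 (add_ne_zero' hw t)

lemma K_norm {w : ℂ} (t : ℝ) : ‖K w t‖ = ((t + w.re) ^ 2 + w.im ^ 2)⁻¹ := by
  rw [K, norm_inv, norm_pow]
  congr 1
  have : ‖(t : ℂ) + w‖ ^ 2 = (t + w.re) ^ 2 + w.im ^ 2 := by
    rw [← Complex.normSq_eq_norm_sq]
    simp [Complex.normSq_apply]
    ring
  calc ‖(t : ℂ) + w‖ ^ 2 = (t + w.re) ^ 2 + w.im ^ 2 := this

lemma integrable_K {w : ℂ} (hw : w.im ≠ 0) : Integrable (K w) := by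
  have h1 : Integrable fun x : ℝ => (1 + (x / w.im) ^ 2)⁻¹ :=
    integrable_inv_one_add_sq.comp_div hw
  have h2 : Integrable fun x : ℝ => (1 + ((x + w.re) / w.im) ^ 2)⁻¹ := h1.comp_add_right w.re
  have h3 : Integrable fun x : ℝ => (w.im ^ 2)⁻¹ * (1 + ((x + w.re) / w.im) ^ 2)⁻¹ :=
    h2.const_mul _
  apply h3.mono' ((K_continuous hw).aestronglyMeasurable)
  filter_upwards with t
  rw [K_norm]
  have hpos : (0:ℝ) < (t + w.re) ^ 2 + w.im ^ 2 := by positivity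
  apply le_of_eq
  have hv : w.im ≠ 0 := hw
  field_simp
  ring


lemma neg_mul_exp_le {r x : ℝ} (hr : 0 < r) (hx : x ≤ 0) :
    (-x) * Real.exp (r / 2 * x) ≤ 2 / r := by
  have h3 : r / 2 * -x + 1 ≤ Real.exp (r / 2 * -x) := Real.add_one_le_exp _
  have h4 : r / 2 * -x ≤ Real.exp (r / 2 * -x) := by linarith
  have h5 : Real.exp (r / 2 * -x) = (Real.exp (r / 2 * x))⁻¹ := by
    rw [← Real.exp_neg]; ring_nf
  rw [h5] at h4
  have h6 : 0 < Real.exp (r / 2 * x) := Real.exp_pos _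
  have hc2 : (0:ℝ) < r / 2 := by linarith
  calc (-x) * Real.exp (r / 2 * x)
      ≤ ((r/2)⁻¹ * (Real.exp (r / 2 * x))⁻¹) * Real.exp (r / 2 * x) := by
        apply mul_le_mul_of_nonneg_right _ h6.le
        calc -x = (r/2)⁻¹ * (r/2 * -x) := by field_simp
          _ ≤ (r/2)⁻¹ * (Real.exp (r / 2 * x))⁻¹ :=
              mul_le_mul_of_nonneg_left h4 (by positivity)
    _ = (r/2)⁻¹ := by field_simp
    _ = 2 / r := by rw [inv_div]

lemma abs_mul_exp_le {r x : ℝ} (hr : 0 < r) (hx : x ≤ 0) :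
    |x| * Real.exp (r * x) ≤ (2 / r) * Real.exp (r / 2 * x) := by
  rw [abs_of_nonpos hx]
  have hsplit : (-x) * Real.exp (r * x) = ((-x) * Real.exp (r/2 * x)) * Real.exp (r/2 * x) := by
    rw [mul_assoc, ← Real.exp_add]; ring_nf
  rw [hsplit]
  exact mul_le_mul_of_nonneg_right (neg_mul_exp_le hr hx) (Real.exp_pos _).le


/-- integrability of kernel times a unimodular exponential -/
lemma norm_exp_I_mul (x : ℝ) : ‖Complex.exp (Complex.I * (x : ℂ))‖ = 1 := by
  rw [Complex.norm_exp]
  simp [Complex.mul_re]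

lemma integrable_mul_exp {g : ℝ → ℂ} (hg : Integrable g) {r : ℝ → ℝ} (hr : Measurable r) :
    Integrable fun t => g t * Complex.exp (Complex.I * (r t : ℂ)) := by
  have h := Integrable.bdd_mul (c := 1) hg
    ((Complex.measurable_exp.comp
      ((measurable_const.mul (Complex.measurable_ofReal.comp hr)))).aestronglyMeasurable)
    (by filter_upwards with t
        show ‖Complex.exp (Complex.I * ((r t : ℝ) : ℂ))‖ ≤ 1
        rw [norm_exp_I_mul])
  exact h.congr (Eventually.of_forall fun t => mul_comm _ _)

-- half-line integrability
lemma integrableOn_exp_mul_Iic {s : ℝ} (hs : 0 < s) :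
    IntegrableOn (fun x : ℝ => Real.exp (s * x)) (Iic 0) := by
  have A : IntegrableOn (fun x : ℝ => Real.exp (-s * x)) (Ioi 0) := exp_neg_integrableOn_Ioi 0 hs
  have B : Integrable (indicator (Ioi 0) fun y : ℝ => Real.exp (-s * y)) :=
    (integrable_indicator_iff measurableSet_Ioi).2 A
  have C : Integrable fun x : ℝ => indicator (Ioi 0) (fun y : ℝ => Real.exp (-s * y)) (-x) :=
    B.comp_neg
  have D : (fun x : ℝ => indicator (Ioi 0) (fun y : ℝ => Real.exp (-s * y)) (-x))
      = indicator (Iio 0) fun x : ℝ => Real.exp (s * x) := by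
    funext x
    by_cases hx : x < 0
    · rw [indicator_of_mem (by simpa using hx : (-x) ∈ Ioi (0:ℝ)),
        indicator_of_mem (by simpa using hx)]
      ring_nf
    · rw [indicator_of_notMem (by simpa using hx), indicator_of_notMem (by simpa using hx)]
  rw [D] at C
  rw [integrableOn_Iic_iff_integrableOn_Iio]
  exact (integrable_indicator_iff measurableSet_Iio).1 C

lemma integrableOn_mul_cexp {c : ℂ} (hc : 0 < c.re) :
    IntegrableOn (fun x : ℝ => (x : ℂ) * Complex.exp (c * x)) (Iic 0) := by
  have hmeas : AEStronglyMeasurable (fun x : ℝ => (x : ℂ) * Complex.exp (c * x))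
      (volume.restrict (Iic 0)) := by
    apply Continuous.aestronglyMeasurable
    fun_prop
  have hint : IntegrableOn (fun x : ℝ => (2 / c.re) * Real.exp (c.re / 2 * x)) (Iic 0) :=
    (integrableOn_exp_mul_Iic (by linarith)).const_mul _
  apply hint.mono' hmeas
  rw [ae_restrict_iff' measurableSet_Iic]
  filter_upwards with x hx
  have hx0 : x ≤ 0 := hx
  have h1 : ‖(x : ℂ) * Complex.exp (c * x)‖ = |x| * Real.exp (c.re * x) := by
    rw [norm_mul, Complex.norm_real, Real.norm_eq_abs,
      Complex.norm_exp]
    congr 1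
    simp [Complex.mul_re]
  rw [h1]
  exact abs_mul_exp_le hc hx0


lemma integral_mul_cexp {c : ℂ} (hc : 0 < c.re) :
    ∫ x in Iic (0:ℝ), (x:ℂ) * Complex.exp (c * x) = -(c^2)⁻¹ := by
  have hc0 : c ≠ 0 := fun h => by rw [h] at hc; simp at hc
  set G : ℝ → ℂ := fun x => ((x:ℂ)/c - (c^2)⁻¹) * Complex.exp (c * x) with hG
  have hderiv : ∀ x ∈ Iio (0:ℝ), HasDerivAt G ((x:ℂ) * Complex.exp (c * x)) x := by
    intro x _
    have h1 : HasDerivAt (fun y : ℝ => ((y:ℂ)/c - (c^2)⁻¹)) (1/c) x := by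
      have : HasDerivAt (fun y : ℝ => (y:ℂ)) 1 x := Complex.ofRealCLM.hasDerivAt
      simpa using ((this.div_const c).sub_const ((c^2)⁻¹))
    have h2 : HasDerivAt (fun y : ℝ => Complex.exp (c * y)) (c * Complex.exp (c * x)) x := by
      have hin : HasDerivAt (fun y : ℝ => c * (y:ℂ)) c x := by
        simpa using (Complex.ofRealCLM.hasDerivAt (x := x)).const_mul c
      simpa [mul_comm] using hin.cexp
    have := h1.mul h2
    convert this using 1
    · rfl
    · rfl
    field_simp
    ring
  have hint : IntegrableOn (fun x : ℝ => (x:ℂ) * Complex.exp (c * x)) (Iic 0) :=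
    integrableOn_mul_cexp hc
  have hcont : ContinuousWithinAt G (Iic 0) 0 := by
    apply Continuous.continuousWithinAt
    fun_prop
  have htend : Tendsto G atBot (𝓝 0) := by
    have hbound : ∀ᶠ x in atBot, ‖G x‖ ≤ (2/c.re * ‖(1:ℂ)/c‖) * Real.exp (c.re/2 * x)
        + ‖(c^2)⁻¹‖ * Real.exp (c.re * x) := by
      filter_upwards [Iic_mem_atBot (0:ℝ)] with x hx
      have hx0 : x ≤ 0 := hx
      have hnorm : ‖G x‖ ≤ (‖(x:ℂ)/c‖ + ‖(c^2)⁻¹‖) * Real.exp (c.re * x) := by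
        rw [hG]
        simp only
        rw [norm_mul]
        have hne : ‖Complex.exp (c * x)‖ = Real.exp (c.re * x) := by
          rw [Complex.norm_exp]
          congr 1
          simp [Complex.mul_re]
        rw [hne]
        apply mul_le_mul_of_nonneg_right _ (Real.exp_pos _).le
        exact norm_sub_le _ _
      apply hnorm.trans
      rw [add_mul]
      apply add_le_add
      · have h1 : ‖(x:ℂ)/c‖ = |x| * ‖(1:ℂ)/c‖ := by
          rw [div_eq_mul_one_div, norm_mul, Complex.norm_real, Real.norm_eq_abs]
        rw [h1]
        have h2 : |x| * Real.exp (c.re * x) ≤ (2/c.re) * Real.exp (c.re/2 * x) :=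
          abs_mul_exp_le hc hx0
        calc |x| * ‖(1:ℂ)/c‖ * Real.exp (c.re * x)
            = (|x| * Real.exp (c.re * x)) * ‖(1:ℂ)/c‖ := by ring
          _ ≤ ((2/c.re) * Real.exp (c.re/2 * x)) * ‖(1:ℂ)/c‖ :=
              mul_le_mul_of_nonneg_right h2 (norm_nonneg _)
          _ = 2/c.re * ‖(1:ℂ)/c‖ * Real.exp (c.re/2 * x) := by ring
      · exact le_refl _
    have t1 : Tendsto (fun x : ℝ => Real.exp (c.re/2 * x)) atBot (𝓝 0) := by
      apply Real.tendsto_exp_atBot.comp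
      exact (tendsto_const_mul_atBot_of_pos (by linarith)).2 tendsto_id
    have t2 : Tendsto (fun x : ℝ => Real.exp (c.re * x)) atBot (𝓝 0) := by
      apply Real.tendsto_exp_atBot.comp
      exact (tendsto_const_mul_atBot_of_pos hc).2 tendsto_id
    have hg := (t1.const_mul (2/c.re * ‖(1:ℂ)/c‖)).add (t2.const_mul ‖(c^2)⁻¹‖)
    have hg0 : ((2/c.re * ‖(1:ℂ)/c‖) * (0:ℝ) + ‖(c^2)⁻¹‖ * (0:ℝ)) = 0 := by ring
    exact squeeze_zero_norm' hbound (by simpa using hg)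
  have := integral_Iic_of_hasDerivAt_of_tendsto hcont hderiv hint htend
  rw [this, hG]
  simp





/-- The pre-image function whose Fourier transform is `K w`. -/
def hfun (w : ℂ) : ℝ → ℂ :=
  indicator (Iic 0) fun u => (4*(π:ℂ)^2) * ((u:ℂ) * Complex.exp ((((-2)*π : ℝ) : ℂ) * (Complex.I*w) * u))

lemma cc_re (z : ℂ) : (((((-2)*π : ℝ)) : ℂ) * (Complex.I*z)).re = 2*π*z.im := by
  simp [Complex.mul_re, Complex.mul_im]
  try ring

lemma hfun_continuous {w : ℂ} (hw : 0 < w.im) : Continuous (hfun w) := by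
  have : hfun w = fun u : ℝ => if u ≤ (0:ℝ) then
      (4*(π:ℂ)^2) * ((u:ℂ) * Complex.exp ((((-2)*π : ℝ) : ℂ) * (Complex.I*w) * u)) else 0 := by
    funext u
    rw [hfun, indicator]
    congr 1
  rw [this]
  apply Continuous.if_le _ continuous_zero continuous_id continuous_const
  · intro x hx
    subst hx
    simp
  · fun_prop

lemma hfun_integrable {w : ℂ} (hw : 0 < w.im) : Integrable (hfun w) := by
  rw [hfun]
  rw [integrable_indicator_iff measurableSet_Iic]
  have hc : 0 < ((((-2)*π : ℝ) : ℂ) * (Complex.I*w)).re := by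
    rw [cc_re]
    positivity
  exact (integrableOn_mul_cexp hc).const_mul _

lemma hfun_eq_zero {w : ℂ} {u : ℝ} (hu : 0 ≤ u) : hfun w u = 0 := by
  rcases eq_or_lt_of_le hu with h | h
  · rw [hfun, ← h]
    rw [indicator_of_mem (by simp : (0:ℝ) ∈ Iic (0:ℝ))]
    simp
  · rw [hfun, indicator_of_notMem (by simpa using h)]

lemma fourier_hfun {w : ℂ} (hw : 0 < w.im) : 𝓕 (hfun w) = K w := by
  funext t
  rw [Real.fourier_real_eq_integral_exp_smul]
  set c : ℂ := ((((-2)*π : ℝ) : ℂ) * (Complex.I*((t:ℂ)+w))) with hcdef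
  have hstep : (fun v : ℝ => Complex.exp (((-2)*π*v*t : ℝ) * Complex.I) • hfun w v)
      = indicator (Iic 0) (fun v : ℝ => (4*(π:ℂ)^2) * ((v:ℂ) * Complex.exp (c * v))) := by
    funext v
    rw [hfun]
    by_cases hv : v ∈ Iic (0:ℝ)
    · rw [indicator_of_mem hv, indicator_of_mem hv, smul_eq_mul]
      have : Complex.exp (((-2)*π*v*t : ℝ) * Complex.I) *
          ((4*(π:ℂ)^2) * ((v:ℂ) * Complex.exp ((((-2)*π : ℝ) : ℂ) * (Complex.I*w) * v)))
          = (4*(π:ℂ)^2) * ((v:ℂ) * (Complex.exp (((-2)*π*v*t : ℝ) * Complex.I) *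
            Complex.exp ((((-2)*π : ℝ) : ℂ) * (Complex.I*w) * v))) := by ring
      rw [this, ← Complex.exp_add]
      congr 2
      rw [hcdef]
      push_cast
      ring
    · rw [indicator_of_notMem hv, indicator_of_notMem hv, smul_zero]
  rw [hstep, integral_indicator measurableSet_Iic, MeasureTheory.integral_const_mul]
  have hc : 0 < c.re := by
    rw [hcdef, cc_re]
    have : ((t:ℂ)+w).im = w.im := by simp
    rw [this]
    positivity
  rw [integral_mul_cexp hc]
  have hc2 : c^2 = -((4*(π:ℂ)^2) * (((t:ℂ)+w))^2) := by
    rw [hcdef]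
    have : Complex.I^2 = -1 := Complex.I_sq
    push_cast
    ring_nf
    rw [Complex.I_sq]
    ring
  rw [hc2, K]
  have hpi : (π:ℂ) ≠ 0 := by exact_mod_cast Real.pi_ne_zero
  have h4pi : (4*(π:ℂ)^2) ≠ 0 := mul_ne_zero (by norm_num) (pow_ne_zero 2 hpi)
  have htw : ((t:ℂ)+w) ≠ 0 := add_ne_zero' (by linarith : w.im ≠ 0) t
  field_simp

/-- Family-1 key vanishing: for `a ≥ 0` the kernel `K w` (pole in the lower half plane)
integrates to zero against `e^{iat}`. -/
lemma K_vanish {w : ℂ} (hw : 0 < w.im) {a : ℝ} (ha : 0 ≤ a) :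
    ∫ t : ℝ, K w t * Complex.exp (Complex.I * ((a * t : ℝ) : ℂ)) = 0 := by
  have hK : Integrable (K w) := integrable_K (by linarith)
  have hh : Integrable (hfun w) := hfun_integrable hw
  have hFh : 𝓕 (hfun w) = K w := fourier_hfun hw
  have hFi : Integrable (𝓕 (hfun w)) := by rw [hFh]; exact hK
  set ξ : ℝ := a / (2*π) with hξdef
  have hξ : 0 ≤ ξ := by positivity
  have hinv : 𝓕⁻ (𝓕 (hfun w)) ξ = hfun w ξ :=
    hh.fourierInv_fourier_eq hFi ((hfun_continuous hw).continuousAt)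
  have h0 : hfun w ξ = 0 := hfun_eq_zero hξ
  have hchain : 𝓕⁻ (K w) ξ = 0 := by rw [← hFh, hinv, h0]
  rw [Real.fourierInv_eq_fourier_neg] at hchain
  rw [Real.fourier_real_eq_integral_exp_smul] at hchain
  rw [← hchain]
  congr 1
  funext t
  rw [smul_eq_mul, mul_comm]
  congr 1
  have harg : ((-2)*π*t*(-ξ) : ℝ) = a * t := by
    rw [hξdef]
    field_simp
  rw [harg, mul_comm]




def Am (m : ℕ) : ℂ := m * Complex.I
def Bm (a0 : ℝ) (m : ℕ) : ℂ := 1 + (m : ℂ) * Complex.I * (a0 : ℂ)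
def Sm (a0 : ℝ) (m : ℕ) (t : ℝ) : ℂ := ((Bm a0 m * t + Am m) ^ 2)⁻¹
def fm (a0 : ℝ) (m : ℕ) (t : ℝ) : ℂ := K (Am m) t - Sm a0 m t

lemma Am_im (m : ℕ) : (Am m).im = m := by simp [Am]
lemma Am_re (m : ℕ) : (Am m).re = 0 := by simp [Am]
lemma Bm_re (a0 : ℝ) (m : ℕ) : (Bm a0 m).re = 1 := by simp [Bm]
lemma Bm_im (a0 : ℝ) (m : ℕ) : (Bm a0 m).im = m * a0 := by simp [Bm]

lemma Bm_ne_zero (a0 : ℝ) (m : ℕ) : Bm a0 m ≠ 0 := by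
  intro h
  have := congrArg Complex.re h
  rw [Bm_re] at this
  simp at this

lemma Am_im_pos {m : ℕ} (hm : 0 < m) : 0 < (Am m).im := by
  rw [Am_im]; exact_mod_cast hm

lemma div_im_pos (a0 : ℝ) {m : ℕ} (hm : 0 < m) : 0 < (Am m / Bm a0 m).im := by
  rw [Complex.div_im, Am_re, Am_im, Bm_re]
  simp only [zero_mul, mul_one, zero_div, sub_zero]
  apply div_pos
  · exact_mod_cast hm
  · exact Complex.normSq_pos.2 (Bm_ne_zero a0 m)

lemma Sm_eq (a0 : ℝ) (m : ℕ) (t : ℝ) :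
    Sm a0 m t = ((Bm a0 m) ^ 2)⁻¹ * K (Am m / Bm a0 m) t := by
  rw [Sm, K, ← mul_inv]
  congr 1
  have hB := Bm_ne_zero a0 m
  have h1 : Bm a0 m * ((t : ℂ) + Am m / Bm a0 m) = Bm a0 m * t + Am m := by
    field_simp
  calc (Bm a0 m * t + Am m) ^ 2 = (Bm a0 m * ((t : ℂ) + Am m / Bm a0 m)) ^ 2 := by rw [h1]
    _ = Bm a0 m ^ 2 * ((t : ℂ) + Am m / Bm a0 m) ^ 2 := mul_pow _ _ 2

lemma integrable_Sm (a0 : ℝ) {m : ℕ} (hm : 0 < m) : Integrable (Sm a0 m) := by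
  have : Sm a0 m = fun t => ((Bm a0 m) ^ 2)⁻¹ * K (Am m / Bm a0 m) t := funext (Sm_eq a0 m)
  rw [this]
  exact (integrable_K (ne_of_gt (div_im_pos a0 hm))).const_mul _

lemma Sm_denom_ne (a0 : ℝ) {m : ℕ} (hm : 0 < m) (t : ℝ) : Bm a0 m * t + Am m ≠ 0 := by
  intro h
  have hre := congrArg Complex.re h
  have him := congrArg Complex.im h
  simp only [Complex.add_re, Complex.add_im, Complex.mul_re, Complex.mul_im,
    Complex.ofReal_re, Complex.ofReal_im, Complex.zero_re, Complex.zero_im,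
    Bm_re, Bm_im, Am_re, Am_im, mul_zero, sub_zero, add_zero, zero_add, one_mul] at hre him
  -- hre : t = 0 ; him : m*a0*t + m = 0
  rw [hre] at him
  simp at him
  omega

lemma continuous_Sm (a0 : ℝ) {m : ℕ} (hm : 0 < m) : Continuous (Sm a0 m) := by
  apply Continuous.inv₀
  · fun_prop
  · exact fun t => pow_ne_zero 2 (Sm_denom_ne a0 hm t)

lemma integrable_fm (a0 : ℝ) {m : ℕ} (hm : 0 < m) : Integrable (fm a0 m) :=
  (integrable_K (ne_of_gt (Am_im_pos hm))).sub (integrable_Sm a0 hm)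

lemma continuous_fm (a0 : ℝ) {m : ℕ} (hm : 0 < m) : Continuous (fm a0 m) :=
  (K_continuous (ne_of_gt (Am_im_pos hm))).sub (continuous_Sm a0 hm)

/-- Family 1 vanishing for `fm`. -/
lemma fm_family1 (a0 : ℝ) {m : ℕ} (hm : 0 < m) {a : ℝ} (ha : 0 ≤ a) :
    ∫ t : ℝ, fm a0 m t * Complex.exp (Complex.I * ((a * t : ℝ) : ℂ)) = 0 := by
  have h1 := K_vanish (Am_im_pos hm) ha
  have h2 := K_vanish (div_im_pos a0 hm) ha
  have hi1 : Integrable fun t : ℝ => K (Am m) t * Complex.exp (Complex.I * ((a * t : ℝ) : ℂ)) :=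
    integrable_mul_exp (integrable_K (ne_of_gt (Am_im_pos hm))) (by fun_prop)
  have hi2 : Integrable fun t : ℝ => Sm a0 m t * Complex.exp (Complex.I * ((a * t : ℝ) : ℂ)) :=
    integrable_mul_exp (integrable_Sm a0 hm) (by fun_prop)
  have hsplit : (fun t : ℝ => fm a0 m t * Complex.exp (Complex.I * ((a * t : ℝ) : ℂ)))
      = fun t : ℝ => K (Am m) t * Complex.exp (Complex.I * ((a * t : ℝ) : ℂ))
        - Sm a0 m t * Complex.exp (Complex.I * ((a * t : ℝ) : ℂ)) := by
    funext t; rw [fm, sub_mul]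
  rw [hsplit, integral_sub hi1 hi2, h1]
  have hsm : (fun t : ℝ => Sm a0 m t * Complex.exp (Complex.I * ((a * t : ℝ) : ℂ)))
      = fun t : ℝ => ((Bm a0 m) ^ 2)⁻¹ *
          (K (Am m / Bm a0 m) t * Complex.exp (Complex.I * ((a * t : ℝ) : ℂ))) := by
    funext t; rw [Sm_eq, mul_assoc]
  rw [hsm, MeasureTheory.integral_const_mul, h2]
  simp

/-- The Möbius substitution identity. -/
lemma integral_K_eq_integral_Sm {a0 : ℝ} (ha0 : 0 < a0) {m : ℕ} (hm : 0 < m) {r : ℝ → ℝ}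
    (hr : Measurable r)
    (hper : ∀ x : ℝ, x ≠ 0 → x ≠ -a0⁻¹ → ∃ kk : ℤ, r (x / (1 + a0 * x)) = r x + kk * (2 * π)) :
    ∫ t : ℝ, K (Am m) t * Complex.exp (Complex.I * (r t : ℂ))
      = ∫ t : ℝ, Sm a0 m t * Complex.exp (Complex.I * (r t : ℂ)) := by
  have ha0' : a0 ≠ 0 := ne_of_gt ha0
  set μf : ℝ → ℝ := fun x => x / (1 + a0 * x) with hμf
  set s : Set ℝ := {-a0⁻¹}ᶜ with hs_def
  have hs : MeasurableSet s := (measurableSet_singleton _).compl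
  have hden : ∀ x ∈ s, 1 + a0 * x ≠ 0 := by
    intro x hx h
    apply hx
    have : x = -a0⁻¹ := by
      field_simp
      linarith
    simpa [hs_def] using this
  set G : ℝ → ℂ := fun t => K (Am m) t * Complex.exp (Complex.I * (r t : ℂ)) with hG
  have hderiv : ∀ x ∈ s, HasDerivWithinAt μf (((1 + a0 * x) ^ 2)⁻¹) s x := by
    intro x hx
    have h1 : HasDerivAt (fun y : ℝ => y / (1 + a0 * y))
        ((1 * (1 + a0 * x) - x * a0) / (1 + a0 * x) ^ 2) x := by
      apply HasDerivAt.div (hasDerivAt_id x)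
      · simpa using ((hasDerivAt_id x).const_mul a0).const_add 1
      · exact hden x hx
    have h2 : (1 * (1 + a0 * x) - x * a0) / (1 + a0 * x) ^ 2 = ((1 + a0 * x) ^ 2)⁻¹ := by
      rw [show (1 * (1 + a0 * x) - x * a0) = 1 by ring, one_div]
    rw [h2] at h1
    exact h1.hasDerivWithinAt
  have hinj : InjOn μf s := by
    intro x hx y hy hxy
    have hx' := hden x hx
    have hy' := hden y hy
    rw [hμf] at hxy
    field_simp at hxy
    rw [div_eq_iff (by rw [mul_comm]; exact hx')] at hxy
    nlinarith [hxy]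
  have himg : μf '' s = {(a0⁻¹ : ℝ)}ᶜ := by
    ext y
    constructor
    · rintro ⟨x, hx, rfl⟩
      simp only [mem_compl_iff, mem_singleton_iff]
      intro h
      rw [hμf] at h
      have hdx := hden x hx
      field_simp at h
      rw [div_eq_iff (by rw [mul_comm]; exact hdx)] at h
      -- h : x * a0 = 1 + a0 * x
      nlinarith [h]
    · intro hy
      have hy' : y ≠ a0⁻¹ := by simpa using hy
      have hden2 : 1 - a0 * y ≠ 0 := by
        intro h
        apply hy'
        field_simp
        linarith
      refine ⟨y / (1 - a0 * y), ?_, ?_⟩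
      · simp only [hs_def, mem_compl_iff, mem_singleton_iff]
        intro h
        have : y * a0 = -(1 - a0 * y) := by
          field_simp at h
          rw [div_eq_iff (by rw [mul_comm]; exact hden2)] at h
          linarith
        rw [neg_sub] at this
        -- y*a0 = a0*y - 1
        nlinarith [this]
      · rw [hμf]
        have : 1 + a0 * (y / (1 - a0 * y)) = (1 - a0 * y + a0 * y) / (1 - a0 * y) := by
          field_simp
        show y / (1 - a0 * y) / (1 + a0 * (y / (1 - a0 * y))) = y
        rw [this, sub_add_cancel]
        field_simp
        exact mul_div_cancel_right₀ y (by rwa [mul_comm] at hden2)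
  have step0 : ∫ t : ℝ, G t = ∫ t in ({(a0⁻¹ : ℝ)}ᶜ : Set ℝ), G t := by
    rw [setIntegral_congr_set (by rw [ae_eq_univ]; simp [Real.volume_singleton]),
      setIntegral_univ]
  have step1 : ∫ t in ({(a0⁻¹ : ℝ)}ᶜ : Set ℝ), G t
      = ∫ x in s, |((1 + a0 * x) ^ 2)⁻¹| • G (μf x) := by
    rw [← himg, integral_image_eq_integral_abs_deriv_smul hs hderiv hinj]
  have step2 : ∫ x in s, |((1 + a0 * x) ^ 2)⁻¹| • G (μf x)
      = ∫ x in s, Sm a0 m x * Complex.exp (Complex.I * (r x : ℂ)) := by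
    apply setIntegral_congr_ae hs
    have h0 : ∀ᵐ x : ℝ, x ≠ 0 := by
      filter_upwards [compl_mem_ae_iff.2 (Real.volume_singleton (a := 0))] with x hx
      simpa using hx
    filter_upwards [h0] with x hx0 hxs
    have hdx : 1 + a0 * x ≠ 0 := hden x hxs
    have hxne : x ≠ -a0⁻¹ := by simpa [hs_def] using hxs
    obtain ⟨kk, hkk⟩ := hper x hx0 hxne
    have habs : |((1 + a0 * x) ^ 2)⁻¹| = ((1 + a0 * x) ^ 2)⁻¹ := abs_of_nonneg (by positivity)
    rw [habs, Complex.real_smul, hG]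
    have hexp : Complex.exp (Complex.I * ((r x + kk * (2 * π) : ℝ) : ℂ))
        = Complex.exp (Complex.I * (r x : ℂ)) := by
      rw [Complex.ofReal_add]
      rw [mul_add, Complex.exp_add]
      have : Complex.exp (Complex.I * ((kk * (2 * π) : ℝ) : ℂ)) = 1 := by
        have harg : Complex.I * ((kk * (2 * π) : ℝ) : ℂ) = (kk : ℤ) * (2 * π * Complex.I) := by
          push_cast
          ring
        rw [harg, Complex.exp_int_mul_two_pi_mul_I]
      rw [this, mul_one]
    have hker : ((((1 + a0 * x) ^ 2)⁻¹ : ℝ) : ℂ) * K (Am m) (x / (1 + a0 * x)) = Sm a0 m x := by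
      rw [K, Sm]
      push_cast
      rw [← mul_inv]
      congr 1
      have hdxc : (1 : ℂ) + a0 * x ≠ 0 := by
        intro h
        apply hdx
        have := congrArg Complex.re h
        simpa using this
      have h3 : ((1 : ℂ) + a0 * x) * ((x : ℂ) / (1 + a0 * x) + Am m) = Bm a0 m * x + Am m := by
        field_simp [Am, Bm]
        simp only [Am, Bm]
        ring
      calc ((1 + (a0 : ℂ) * x) ^ 2) * (((x : ℂ) / (1 + a0 * x) + Am m) ^ 2)
          = (((1 : ℂ) + a0 * x) * ((x : ℂ) / (1 + a0 * x) + Am m)) ^ 2 := by rw [mul_pow]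
        _ = (Bm a0 m * x + Am m) ^ 2 := by rw [h3]
    show ((((1 + a0 * x) ^ 2)⁻¹ : ℝ) : ℂ)
        * (K (Am m) (x / (1 + a0 * x)) * Complex.exp (Complex.I * ((r (x / (1 + a0 * x)) : ℝ) : ℂ)))
        = Sm a0 m x * Complex.exp (Complex.I * (r x : ℂ))
    rw [hkk, hexp, ← mul_assoc, hker]
  have step3 : ∫ x in s, Sm a0 m x * Complex.exp (Complex.I * (r x : ℂ))
      = ∫ x : ℝ, Sm a0 m x * Complex.exp (Complex.I * (r x : ℂ)) := by
    rw [setIntegral_congr_set (by rw [ae_eq_univ]; simp [hs_def, Real.volume_singleton]),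
      setIntegral_univ]
  rw [hG] at step0 step1 step2
  rw [step0, step1, step2, step3]




lemma div_re_pos {a0 : ℝ} (ha0 : 0 < a0) {m : ℕ} (hm : 0 < m) : 0 < (Am m / Bm a0 m).re := by
  rw [Complex.div_re, Am_re, Am_im]
  have hBre : (Bm a0 m).re = 1 := by simp [Bm]
  have hBim : (Bm a0 m).im = m * a0 := by simp [Bm]
  rw [hBre, hBim]
  simp only [zero_mul, zero_div, zero_add]
  apply div_pos
  · have h' : (0:ℝ) < m := by exact_mod_cast hm
    exact mul_pos h' (mul_pos h' ha0)
  · exact Complex.normSq_pos.2 (Bm_ne_zero a0 m)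

lemma BA_ne {a0 : ℝ} (ha0 : 0 < a0) {m m0 : ℕ} (hm : 0 < m) (hm0 : 0 < m0) :
    Bm a0 m * (-Am m0) + Am m ≠ 0 := by
  have hrepr : Bm a0 m * (-Am m0) + Am m
      = ((m * m0 * a0 : ℝ) : ℂ) + (((m : ℝ) - m0 : ℝ) : ℂ) * Complex.I := by
    rw [Bm, Am, Am]
    push_cast
    have hI : Complex.I * Complex.I = -1 := Complex.I_mul_I
    ring_nf
    rw [Complex.I_sq]
    ring
  intro h
  rw [hrepr] at h
  have h2 : ((m:ℝ) * m0 * a0 : ℝ) = 0 := by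
    have := congrArg Complex.re h
    simpa using this
  have hm' : (0:ℝ) < m := by exact_mod_cast hm
  have hm0' : (0:ℝ) < m0 := by exact_mod_cast hm0
  exact absurd h2 (ne_of_gt (mul_pos (mul_pos hm' hm0') ha0))

/-- Linear independence of the `fm`. -/
lemma indep {a0 : ℝ} (ha0 : 0 < a0) {n : ℕ} (c : Fin n → ℂ)
    (hzero : ∀ t : ℝ, (∑ i : Fin n, c i * fm a0 ((i : ℕ) + 1) t) = 0) : ∀ i, c i = 0 := by
  classical
  set Φ : ℂ → ℂ := fun z => ∑ i : Fin n, c i *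
    (((z + Am ((i : ℕ) + 1)) ^ 2)⁻¹ - ((Bm a0 ((i : ℕ) + 1) * z + Am ((i : ℕ) + 1)) ^ 2)⁻¹)
    with hΦ
  set S0 : Set ℂ := (Set.range fun i : Fin n => -Am ((i : ℕ) + 1)) ∪
    (Set.range fun i : Fin n => -(Am ((i : ℕ) + 1) / Bm a0 ((i : ℕ) + 1))) with hS0
  have hfin : S0.Finite := (Set.finite_range _).union (Set.finite_range _)
  have hne1 : ∀ (z : ℂ), z ∈ S0ᶜ → ∀ i : Fin n, z + Am ((i : ℕ) + 1) ≠ 0 := by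
    intro z hz i h
    apply hz
    left
    exact ⟨i, by linear_combination -h⟩
  have hne2 : ∀ (z : ℂ), z ∈ S0ᶜ → ∀ i : Fin n, Bm a0 ((i : ℕ) + 1) * z + Am ((i : ℕ) + 1) ≠ 0 := by
    intro z hz i h
    apply hz
    right
    refine ⟨i, ?_⟩
    have hB := Bm_ne_zero a0 ((i : ℕ) + 1)
    field_simp
    linear_combination -h
  have hopen : IsOpen (S0ᶜ) := hfin.isClosed.isOpen_compl
  have hdiff : DifferentiableOn ℂ Φ (S0ᶜ) := by
    apply DifferentiableOn.fun_sum
    intro i _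
    apply DifferentiableOn.const_mul
    apply DifferentiableOn.sub
    · apply DifferentiableOn.inv
      · fun_prop
      · exact fun z hz => pow_ne_zero 2 (hne1 z hz i)
    · apply DifferentiableOn.inv
      · fun_prop
      · exact fun z hz => pow_ne_zero 2 (hne2 z hz i)
  have hanal : AnalyticOnNhd ℂ Φ (S0ᶜ) := hdiff.analyticOnNhd hopen
  have hconn : IsPreconnected (S0ᶜ) := by
    have := (hfin.countable).isPathConnected_compl_of_one_lt_rank
      (by rw [Complex.rank_real_complex]; exact Cardinal.one_lt_two) (E := ℂ)
    exact this.isConnected.isPreconnected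
  have h0mem : (0 : ℂ) ∈ S0ᶜ := by
    intro h0
    rcases h0 with ⟨i, hi⟩ | ⟨i, hi⟩
    · have hi' : -Am ((i : ℕ) + 1) = 0 := hi
      have h2 : Am ((i : ℕ) + 1) = 0 := by simpa [neg_eq_zero] using hi'
      have h3 := congrArg Complex.im h2
      rw [Am_im] at h3
      simp only [Complex.zero_im] at h3
      have h4 : (0:ℝ) ≤ ((i:ℕ):ℝ) := Nat.cast_nonneg _
      push_cast at h3
      linarith
    · have hi' : -(Am ((i : ℕ) + 1) / Bm a0 ((i : ℕ) + 1)) = 0 := hi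
      have := congrArg Complex.im hi'
      rw [Complex.neg_im] at this
      have hpos := div_im_pos a0 (Nat.succ_pos (i : ℕ))
      simp only [Complex.zero_im] at this
      linarith
  have hfreq : ∃ᶠ z in 𝓝[≠] (0 : ℂ), Φ z = 0 := by
    have hseq : Tendsto (fun j : ℕ => (Complex.ofReal (1 / (j + 1 : ℝ)))) atTop (𝓝[≠] (0 : ℂ)) := by
      apply tendsto_nhdsWithin_of_tendsto_nhds_of_eventually_within
      · have h0 := (Complex.continuous_ofReal.tendsto (0 : ℝ)).comp
          tendsto_one_div_add_atTop_nhds_zero_nat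
        rw [Complex.ofReal_zero] at h0
        exact h0
      · filter_upwards with j
        have hne : (Complex.ofReal (1 / (j + 1 : ℝ))) ≠ 0 := Complex.ofReal_ne_zero.2 (by positivity)
        simpa [mem_compl_iff, mem_singleton_iff] using hne
    have hΦreal : ∀ t : ℝ, Φ ((t : ℝ) : ℂ) = ∑ i : Fin n, c i * fm a0 ((i : ℕ) + 1) t := by
      intro t
      rw [hΦ]
      apply Finset.sum_congr rfl
      intro i _
      rw [fm, K, Sm]
    apply hseq.frequently
    apply Frequently.of_forall
    intro j
    rw [hΦreal]
    exact hzero (1 / (j + 1 : ℝ))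
  have hEqOn : EqOn Φ 0 (S0ᶜ) :=
    hanal.eqOn_zero_of_preconnected_of_frequently_eq_zero hconn h0mem hfreq
  -- extraction of coefficients
  intro i0
  set z : ℕ → ℂ := fun j => -Am ((i0 : ℕ) + 1) + (Complex.ofReal (1 / (j + 1 : ℝ))) with hz
  have hzmem : ∀ j, z j ∈ S0ᶜ := by
    intro j h
    have hrej : (z j).re = 1 / (j + 1 : ℝ) := by
      rw [hz]
      simp only [Complex.add_re, Complex.neg_re, Am_re, Complex.ofReal_re, neg_zero, zero_add]
    have hrepos : 0 < (z j).re := by rw [hrej]; positivity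
    rcases h with ⟨i, hi⟩ | ⟨i, hi⟩
    · have hi' : -Am ((i : ℕ) + 1) = z j := hi
      have := congrArg Complex.re hi'
      rw [Complex.neg_re, Am_re] at this
      rw [← this] at hrepos
      simp at hrepos
    · have hi' : -(Am ((i : ℕ) + 1) / Bm a0 ((i : ℕ) + 1)) = z j := hi
      have := congrArg Complex.re hi'
      rw [Complex.neg_re] at this
      have hpos := div_re_pos ha0 (Nat.succ_pos (i : ℕ))
      rw [← this] at hrepos
      linarith
  have hΦz : ∀ j, Φ (z j) = 0 := fun j => hEqOn (hzmem j)
  have hzsum : ∀ j, z j + Am ((i0 : ℕ) + 1) = (Complex.ofReal (1 / (j + 1 : ℝ))) := by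
    intro j; rw [hz]; ring
  have hznz : ∀ j, z j + Am ((i0 : ℕ) + 1) ≠ 0 := by
    intro j; rw [hzsum j]
    exact Complex.ofReal_ne_zero.2 (by positivity)
  have hztend : Tendsto z atTop (𝓝 (-Am ((i0 : ℕ) + 1))) := by
    rw [hz]
    have h1 : Tendsto (fun j : ℕ => (Complex.ofReal (1 / (j + 1 : ℝ)))) atTop (𝓝 0) := by
      have h0 := (Complex.continuous_ofReal.tendsto (0 : ℝ)).comp
        tendsto_one_div_add_atTop_nhds_zero_nat
      rw [Complex.ofReal_zero] at h0
      exact h0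
    simpa using (tendsto_const_nhds (x := -Am ((i0 : ℕ) + 1)) (f := atTop)).add h1
  set T : ℕ → ℂ := fun j => ∑ i : Fin n, c i *
      ((z j + Am ((i0 : ℕ) + 1)) ^ 2 * (((z j + Am ((i : ℕ) + 1)) ^ 2)⁻¹
        - ((Bm a0 ((i : ℕ) + 1) * z j + Am ((i : ℕ) + 1)) ^ 2)⁻¹)) with hT
  have hT0 : ∀ j, T j = 0 := by
    intro j
    have hzero' := hΦz j
    have hTj : T j = (z j + Am ((i0 : ℕ) + 1)) ^ 2 * Φ (z j) := by
      rw [hT, hΦ, Finset.mul_sum]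
      apply Finset.sum_congr rfl
      intro i _
      ring
    rw [hTj, hzero', mul_zero]
  have hTlim : Tendsto T atTop (𝓝 (∑ i : Fin n, if i = i0 then c i0 else 0)) := by
    rw [hT]
    apply tendsto_finset_sum
    intro i _
    by_cases hii : i = i0
    · subst hii
      have heq : ∀ j : ℕ, c i * (1 - (z j + Am ((i : ℕ) + 1)) ^ 2
            * ((Bm a0 ((i : ℕ) + 1) * z j + Am ((i : ℕ) + 1)) ^ 2)⁻¹)
          = c i * ((z j + Am ((i : ℕ) + 1)) ^ 2 * (((z j + Am ((i : ℕ) + 1)) ^ 2)⁻¹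
            - ((Bm a0 ((i : ℕ) + 1) * z j + Am ((i : ℕ) + 1)) ^ 2)⁻¹)) := by
        intro j
        have hnz : (z j + Am ((i : ℕ) + 1)) ^ 2 ≠ 0 := pow_ne_zero 2 (hznz j)
        congr 1
        rw [mul_sub, mul_inv_cancel₀ hnz]
      have hlim : Tendsto (fun j : ℕ => c i * (1 - (z j + Am ((i : ℕ) + 1)) ^ 2
            * ((Bm a0 ((i : ℕ) + 1) * z j + Am ((i : ℕ) + 1)) ^ 2)⁻¹)) atTop
          (𝓝 (c i * (1 - (-Am ((i : ℕ) + 1) + Am ((i : ℕ) + 1)) ^ 2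
            * ((Bm a0 ((i : ℕ) + 1) * (-Am ((i : ℕ) + 1)) + Am ((i : ℕ) + 1)) ^ 2)⁻¹))) := by
        apply Tendsto.const_mul
        apply Tendsto.const_sub
        apply Tendsto.mul
        · exact (hztend.add tendsto_const_nhds).pow 2
        · exact (((tendsto_const_nhds.mul hztend).add tendsto_const_nhds).pow 2).inv₀
            (pow_ne_zero 2 (BA_ne ha0 (Nat.succ_pos _) (Nat.succ_pos _)))
      have hval : c i * (1 - (-Am ((i : ℕ) + 1) + Am ((i : ℕ) + 1)) ^ 2
            * ((Bm a0 ((i : ℕ) + 1) * (-Am ((i : ℕ) + 1)) + Am ((i : ℕ) + 1)) ^ 2)⁻¹)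
          = c i := by
        simp
      rw [hval] at hlim
      have := hlim.congr heq
      simpa using this
    · have hmm : ((i : ℕ) + 1) ≠ ((i0 : ℕ) + 1) := by
        simp only [ne_eq, add_left_inj]
        exact fun h => hii (Fin.ext h)
      have hAA : -Am ((i0 : ℕ) + 1) + Am ((i : ℕ) + 1) ≠ 0 := by
        intro h
        have := congrArg Complex.im h
        rw [Complex.add_im, Complex.neg_im, Am_im, Am_im] at this
        simp only [Complex.zero_im] at this
        apply hmm
        have : ((i : ℕ) + 1 : ℝ) = ((i0 : ℕ) + 1 : ℝ) := by push_cast at this ⊢; linarith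
        exact_mod_cast this
      have hlim : Tendsto (fun j : ℕ => c i * ((z j + Am ((i0 : ℕ) + 1)) ^ 2
            * (((z j + Am ((i : ℕ) + 1)) ^ 2)⁻¹
              - ((Bm a0 ((i : ℕ) + 1) * z j + Am ((i : ℕ) + 1)) ^ 2)⁻¹))) atTop
          (𝓝 (c i * ((-Am ((i0 : ℕ) + 1) + Am ((i0 : ℕ) + 1)) ^ 2
            * (((-Am ((i0 : ℕ) + 1) + Am ((i : ℕ) + 1)) ^ 2)⁻¹
              - ((Bm a0 ((i : ℕ) + 1) * (-Am ((i0 : ℕ) + 1)) + Am ((i : ℕ) + 1)) ^ 2)⁻¹)))) := by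
        apply Tendsto.const_mul
        apply Tendsto.mul
        · exact (hztend.add tendsto_const_nhds).pow 2
        · apply Tendsto.sub
          · exact ((hztend.add tendsto_const_nhds).pow 2).inv₀ (pow_ne_zero 2 hAA)
          · exact (((tendsto_const_nhds.mul hztend).add tendsto_const_nhds).pow 2).inv₀
              (pow_ne_zero 2 (BA_ne ha0 (Nat.succ_pos _) (Nat.succ_pos _)))
      have hval : c i * ((-Am ((i0 : ℕ) + 1) + Am ((i0 : ℕ) + 1)) ^ 2
            * (((-Am ((i0 : ℕ) + 1) + Am ((i : ℕ) + 1)) ^ 2)⁻¹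
              - ((Bm a0 ((i : ℕ) + 1) * (-Am ((i0 : ℕ) + 1)) + Am ((i : ℕ) + 1)) ^ 2)⁻¹))
          = 0 := by
        simp
      rw [hval] at hlim
      simpa [hii] using hlim
  have hsum : (∑ i : Fin n, if i = i0 then c i0 else 0) = c i0 := by
    rw [Finset.sum_ite_eq' Finset.univ i0 (fun _ => c i0)]
    simp
  rw [hsum] at hTlim
  have hzero'' : Tendsto T atTop (𝓝 0) :=
    Tendsto.congr (fun j => (hT0 j).symm) tendsto_const_nhds
  exact (tendsto_nhds_unique hzero'' hTlim).symm


lemma fm_family2 {β : ℝ} (hβ : 0 < β) {m : ℕ} (hm : 0 < m) (k : ℤ) :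
    ∫ t : ℝ, fm (2/β) m t * Complex.exp (Complex.I * ((π * β * k / t : ℝ) : ℂ)) = 0 := by
  have hβ' : β ≠ 0 := ne_of_gt hβ
  have ha0 : 0 < 2/β := by positivity
  set r : ℝ → ℝ := fun t => π * β * k / t with hr_def
  have hr : Measurable r := measurable_const.div measurable_id
  have hper : ∀ x : ℝ, x ≠ 0 → x ≠ -(2/β)⁻¹ →
      ∃ kk : ℤ, r (x / (1 + (2/β) * x)) = r x + kk * (2*π) := by
    intro x hx0 hx1
    refine ⟨k, ?_⟩
    have hden : 1 + (2/β) * x ≠ 0 := by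
      intro h
      apply hx1
      field_simp at h ⊢
      linarith
    rw [hr_def]
    simp only
    rw [div_div_eq_mul_div]
    field_simp
  have hi1 : Integrable (fun t => K (Am m) t * Complex.exp (Complex.I * (r t : ℂ))) :=
    integrable_mul_exp (integrable_K (ne_of_gt (Am_im_pos hm))) hr
  have hi2 : Integrable (fun t => Sm (2/β) m t * Complex.exp (Complex.I * (r t : ℂ))) :=
    integrable_mul_exp (integrable_Sm (2/β) hm) hr
  have h1 := integral_K_eq_integral_Sm ha0 hm hr hper
  have hsplit : (fun t : ℝ => fm (2/β) m t * Complex.exp (Complex.I * (r t : ℂ)))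
      = fun t : ℝ => K (Am m) t * Complex.exp (Complex.I * (r t : ℂ))
        - Sm (2/β) m t * Complex.exp (Complex.I * (r t : ℂ)) := by
    funext t; rw [fm, sub_mul]
  calc ∫ t : ℝ, fm (2/β) m t * Complex.exp (Complex.I * ((π * β * k / t : ℝ) : ℂ))
      = ∫ t : ℝ, (K (Am m) t * Complex.exp (Complex.I * (r t : ℂ))
        - Sm (2/β) m t * Complex.exp (Complex.I * (r t : ℂ))) := by rw [← hsplit]
    _ = (∫ t : ℝ, K (Am m) t * Complex.exp (Complex.I * (r t : ℂ)))
        - ∫ t : ℝ, Sm (2/β) m t * Complex.exp (Complex.I * (r t : ℂ)) := integral_sub hi1 hi2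
    _ = 0 := by rw [h1, sub_self]

end Stmt6Aux

end Stmt6Aux

open Stmt6Aux in
/-- The subspace of `L¹(ℝ)` (functions modulo a.e. equality) annihilating the
exponentials `e^{iπjt}` and `e^{iπβk/t}`, `j, k = 0, 1, 2, …`, is
infinite-dimensional: for every `n` there are `n` such functions that are
linearly independent modulo null sets. -/
theorem stmt6 (β : ℝ) (hβ : 0 < β) :
    ∀ n : ℕ, ∃ f : Fin n → ℝ → ℂ,
      (∀ i, Integrable (f i)) ∧
      (∀ i, ∀ j : ℤ, 0 ≤ j →
        ∫ t : ℝ, f i t * Complex.exp (Complex.I * ((π * j * t : ℝ) : ℂ)) = 0) ∧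
      (∀ i, ∀ k : ℤ, 0 ≤ k →
        ∫ t : ℝ, f i t * Complex.exp (Complex.I * ((π * β * k / t : ℝ) : ℂ)) = 0) ∧
      (∀ c : Fin n → ℂ,
        (fun t => ∑ i, c i * f i t) =ᵐ[volume] 0 → ∀ i, c i = 0) := by
  intro n
  have ha0 : 0 < 2/β := by positivity
  refine ⟨fun i t => fm (2/β) ((i : ℕ) + 1) t, ?_, ?_, ?_, ?_⟩
  · intro i
    exact integrable_fm _ (Nat.succ_pos _)
  · intro i j hj
    have ha : 0 ≤ π * (j : ℝ) := mul_nonneg Real.pi_pos.le (by exact_mod_cast hj)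
    exact fm_family1 _ (Nat.succ_pos _) ha
  · intro i k _
    exact fm_family2 hβ (Nat.succ_pos _) k
  · intro c hae
    have hcont : Continuous (fun t : ℝ => ∑ i : Fin n, c i * fm (2/β) ((i : ℕ) + 1) t) := by
      apply continuous_finset_sum
      intro i _
      exact continuous_const.mul (continuous_fm _ (Nat.succ_pos _))
    have heq : (fun t : ℝ => ∑ i : Fin n, c i * fm (2/β) ((i : ℕ) + 1) t) = 0 :=
      (Continuous.ae_eq_iff_eq volume hcont continuous_const).1 hae
    have hzero : ∀ t : ℝ, ∑ i : Fin n, c i * fm (2/β) ((i : ℕ) + 1) t = 0 :=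
      fun t => congrFun heq t
    exact indep ha0 c hzero
end

section
/- Define g : (0,∞) → ℝ by g(t) = 1/(1+t) for 0 < t < 1 and g(t) = −1/(t(1+t)) for t ≥ 1. Then g ∈ L¹((0,∞);ℝ), g is not zero almost everywhere, and for every j, k ∈ ℤ one has ∫₀^∞ g(t)·exp(2πijt) dt = 0 and ∫₀^∞ g(t)·exp(2πik/t) dt = 0. -/
open MeasureTheory Real Set Filter

namespace Stmt13Aux

noncomputable def G (t : ℝ) : ℝ := if t < 1 then 1 / (1 + t) else -(1 / (t * (1 + t)))

noncomputable def E (j : ℤ) (t : ℝ) : ℂ := Complex.exp (Complex.I * ((2 * π * j * t : ℝ) : ℂ))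

lemma G_meas : Measurable G := by
  apply Measurable.ite measurableSet_Iio
  · exact (measurable_const.div ((measurable_const.add measurable_id)))
  · exact (measurable_const.div ((measurable_id.mul (measurable_const.add measurable_id)))).neg

lemma norm_E (j : ℤ) (t : ℝ) : ‖E j t‖ = 1 := by
  simp [E, Complex.norm_exp, Complex.mul_re]

lemma E_cont (j : ℤ) : Continuous (E j) := by
  unfold E; fun_prop

lemma E_add_int (j : ℤ) (t : ℝ) (n : ℤ) : E j (t + n) = E j t := by
  have : Complex.I * ((2 * π * j * (t + n) : ℝ) : ℂ)
      = Complex.I * ((2 * π * j * t : ℝ) : ℂ) + (j * n : ℤ) * (2 * π * Complex.I) := by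
    push_cast; ring
  rw [E, this, Complex.exp_add, Complex.exp_int_mul_two_pi_mul_I, mul_one, E]

lemma telesc {t : ℝ} (ht : 0 ≤ t) :
    HasSum (fun n : ℕ => 1 / ((t + 1 + n) * (t + 2 + n))) (1 / (t + 1)) := by
  have hpos : ∀ n : ℕ, (0:ℝ) < t + 1 + n := fun n => by positivity
  have key : ∀ n : ℕ, 1 / ((t + 1 + n) * (t + 2 + n))
      = (fun i : ℕ => 1 / (t + 1 + i)) n - (fun i : ℕ => 1 / (t + 1 + i)) (n + 1) := by
    intro n
    have h1 := (hpos n).ne'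
    simp only []
    push_cast
    rw [div_sub_div _ _ h1 (by positivity)]
    have e1 : t + 1 + ((n:ℝ) + 1) = t + 2 + n := by ring
    rw [e1]
    congr 1
    ring
  have hnn : ∀ n : ℕ, (0:ℝ) ≤ 1 / ((t + 1 + n) * (t + 2 + n)) := fun n => by positivity
  apply (hasSum_iff_tendsto_nat_of_nonneg hnn _).mpr
  have hps : ∀ n : ℕ, (∑ i ∈ Finset.range n, 1 / ((t + 1 + i) * (t + 2 + i)))
      = 1 / (t + 1 + (0:ℕ)) - 1 / (t + 1 + n) := by
    intro n
    rw [Finset.sum_congr rfl (fun i _ => key i)]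
    exact Finset.sum_range_sub' (fun i : ℕ => 1 / (t + 1 + i)) n
  simp only [hps]
  have h0 : Tendsto (fun n:ℕ => (n:ℝ)) atTop atTop := tendsto_natCast_atTop_atTop
  have h1 : Tendsto (fun n:ℕ => t+1+(n:ℝ)) atTop atTop := tendsto_atTop_add_const_left _ _ h0
  have h2 := (h1.inv_tendsto_atTop).const_sub (1 / (t + 1 + ((0:ℕ):ℝ)))
  simp only [one_div]
  convert h2 using 2 <;> simp

lemma intG : IntegrableOn G (Ioi 0) := by
  have h1 : IntegrableOn G (Ioc 0 1) := by
    apply Measure.integrableOn_of_bounded (M := 1) (by simp) G_meas.aestronglyMeasurable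
    filter_upwards [ae_restrict_mem measurableSet_Ioc] with t ht
    obtain ⟨ht0, ht1⟩ := ht
    rw [G]
    split_ifs with h
    · rw [Real.norm_eq_abs, abs_of_nonneg (by positivity)]
      rw [div_le_one (by positivity)]
      linarith
    · rw [Real.norm_eq_abs, abs_neg, abs_of_nonneg (by positivity)]
      rw [div_le_one (by positivity)]
      nlinarith
  have h2 : IntegrableOn G (Ioi 1) := by
    apply Integrable.mono' (g := fun t : ℝ => t ^ (-2 : ℝ))
      (integrableOn_Ioi_rpow_of_lt (by norm_num) one_pos) G_meas.aestronglyMeasurable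
    filter_upwards [ae_restrict_mem measurableSet_Ioi] with t ht
    have ht1 : (1:ℝ) < t := ht
    have ht0 : (0:ℝ) < t := by linarith
    have hr : t ^ (-2:ℝ) = (t*t)⁻¹ := by
      rw [show (-2:ℝ) = -((2:ℕ):ℝ) by norm_num, Real.rpow_neg ht0.le, Real.rpow_natCast, sq]
    rw [hr, G, if_neg (by linarith), Real.norm_eq_abs, abs_neg,
      abs_of_nonneg (by positivity), one_div]
    gcongr
    · nlinarith
    all_goals nlinarith
  have := h1.union h2
  rwa [Ioc_union_Ioi_eq_Ioi zero_le_one] at this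

lemma intF (j : ℤ) : IntegrableOn (fun t => (G t : ℂ) * E j t) (Ioi 0) := by
  apply Integrable.mono' (g := fun t => ‖G t‖) intG.norm
  · exact ((Complex.measurable_ofReal.comp G_meas).mul (E_cont j).measurable).aestronglyMeasurable
  · filter_upwards with t
    rw [norm_mul, norm_E, mul_one, Complex.norm_real]

lemma key (j : ℤ) : ∫ t in Ioi (0:ℝ), (G t : ℂ) * E j t = 0 := by
  set F : ℝ → ℂ := fun t => (G t : ℂ) * E j t with hF
  set A : ℂ := ∫ t in Ioc (0:ℝ) 1, ((1/(1+t) : ℝ) : ℂ) * E j t with hA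
  -- split the integral
  have hsplit : ∫ t in Ioi (0:ℝ), F t
      = (∫ t in Ioc (0:ℝ) 1, F t) + ∫ t in Ioi (1:ℝ), F t := by
    rw [← setIntegral_union (Ioc_disjoint_Ioi le_rfl) measurableSet_Ioi
      ((intF j).mono_set Ioc_subset_Ioi_self) ((intF j).mono_set (Ioi_subset_Ioi zero_le_one)),
      Ioc_union_Ioi_eq_Ioi zero_le_one]
  -- first piece equals A
  have hfirst : ∫ t in Ioc (0:ℝ) 1, F t = A := by
    rw [hA, integral_Ioc_eq_integral_Ioo, integral_Ioc_eq_integral_Ioo]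
    apply setIntegral_congr_fun measurableSet_Ioo
    intro t ht
    simp only [hF, G, if_pos ht.2]
  -- the union decomposition of (1, ∞)
  set S : ℕ → Set ℝ := fun n => Ioc (1 + (n:ℝ)) (1 + (n:ℝ) + 1) with hS
  have hSm : ∀ n, MeasurableSet (S n) := fun n => measurableSet_Ioc
  have hU : (⋃ n, S n) = Ioi (1:ℝ) := by
    ext x
    simp only [mem_iUnion, hS, mem_Ioc, mem_Ioi]
    constructor
    · rintro ⟨n, h1, h2⟩
      have : (0:ℝ) ≤ n := Nat.cast_nonneg n
      linarith
    · intro hx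
      have hx0 : (0:ℝ) ≤ x := by linarith
      have h2 : 2 ≤ ⌈x⌉₊ := by
        have h1 : (1:ℝ) < ⌈x⌉₊ := lt_of_lt_of_le hx (Nat.le_ceil x)
        exact_mod_cast Nat.succ_le_of_lt (by exact_mod_cast h1)
      have hcast : ((⌈x⌉₊ - 2 : ℕ) : ℝ) = (⌈x⌉₊ : ℝ) - 2 := by
        push_cast [h2]
        ring
      refine ⟨⌈x⌉₊ - 2, ?_, ?_⟩
      · rw [hcast]
        have := Nat.ceil_lt_add_one hx0
        linarith
      · rw [hcast]
        have := Nat.le_ceil x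
        linarith
  have hdisj : Pairwise (Function.onFun Disjoint S) := by
    intro m n hmn
    simp only [Function.onFun, hS]
    apply Set.disjoint_left.mpr
    rintro x ⟨hm1, hm2⟩ ⟨hn1, hn2⟩
    apply hmn
    have h1 : (m:ℝ) < n + 1 := by linarith
    have h2 : (n:ℝ) < m + 1 := by linarith
    have h1' : m < n + 1 := by exact_mod_cast h1
    have h2' : n < m + 1 := by exact_mod_cast h2
    omega
  have hB : ∫ t in Ioi (1:ℝ), F t = ∑' n, ∫ t in S n, F t := by
    rw [← hU]
    exact integral_iUnion hSm hdisj (hU ▸ (intF j).mono_set (Ioi_subset_Ioi zero_le_one))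
  -- compute each piece
  have hpiece : ∀ n : ℕ, ∫ t in S n, F t
      = -∫ t in Ioc (0:ℝ) 1, ((1/((t+1+n)*(t+2+n)) : ℝ) : ℂ) * E j t := by
    intro n
    have h1 : ∫ t in S n, F t = ∫ t in (1+(n:ℝ))..(1+(n:ℝ)+1), F t := by
      rw [intervalIntegral.integral_of_le (by linarith)]
    have h2 : ∫ t in (0:ℝ)..1, F (t + (1+(n:ℝ))) = ∫ t in (1+(n:ℝ))..(1+(n:ℝ)+1), F t := by
      have := intervalIntegral.integral_comp_add_right (a := (0:ℝ)) (b := 1) F (1+(n:ℝ))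
      rw [this]
      congr 1 <;> ring
    have h3 : ∫ t in (0:ℝ)..1, F (t + (1+(n:ℝ)))
        = ∫ t in (0:ℝ)..1, -(((1/((t+1+n)*(t+2+n)) : ℝ) : ℂ) * E j t) := by
      apply intervalIntegral.integral_congr
      intro t ht
      rw [uIcc_of_le zero_le_one] at ht
      obtain ⟨ht0, ht1⟩ := ht
      have hE : E j (t + (1+(n:ℝ))) = E j t := by
        have : (1+(n:ℝ)) = ((1 + n : ℤ) : ℝ) := by push_cast; ring
        rw [this, E_add_int]
      have hG : G (t + (1+(n:ℝ))) = -(1/((t+1+n)*(t+2+n))) := by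
        rw [G, if_neg (by push_cast; nlinarith [Nat.cast_nonneg (α := ℝ) n])]
        have : (t + (1+(n:ℝ))) * (1 + (t + (1+(n:ℝ)))) = (t+1+n)*(t+2+n) := by ring
        rw [show t + (1+(n:ℝ)) = t+1+n by ring]
        congr 2
        ring
      simp only [hF, hE, hG]
      push_cast
      ring
    rw [h1, ← h2, h3, intervalIntegral.integral_neg, intervalIntegral.integral_of_le zero_le_one]
  -- the summed pieces
  set H : ℕ → ℝ → ℂ := fun n t => ((1/((t+1+n)*(t+2+n)) : ℝ) : ℂ) * E j t with hH
  set c : ℕ → ℝ := fun n => 1/((1+(n:ℝ))*(2+(n:ℝ))) with hc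
  have hcsum : Summable c := by
    have h := (telesc (t := 0) le_rfl).summable
    apply h.congr
    intro n
    simp [hc]
  have hHint : ∀ n : ℕ, IntegrableOn (H n) (Ioc (0:ℝ) 1) := by
    intro n
    apply (ContinuousOn.integrableOn_Icc ?_).mono_set Ioc_subset_Icc_self
    apply ContinuousOn.mul
    · apply Continuous.comp_continuousOn Complex.continuous_ofReal
      apply ContinuousOn.div continuousOn_const
      · fun_prop
      · intro t ht
        have h1 : (0:ℝ) < t+1+n := by
          have := Nat.cast_nonneg (α := ℝ) n
          have := ht.1
          linarith
        have h2 : (0:ℝ) < t+2+n := by linarith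
        exact ne_of_gt (mul_pos h1 h2)
    · exact (E_cont j).continuousOn
  have hnormint : ∀ n : ℕ, (∫ t in Ioc (0:ℝ) 1, ‖H n t‖) ≤ c n := by
    intro n
    have hle : ∀ t ∈ Ioc (0:ℝ) 1, ‖H n t‖ ≤ c n := by
      intro t ht
      have hn0 : (0:ℝ) ≤ n := Nat.cast_nonneg n
      have h1 : (0:ℝ) < t+1+n := by linarith [ht.1]
      have h2 : (0:ℝ) < t+2+n := by linarith [ht.1]
      rw [hH]
      simp only []
      rw [norm_mul, norm_E, mul_one, Complex.norm_real, Real.norm_eq_abs,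
        abs_of_nonneg (by positivity)]
      rw [hc]
      simp only []
      apply one_div_le_one_div_of_le (by positivity)
      nlinarith [ht.1, hn0, mul_nonneg ht.1.le hn0]
    calc (∫ t in Ioc (0:ℝ) 1, ‖H n t‖) ≤ ∫ _ in Ioc (0:ℝ) 1, c n := by
          apply setIntegral_mono_on (hHint n).norm (integrableOn_const (by simp))
            measurableSet_Ioc hle
      _ = c n := by simp
  have hsummable : Summable (fun n => ∫ t in Ioc (0:ℝ) 1, ‖H n t‖) :=
    Summable.of_nonneg_of_le (fun n => integral_nonneg (fun t => norm_nonneg _)) hnormint hcsum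
  have hswap := integral_tsum_of_summable_integral_norm
      (μ := volume.restrict (Ioc (0:ℝ) 1)) (F := H) (fun n => hHint n) hsummable
  have hts : ∀ t ∈ Ioc (0:ℝ) 1, (∑' n, H n t) = ((1/(1+t) : ℝ) : ℂ) * E j t := by
    intro t ht
    have h := telesc ht.1.le
    have h2 : HasSum (fun n : ℕ => ((1/((t+1+n)*(t+2+n)) : ℝ) : ℂ)) ((1/(t+1) : ℝ) : ℂ) :=
      Complex.hasSum_ofReal.mpr h
    have h3 := h2.mul_right (E j t)
    rw [hH]
    rw [h3.tsum_eq]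
    rw [show t + 1 = 1 + t by ring]
  have hBA : ∫ t in Ioi (1:ℝ), F t = -A := by
    rw [hB, tsum_congr hpiece, tsum_neg]
    congr 1
    rw [hswap, setIntegral_congr_fun measurableSet_Ioc hts]
  rw [hsplit, hfirst, hBA, add_neg_cancel]

lemma Ginv {x : ℝ} (hx : 0 < x) (hx1 : x ≠ 1) : (x*x)⁻¹ * G x⁻¹ = - G x := by
  have hx0 : x ≠ 0 := hx.ne'
  have h1x : (0:ℝ) < 1 + x := by linarith
  rcases lt_or_gt_of_ne hx1 with h | h
  · have hinv : 1 < x⁻¹ := (one_lt_inv₀ hx).mpr h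
    rw [G, G, if_neg (by linarith), if_pos h]
    field_simp
    ring
  · have hinv : x⁻¹ < 1 := (inv_lt_one₀ hx).mpr h
    rw [G, G, if_pos hinv, if_neg (by linarith)]
    field_simp
    ring

lemma key2 (k : ℤ) :
    ∫ t in Ioi (0:ℝ), (G t : ℂ) * Complex.exp (Complex.I * ((2 * π * k / t : ℝ) : ℂ)) = 0 := by
  have hsub := integral_comp_rpow_Ioi (fun u => (G u : ℂ) * E k u) (p := -1) (by norm_num)
  rw [key k] at hsub
  have hne : ∀ᵐ x : ℝ, x ≠ 1 := by
    rw [ae_iff]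
    have : {a : ℝ | ¬ a ≠ 1} = {1} := by ext a; simp
    rw [this]
    exact measure_singleton 1
  have hcongr : (∫ x in Ioi (0:ℝ),
        (|(-1:ℝ)| * x ^ ((-1:ℝ) - 1)) • ((G (x ^ (-1:ℝ)) : ℂ) * E k (x ^ (-1:ℝ))))
      = ∫ x in Ioi (0:ℝ),
        -((G x : ℂ) * Complex.exp (Complex.I * ((2 * π * k / x : ℝ) : ℂ))) := by
    apply setIntegral_congr_ae measurableSet_Ioi
    filter_upwards [hne] with x hx1 hx
    have hx0 : (0:ℝ) < x := hx
    have hrinv : x ^ (-1:ℝ) = x⁻¹ := Real.rpow_neg_one x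
    have hr2 : x ^ ((-1:ℝ) - 1) = (x*x)⁻¹ := by
      rw [show ((-1:ℝ) - 1) = -((2:ℕ):ℝ) by norm_num, Real.rpow_neg hx0.le,
        Real.rpow_natCast, sq]
    have hEeq : E k x⁻¹ = Complex.exp (Complex.I * ((2 * π * k / x : ℝ) : ℂ)) := by
      rw [E, div_eq_mul_inv]
    rw [hrinv, hr2, hEeq, abs_neg, abs_one, one_mul, Complex.real_smul]
    rw [show ((((x*x)⁻¹ : ℝ)) : ℂ) * ((G x⁻¹ : ℂ) * Complex.exp (Complex.I * ((2 * π * k / x : ℝ) : ℂ)))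
      = ((((x*x)⁻¹ * G x⁻¹ : ℝ)) : ℂ) * Complex.exp (Complex.I * ((2 * π * k / x : ℝ) : ℂ)) by
        push_cast; ring]
    rw [Ginv hx0 hx1]
    push_cast
    ring
  rw [hcongr, integral_neg] at hsub
  exact neg_eq_zero.mp hsub

end Stmt13Aux

open Stmt13Aux in
/-- The defect measure density `g(t) = 1/(1+t)` on `(0,1)` and `g(t) = −1/(t(1+t))`
on `[1,∞)` is a nonzero integrable function on `(0,∞)` annihilating all the
exponentials `e^{2πijt}` and `e^{2πik/t}`, `j, k ∈ ℤ`. -/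
theorem stmt13 (g : ℝ → ℝ)
    (hg : ∀ t : ℝ, 0 < t → g t = if t < 1 then 1 / (1 + t) else -(1 / (t * (1 + t)))) :
    IntegrableOn g (Set.Ioi 0) ∧
    ¬ (g =ᵐ[volume.restrict (Set.Ioi 0)] 0) ∧
    (∀ j : ℤ, ∫ t in Set.Ioi (0 : ℝ),
      (g t : ℂ) * Complex.exp (Complex.I * ((2 * π * j * t : ℝ) : ℂ)) = 0) ∧
    (∀ k : ℤ, ∫ t in Set.Ioi (0 : ℝ),
      (g t : ℂ) * Complex.exp (Complex.I * ((2 * π * k / t : ℝ) : ℂ)) = 0) := by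
  have hEq : EqOn G g (Set.Ioi 0) := by
    intro t ht
    rw [hg t ht, G]
  refine ⟨intG.congr_fun hEq measurableSet_Ioi, ?_, ?_, ?_⟩
  · intro h
    have h2 : ∀ᵐ t ∂(volume.restrict (Set.Ioi (0:ℝ))), g t = 0 := h
    have h3 := (ae_restrict_iff' measurableSet_Ioi).mp h2
    have h4 : volume (Set.Ioo (0:ℝ) 1) = 0 := by
      apply measure_mono_null ?_ (ae_iff.mp h3)
      intro t ht
      simp only [Set.mem_setOf_eq, not_forall]
      refine ⟨ht.1, ?_⟩
      rw [hg t ht.1, if_pos ht.2]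
      have h1t : (0:ℝ) < 1 + t := by linarith [ht.1]
      exact ne_of_gt (div_pos one_pos h1t)
    rw [Real.volume_Ioo] at h4
    norm_num at h4
  · intro j
    rw [setIntegral_congr_fun measurableSet_Ioi
      (show EqOn (fun t => (g t : ℂ) * Complex.exp (Complex.I * ((2 * π * j * t : ℝ) : ℂ)))
        (fun t => (G t : ℂ) * E j t) (Set.Ioi 0) from fun t ht => by
          simp only [hEq ht, E])]
    exact key j
  · intro k
    rw [setIntegral_congr_fun measurableSet_Ioi
      (show EqOn (fun t => (g t : ℂ) * Complex.exp (Complex.I * ((2 * π * k / t : ℝ) : ℂ)))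
        (fun t => (G t : ℂ) * Complex.exp (Complex.I * ((2 * π * k / t : ℝ) : ℂ))) (Set.Ioi 0)
        from fun t ht => by simp only [hEq ht])]
    exact key2 k
end

section
/- Define g : (0,∞) → ℝ by g(t) = 1/(1+t) for 0 < t < 1 and g(t) = −1/(t(1+t)) for t ≥ 1. Then for every real x with x ∉ ℤ, one has ∫₀^∞ g(t)·exp(2πixt) dt ≠ 0. -/
open MeasureTheory Real Filter Set

noncomputable section Aux15

/-- The oscillating exponential. -/
private def E15 (a t : ℝ) : ℂ := Complex.exp (Complex.I * a * t)

private lemma E15_eq (a t : ℝ) : E15 a t = Complex.exp (((a * t : ℝ) : ℂ) * Complex.I) := by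
  unfold E15; push_cast; ring_nf

private lemma E15_norm (a t : ℝ) : ‖E15 a t‖ = 1 := by
  rw [E15_eq]; exact Complex.norm_exp_ofReal_mul_I _

private lemma E15_re (a t : ℝ) : (E15 a t).re = Real.cos (a * t) := by
  rw [E15_eq]; exact Complex.exp_ofReal_mul_I_re _

private lemma E15_cont (a : ℝ) : Continuous (E15 a) :=
  Complex.continuous_exp.comp (continuous_const.mul Complex.continuous_ofReal)

private lemma E15_deriv (a t : ℝ) : HasDerivAt (E15 a) (Complex.I * a * E15 a t) t := by
  have h1 : HasDerivAt (fun s : ℝ => Complex.I * a * s) (Complex.I * a) t := by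
    simpa using ((hasDerivAt_id t).ofReal_comp).const_mul (Complex.I * (a : ℂ))
  have := h1.cexp
  unfold E15
  convert this using 1
  ring

private lemma E15_add (a t s : ℝ) : E15 a (t + s) = E15 a t * E15 a s := by
  unfold E15; push_cast; rw [mul_add, Complex.exp_add]

/-- Integrability and value of `∫_{0}^{∞} (1+t)⁻² dt = 1`. -/
private lemma int_inv_sq :
    IntegrableOn (fun t : ℝ => ((1 + t) ^ 2)⁻¹) (Ioi (0 : ℝ)) ∧
      ∫ t in Ioi (0 : ℝ), ((1 + t) ^ 2)⁻¹ = 1 := by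
  have hderiv : ∀ t ∈ Ici (0 : ℝ), HasDerivAt (fun s : ℝ => -(1 + s)⁻¹)
      (((1 + t) ^ 2)⁻¹) t := by
    intro t ht
    have h0 : (1 : ℝ) + t ≠ 0 := by
      have : (0:ℝ) ≤ t := ht
      nlinarith
    have := (((hasDerivAt_id t).const_add 1).inv h0).neg
    refine this.congr_deriv ?_
    simp [neg_div]
  have hpos : ∀ t ∈ Ioi (0 : ℝ), 0 ≤ ((1 + t) ^ 2)⁻¹ := by
    intro t ht; positivity
  have hlim : Tendsto (fun s : ℝ => -(1 + s)⁻¹) atTop (nhds 0) := by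
    have : Tendsto (fun s : ℝ => (1 + s)⁻¹) atTop (nhds 0) :=
      (tendsto_atTop_add_const_left atTop 1 tendsto_id).inv_tendsto_atTop
    simpa using this.neg
  refine ⟨integrableOn_Ioi_deriv_of_nonneg' hderiv hpos hlim, ?_⟩
  have := integral_Ioi_of_hasDerivAt_of_nonneg' hderiv hpos hlim
  simpa using this


/-- `Ψ(t) = e^{iat}/(1+t)`. -/
private def Psi15 (a t : ℝ) : ℂ := (((1 + t)⁻¹ : ℝ) : ℂ) * E15 a t

/-- `Φ(t) = e^{iat}/(1+t)²`. -/
private def Phi15 (a t : ℝ) : ℂ := ((((1 + t) ^ 2)⁻¹ : ℝ) : ℂ) * E15 a t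

/-- The integrand of the statement, in explicit form. -/
private def f015 (a t : ℝ) : ℂ :=
  ((if t < 1 then 1 / (1 + t) else -(1 / (t * (1 + t))) : ℝ) : ℂ) * E15 a t

private lemma Psi15_contOn (a : ℝ) : ContinuousOn (Psi15 a) (Ici (0:ℝ)) := by
  refine ContinuousOn.mul ?_ (E15_cont a).continuousOn
  refine Complex.continuous_ofReal.comp_continuousOn ?_
  refine ((continuous_const.add continuous_id).continuousOn).inv₀ fun t ht => ?_
  have : (0:ℝ) ≤ t := ht
  intro h; simp only [Pi.add_apply, Pi.pow_apply, id_eq] at h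
  nlinarith

private lemma Phi15_contOn (a : ℝ) : ContinuousOn (Phi15 a) (Ici (0:ℝ)) := by
  refine ContinuousOn.mul ?_ (E15_cont a).continuousOn
  refine Complex.continuous_ofReal.comp_continuousOn ?_
  refine (((continuous_const.add continuous_id).pow 2).continuousOn).inv₀ fun t ht => ?_
  have : (0:ℝ) ≤ t := ht
  intro h; simp only [Pi.add_apply, Pi.pow_apply, id_eq] at h
  nlinarith

private lemma Phi15_integrableOn (a : ℝ) : IntegrableOn (Phi15 a) (Ioi (0:ℝ)) := by
  refine Integrable.mono' int_inv_sq.1 ?_ (Filter.Eventually.of_forall fun t => ?_)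
  · exact ((Complex.measurable_ofReal.comp
      (((measurable_const.add measurable_id).pow_const 2).inv)).mul
      (E15_cont a).measurable).aestronglyMeasurable
  · have : ‖Phi15 a t‖ = |((1 + t) ^ 2)⁻¹| := by
      rw [Phi15, norm_mul, E15_norm, mul_one, Complex.norm_real, Real.norm_eq_abs]
    rw [this]
    exact le_of_eq (abs_of_nonneg (by positivity))

private lemma f015_integrableOn (a : ℝ) : IntegrableOn (f015 a) (Ioi (0:ℝ)) := by
  refine Integrable.mono' (int_inv_sq.1.const_mul 2) ?_ ?_
  · refine Measurable.aestronglyMeasurable ?_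
    refine (Complex.measurable_ofReal.comp ?_).mul (E15_cont a).measurable
    refine Measurable.ite (measurableSet_lt measurable_id measurable_const) ?_ ?_
    · exact measurable_const.div (measurable_const.add measurable_id)
    · exact (measurable_const.div (measurable_id.mul (measurable_const.add measurable_id))).neg
  · rw [ae_restrict_iff' measurableSet_Ioi]
    refine Filter.Eventually.of_forall fun t ht => ?_
    have ht0 : (0:ℝ) < t := ht
    have h1t : (0:ℝ) < 1 + t := by linarith
    have hnorm : ‖f015 a t‖ = |(if t < 1 then 1 / (1 + t) else -(1 / (t * (1 + t))) : ℝ)| := by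
      rw [f015, norm_mul, E15_norm, mul_one, Complex.norm_real, Real.norm_eq_abs]
    rw [hnorm]
    by_cases hlt : t < 1
    · rw [if_pos hlt, abs_of_nonneg (by positivity)]
      rw [show (2:ℝ) * ((1 + t) ^ 2)⁻¹ = 2 / ((1+t)^2) by rw [div_eq_mul_inv]]
      rw [div_le_div_iff₀ h1t (by positivity)]
      nlinarith
    · push_neg at hlt
      rw [if_neg (not_lt.2 hlt), abs_neg, abs_of_nonneg (by positivity)]
      rw [show (2:ℝ) * ((1 + t) ^ 2)⁻¹ = 2 / ((1+t)^2) by rw [div_eq_mul_inv]]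
      rw [div_le_div_iff₀ (by positivity) (by positivity)]
      nlinarith

private lemma Psi15_hasDeriv (a : ℝ) {t : ℝ} (ht : 0 ≤ t) :
    HasDerivAt (Psi15 a) (Complex.I * a * Psi15 a t - Phi15 a t) t := by
  have h0 : (1:ℝ) + t ≠ 0 := by nlinarith
  have h1 : HasDerivAt (fun s : ℝ => (((1 + s)⁻¹ : ℝ) : ℂ))
      ((-(((1 + t) ^ 2)⁻¹) : ℝ) : ℂ) t := by
    have := (((hasDerivAt_id t).const_add 1).inv h0).ofReal_comp
    simp only [id_eq] at this
    convert this using 1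
    · rfl
    push_cast
    rw [div_eq_mul_inv]
    ring
  have := h1.mul (E15_deriv a t)
  have heq : ((-(((1 + t) ^ 2)⁻¹) : ℝ) : ℂ) * E15 a t
      + (((1 + t)⁻¹ : ℝ) : ℂ) * (Complex.I * a * E15 a t)
      = Complex.I * a * Psi15 a t - Phi15 a t := by
    rw [Psi15, Phi15]
    push_cast
    ring
  rw [heq] at this
  exact this

private lemma key_ftc (a : ℝ) {R : ℝ} (hR : 0 ≤ R) :
    (Complex.I * a) * ∫ t in (0:ℝ)..R, Psi15 a t =
      (∫ t in (0:ℝ)..R, Phi15 a t) - 1 + (((1 + R)⁻¹ : ℝ) : ℂ) * E15 a R := by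
  have huIcc : uIcc (0:ℝ) R = Icc 0 R := uIcc_of_le hR
  have hsub : uIcc (0:ℝ) R ⊆ Ici (0:ℝ) := by rw [huIcc]; exact Icc_subset_Ici_self
  have hPsiInt : IntervalIntegrable (Psi15 a) volume 0 R :=
    ((Psi15_contOn a).mono hsub).intervalIntegrable
  have hPhiInt : IntervalIntegrable (Phi15 a) volume 0 R :=
    ((Phi15_contOn a).mono hsub).intervalIntegrable
  have hderiv : ∀ t ∈ uIcc (0:ℝ) R,
      HasDerivAt (Psi15 a) (Complex.I * a * Psi15 a t - Phi15 a t) t := by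
    intro t htm
    exact Psi15_hasDeriv a (hsub htm).out
  have hint : IntervalIntegrable (fun t => Complex.I * a * Psi15 a t - Phi15 a t)
      volume 0 R := (hPsiInt.const_mul _).sub hPhiInt
  have hFTC := intervalIntegral.integral_eq_sub_of_hasDerivAt hderiv hint
  have hsplit : ∫ t in (0:ℝ)..R, (Complex.I * a * Psi15 a t - Phi15 a t)
      = (Complex.I * a) * (∫ t in (0:ℝ)..R, Psi15 a t) - ∫ t in (0:ℝ)..R, Phi15 a t := by
    rw [intervalIntegral.integral_sub (hPsiInt.const_mul _) hPhiInt,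
      intervalIntegral.integral_const_mul]
  rw [hsplit] at hFTC
  have h0 : Psi15 a 0 = 1 := by
    simp [Psi15, E15]
  have hRv : Psi15 a R = (((1 + R)⁻¹ : ℝ) : ℂ) * E15 a R := rfl
  rw [h0, hRv] at hFTC
  linear_combination hFTC

private lemma key_split (a : ℝ) {R : ℝ} (hR : 1 ≤ R) :
    ∫ t in (0:ℝ)..R, f015 a t = (∫ t in (0:ℝ)..R, Psi15 a t)
      - Complex.exp (Complex.I * a) * ∫ t in (0:ℝ)..(R - 1), Psi15 a t := by
  have hR0 : (0:ℝ) ≤ R := le_trans zero_le_one hR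
  have hPsiII : ∀ {c d : ℝ}, 0 ≤ c → 0 ≤ d → IntervalIntegrable (Psi15 a) volume c d := by
    intro c d hc hd
    refine ((Psi15_contOn a).mono ?_).intervalIntegrable
    intro t htm
    exact le_trans (le_min hc hd) htm.1
  have hf01 : IntervalIntegrable (f015 a) volume 0 1 :=
    (intervalIntegrable_iff_integrableOn_Ioc_of_le zero_le_one).2
      ((f015_integrableOn a).mono_set Ioc_subset_Ioi_self)
  have hf1R : IntervalIntegrable (f015 a) volume 1 R :=
    (intervalIntegrable_iff_integrableOn_Ioc_of_le hR).2
      ((f015_integrableOn a).mono_set (fun t ht => lt_trans zero_lt_one ht.1))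
  have hInv1R : IntervalIntegrable (fun t : ℝ => ((t⁻¹ : ℝ) : ℂ) * E15 a t) volume 1 R := by
    refine ContinuousOn.intervalIntegrable (ContinuousOn.mul ?_ (E15_cont a).continuousOn)
    refine Complex.continuous_ofReal.comp_continuousOn (continuousOn_id.inv₀ fun t htm => ?_)
    have h1 : min (1:ℝ) R ≤ t := htm.1
    rw [min_eq_left hR] at h1
    exact ne_of_gt (lt_of_lt_of_le zero_lt_one h1)
  -- (b) on [0,1] the integrands agree a.e.
  have h01 : ∫ t in (0:ℝ)..1, f015 a t = ∫ t in (0:ℝ)..1, Psi15 a t := by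
    apply intervalIntegral.integral_congr_ae
    have hne : ∀ᵐ t : ℝ, t ≠ (1:ℝ) := by
      rw [ae_iff]
      simp only [ne_eq, not_not, setOf_eq_eq_singleton]
      exact measure_singleton 1
    filter_upwards [hne] with t ht1 htm
    rw [Set.uIoc_of_le zero_le_one] at htm
    have hlt : t < 1 := lt_of_le_of_ne htm.2 ht1
    simp only [f015, Psi15, if_pos hlt, one_div]
  -- (c) on [1,R] split by partial fractions
  have h1R : ∫ t in (1:ℝ)..R, f015 a t = (∫ t in (1:ℝ)..R, Psi15 a t)
      - ∫ t in (1:ℝ)..R, ((t⁻¹ : ℝ) : ℂ) * E15 a t := by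
    have hq : EqOn (f015 a) (fun t => Psi15 a t - ((t⁻¹ : ℝ) : ℂ) * E15 a t) (uIcc 1 R) := by
      intro t htm
      have ht1 : (1:ℝ) ≤ t := by
        have := htm.1
        rwa [min_eq_left hR] at this
      have ht0 : (0:ℝ) < t := lt_of_lt_of_le zero_lt_one ht1
      have h1t : (0:ℝ) < 1 + t := by linarith
      simp only [f015, Psi15, if_neg (not_lt.2 ht1)]
      have hpf : -(1 / (t * (1 + t))) = (1 + t)⁻¹ - t⁻¹ := by
        field_simp
        ring
      rw [hpf]
      push_cast
      ring
    rw [intervalIntegral.integral_congr hq]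
    exact intervalIntegral.integral_sub (hPsiII zero_le_one hR0) hInv1R
  -- (d) translation by 1
  have hshift : ∫ t in (1:ℝ)..R, ((t⁻¹ : ℝ) : ℂ) * E15 a t
      = Complex.exp (Complex.I * a) * ∫ t in (0:ℝ)..(R - 1), Psi15 a t := by
    have htr := intervalIntegral.integral_comp_add_right
      (a := (0:ℝ)) (b := R - 1) (fun t : ℝ => ((t⁻¹ : ℝ) : ℂ) * E15 a t) 1
    simp only [zero_add, sub_add_cancel] at htr
    rw [← htr]
    have heq : EqOn (fun u : ℝ => (((u + 1)⁻¹ : ℝ) : ℂ) * E15 a (u + 1))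
        (fun u : ℝ => Complex.exp (Complex.I * a) * Psi15 a u) (uIcc 0 (R - 1)) := by
      intro u _
      simp only
      rw [E15_add a u 1]
      have h1 : E15 a 1 = Complex.exp (Complex.I * a) := by
        simp [E15]
      rw [h1, add_comm u 1]
      simp only [Psi15]
      ring
    rw [intervalIntegral.integral_congr heq, intervalIntegral.integral_const_mul]
  -- (e) assemble
  have hadjf : (∫ t in (0:ℝ)..1, f015 a t) + ∫ t in (1:ℝ)..R, f015 a t
      = ∫ t in (0:ℝ)..R, f015 a t :=
    intervalIntegral.integral_add_adjacent_intervals hf01 hf1R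
  have hadjP : (∫ t in (0:ℝ)..1, Psi15 a t) + ∫ t in (1:ℝ)..R, Psi15 a t
      = ∫ t in (0:ℝ)..R, Psi15 a t :=
    intervalIntegral.integral_add_adjacent_intervals (hPsiII le_rfl zero_le_one)
      (hPsiII zero_le_one hR0)
  linear_combination hadjP - hadjf + h01 + h1R - hshift


private lemma Phi15_re (a t : ℝ) : (Phi15 a t).re = ((1 + t) ^ 2)⁻¹ * Real.cos (a * t) := by
  rw [Phi15, Complex.re_ofReal_mul, E15_re]

private lemma J_ne_one (a : ℝ) (ha : a ≠ 0) : (∫ t in Ioi (0:ℝ), Phi15 a t) ≠ 1 := by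
  have hre_int : IntegrableOn (fun t => ((1 + t) ^ 2)⁻¹ * Real.cos (a * t)) (Ioi (0:ℝ)) := by
    refine ((Phi15_integrableOn a).re).congr (Filter.Eventually.of_forall fun t => ?_)
    simpa using (Phi15_re a t)
  have hre : (∫ t in Ioi (0:ℝ), Phi15 a t).re
      = ∫ t in Ioi (0:ℝ), ((1 + t) ^ 2)⁻¹ * Real.cos (a * t) := by
    rw [show (∫ t in Ioi (0:ℝ), Phi15 a t).re
        = RCLike.re (∫ t in Ioi (0:ℝ), Phi15 a t) from rfl,
      ← integral_re (Phi15_integrableOn a)]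
    refine integral_congr_ae (Filter.Eventually.of_forall fun t => ?_)
    simpa using (Phi15_re a t)
  -- the defect function
  set q : ℝ → ℝ := fun t => ((1 + t) ^ 2)⁻¹ - ((1 + t) ^ 2)⁻¹ * Real.cos (a * t) with hq_def
  have hq_int : IntegrableOn q (Ioi (0:ℝ)) := int_inv_sq.1.sub hre_int
  have hnn : ∀ t : ℝ, 0 ≤ q t := by
    intro t
    have h1 : (0:ℝ) ≤ ((1 + t) ^ 2)⁻¹ := by positivity
    have h2 := Real.cos_le_one (a * t)
    simp only [hq_def]
    nlinarith
  set b : ℝ := |a| with hb_def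
  have hb : 0 < b := abs_pos.2 ha
  set c : ℝ := π / 2 / b with hc_def
  set d : ℝ := (π + π / 2) / b with hd_def
  have hc0 : 0 < c := by positivity
  have hcd : c < d := by
    rw [hc_def, hd_def, div_lt_div_iff₀ hb hb]
    nlinarith [pi_pos, hb]
  have hsub : Ioc c d ⊆ Ioi (0:ℝ) := fun t ht => lt_trans hc0 ht.1
  have hqpos : ∀ t ∈ Ioo c d, 0 < q t := by
    intro t ht
    have ht0 : 0 < t := lt_trans hc0 ht.1
    have hbt1 : π / 2 ≤ b * t := by
      have := ht.1
      rw [hc_def, div_lt_iff₀ hb] at this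
      linarith [this]
    have hbt2 : b * t ≤ π + π / 2 := by
      have := ht.2
      rw [hd_def, lt_div_iff₀ hb] at this
      linarith [this]
    have hcos : Real.cos (a * t) ≤ 0 := by
      have habs : Real.cos (a * t) = Real.cos (b * t) := by
        rw [← Real.cos_abs (a * t), abs_mul, abs_of_pos ht0, hb_def]
      rw [habs]
      exact Real.cos_nonpos_of_pi_div_two_le_of_le hbt1 hbt2
    have h1 : (0:ℝ) < ((1 + t) ^ 2)⁻¹ := by positivity
    simp only [hq_def]
    nlinarith
  have hpos : 0 < ∫ t in Ioc c d, q t := by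
    rw [← intervalIntegral.integral_of_le hcd.le]
    refine intervalIntegral.intervalIntegral_pos_of_pos_on ?_ hqpos hcd
    exact (intervalIntegrable_iff_integrableOn_Ioc_of_le hcd.le).2 (hq_int.mono_set hsub)
  have hmono : (∫ t in Ioc c d, q t) ≤ ∫ t in Ioi (0:ℝ), q t :=
    setIntegral_mono_set hq_int (Filter.Eventually.of_forall fun t => hnn t)
      (HasSubset.Subset.eventuallyLE hsub)
  have hqval : (∫ t in Ioi (0:ℝ), q t)
      = 1 - ∫ t in Ioi (0:ℝ), ((1 + t) ^ 2)⁻¹ * Real.cos (a * t) := by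
    rw [hq_def]
    rw [integral_sub int_inv_sq.1 hre_int, int_inv_sq.2]
  intro hJ
  rw [hJ] at hre
  simp only [Complex.one_re] at hre
  rw [← hre] at hqval
  rw [hqval] at hmono
  linarith [hpos, hmono]

private theorem key15 (a : ℝ) (ha : a ≠ 0) (he : Complex.exp (Complex.I * a) ≠ 1) :
    (∫ t in Ioi (0:ℝ), f015 a t) ≠ 0 := by
  have hz : (Complex.I * (a:ℂ)) ≠ 0 := mul_ne_zero Complex.I_ne_zero (Complex.ofReal_ne_zero.2 ha)
  set z : ℂ := Complex.I * a with hz_def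
  set e : ℂ := Complex.exp z with he_def
  set F : ℂ := ∫ t in Ioi (0:ℝ), f015 a t with hF_def
  set J : ℂ := ∫ t in Ioi (0:ℝ), Phi15 a t with hJ_def
  have hF_lim : Tendsto (fun R : ℝ => ∫ t in (0:ℝ)..R, f015 a t) atTop (nhds F) :=
    intervalIntegral_tendsto_integral_Ioi 0 (f015_integrableOn a) tendsto_id
  have hJ_lim : Tendsto (fun R : ℝ => ∫ t in (0:ℝ)..R, Phi15 a t) atTop (nhds J) :=
    intervalIntegral_tendsto_integral_Ioi 0 (Phi15_integrableOn a) tendsto_id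
  have hsub_top : Tendsto (fun R : ℝ => R - 1) atTop atTop := by
    simpa [sub_eq_add_neg] using tendsto_atTop_add_const_right atTop (-1) (tendsto_id (α := ℝ))
  have hJ_lim' : Tendsto (fun R : ℝ => ∫ t in (0:ℝ)..(R - 1), Phi15 a t) atTop (nhds J) :=
    hJ_lim.comp hsub_top
  have hbd : Tendsto (fun R : ℝ => (((1 + R)⁻¹ : ℝ) : ℂ) * E15 a R) atTop (nhds 0) := by
    have hinv : Tendsto (fun R : ℝ => (1 + R)⁻¹) atTop (nhds 0) :=
      (tendsto_atTop_add_const_left atTop 1 tendsto_id).inv_tendsto_atTop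
    refine squeeze_zero_norm (fun R => ?_) (by simpa using hinv.abs)
    rw [norm_mul, E15_norm, mul_one, Complex.norm_real, Real.norm_eq_abs]
    exact (abs_inv _).le
  have hbd' : Tendsto (fun R : ℝ => (((1 + (R - 1))⁻¹ : ℝ) : ℂ) * E15 a (R - 1))
      atTop (nhds 0) := hbd.comp hsub_top
  have hmain : ∀ R : ℝ, 1 ≤ R →
      z * ∫ t in (0:ℝ)..R, f015 a t
        = ((∫ t in (0:ℝ)..R, Phi15 a t) - 1 + (((1 + R)⁻¹ : ℝ) : ℂ) * E15 a R)
          - e * ((∫ t in (0:ℝ)..(R - 1), Phi15 a t) - 1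
            + (((1 + (R - 1))⁻¹ : ℝ) : ℂ) * E15 a (R - 1)) := by
    intro R hR
    have h1 := key_ftc a (le_trans zero_le_one hR)
    have h2 := key_ftc a (by linarith : (0:ℝ) ≤ R - 1)
    have h3 := key_split a hR
    rw [← hz_def] at h1 h2
    rw [← hz_def, ← he_def] at h3
    linear_combination h1 - e * h2 + z * h3
  have hev : (fun R : ℝ => z * ∫ t in (0:ℝ)..R, f015 a t) =ᶠ[atTop]
      (fun R : ℝ => ((∫ t in (0:ℝ)..R, Phi15 a t) - 1 + (((1 + R)⁻¹ : ℝ) : ℂ) * E15 a R)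
        - e * ((∫ t in (0:ℝ)..(R - 1), Phi15 a t) - 1
          + (((1 + (R - 1))⁻¹ : ℝ) : ℂ) * E15 a (R - 1))) := by
    filter_upwards [eventually_ge_atTop (1:ℝ)] with R hR
    exact hmain R hR
  have hlhs : Tendsto (fun R : ℝ => z * ∫ t in (0:ℝ)..R, f015 a t) atTop (nhds (z * F)) :=
    hF_lim.const_mul z
  have hrhs := (((hJ_lim.sub_const 1).add hbd).sub
    (((hJ_lim'.sub_const 1).add hbd').const_mul e))
  have heq : z * F = (J - 1 + 0) - e * (J - 1 + 0) :=
    tendsto_nhds_unique (Filter.Tendsto.congr' hev hlhs) hrhs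
  have heq' : z * F = (1 - e) * (J - 1) := by linear_combination heq
  have hJne : J - 1 ≠ 0 := sub_ne_zero.2 (by rw [hJ_def]; exact J_ne_one a ha)
  have h1e : (1:ℂ) - e ≠ 0 := sub_ne_zero.2 (Ne.symm he)
  intro h0
  apply mul_ne_zero h1e hJne
  rw [← heq', h0, mul_zero]

end Aux15

/-- The Fourier transform of the defect density `g` (with `g(t) = 1/(1+t)` on
`(0,1)` and `g(t) = −1/(t(1+t))` on `[1,∞)`) does not vanish at any non-integer
point: `∫₀^∞ g(t) e^{2πixt} dt ≠ 0` for all real `x ∉ ℤ`. -/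
theorem stmt15 (g : ℝ → ℝ)
    (hg : ∀ t : ℝ, 0 < t → g t = if t < 1 then 1 / (1 + t) else -(1 / (t * (1 + t))))
    (x : ℝ) (hx : ∀ n : ℤ, x ≠ (n : ℝ)) :
    ∫ t in Set.Ioi (0 : ℝ),
      (g t : ℂ) * Complex.exp (Complex.I * ((2 * π * x * t : ℝ) : ℂ)) ≠ 0 := by
  set a : ℝ := 2 * π * x with ha_def
  have ha : a ≠ 0 := by
    have hx0 : x ≠ 0 := by simpa using hx 0
    exact mul_ne_zero (mul_ne_zero two_ne_zero Real.pi_ne_zero) hx0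
  have he : Complex.exp (Complex.I * a) ≠ 1 := by
    intro h
    rw [Complex.exp_eq_one_iff] at h
    obtain ⟨n, hn⟩ := h
    have h3 : Complex.I * (a : ℂ) = Complex.I * ((2 * π * n : ℝ) : ℂ) := by
      rw [hn]; push_cast; ring
    have h2 : (a : ℂ) = ((2 * π * n : ℝ) : ℂ) := mul_left_cancel₀ Complex.I_ne_zero h3
    have h4 : a = 2 * π * n := by exact_mod_cast h2
    have h5 : x = n := by
      rw [ha_def] at h4
      exact mul_left_cancel₀ (mul_ne_zero two_ne_zero Real.pi_ne_zero)
        (by linarith [h4] : 2 * π * x = 2 * π * (n : ℝ))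
    exact hx n h5
  have hcongr : (∫ t in Set.Ioi (0:ℝ),
        (g t : ℂ) * Complex.exp (Complex.I * ((2 * π * x * t : ℝ) : ℂ)))
      = ∫ t in Set.Ioi (0:ℝ), f015 a t := by
    refine setIntegral_congr_fun measurableSet_Ioi fun t ht => ?_
    rw [hg t ht]
    simp only [f015, E15]
    congr 2
    rw [ha_def]
    push_cast
    ring
  rw [hcongr]
  exact key15 a ha he
end

section
/- For every x > 0, the improper integrals c(x) = lim_{R→∞} ∫_x^R (cos y)/y dy and s(x) = lim_{R→∞} ∫_x^R (sin y)/y dy both exist as finite limits, and (c(x), s(x)) ≠ (0, 0); that is, c(x) and s(x) do not vanish simultaneously. -/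
open MeasureTheory Real Filter Set

lemma sici_contG (g G : ℝ → ℝ) (hG : ∀ y, HasDerivAt G (g y) y) : Continuous G := by
  have : Differentiable ℝ G := fun y => (hG y).differentiableAt
  exact this.continuous

/-- Integration by parts identity for `∫ y in x..R, g y / y`. -/
lemma sici_ibp (g G : ℝ → ℝ) (hg : Continuous g)
    (hG : ∀ y, HasDerivAt G (g y) y) {x R : ℝ} (hx : 0 < x) (hxR : x ≤ R) :
    ∫ y in x..R, g y / y =
      G R / R - G x / x + ∫ y in x..R, G y / y ^ 2 := by
  have hGc : Continuous G := sici_contG g G hG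
  have hsub : Set.uIcc x R ⊆ {y : ℝ | y ≠ 0} := by
    rw [Set.uIcc_of_le hxR]
    intro y hy
    exact ne_of_gt (lt_of_lt_of_le hx hy.1)
  have hderiv : ∀ y ∈ Set.uIcc x R,
      HasDerivAt (fun y => G y / y) (g y / y - G y / y ^ 2) y := by
    intro y hy
    have hy0 : y ≠ 0 := hsub hy
    have h : HasDerivAt (fun y => G y / y) ((g y * y - G y * 1) / y ^ 2) y :=
      (hG y).div (hasDerivAt_id y) hy0
    convert h using 1
    field_simp
  have hcont1 : ContinuousOn (fun y => g y / y - G y / y ^ 2) (Set.uIcc x R) := by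
    apply ContinuousOn.sub
    · exact hg.continuousOn.div continuousOn_id (fun y hy => hsub hy)
    · exact hGc.continuousOn.div (continuousOn_pow 2) (fun y hy => pow_ne_zero 2 (hsub hy))
  have hcont2 : ContinuousOn (fun y => G y / y ^ 2) (Set.uIcc x R) :=
    hGc.continuousOn.div (continuousOn_pow 2) (fun y hy => pow_ne_zero 2 (hsub hy))
  have hint1 : IntervalIntegrable (fun y => g y / y - G y / y ^ 2) volume x R :=
    hcont1.intervalIntegrable
  have hint2 : IntervalIntegrable (fun y => G y / y ^ 2) volume x R :=
    hcont2.intervalIntegrable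
  have key := intervalIntegral.integral_eq_sub_of_hasDerivAt hderiv hint1
  have : (fun y => g y / y) = fun y => (g y / y - G y / y ^ 2) + G y / y ^ 2 := by
    funext y; ring
  rw [this, intervalIntegral.integral_add hint1 hint2, key]

lemma sici_integrableOn (g G : ℝ → ℝ) (hG : ∀ y, HasDerivAt G (g y) y)
    (hGb : ∀ y, |G y| ≤ 2) {x : ℝ} (hx : 0 < x) :
    IntegrableOn (fun y => G y / y ^ 2) (Set.Ioi x) := by
  have hGc : Continuous G := sici_contG g G hG
  have hbound : IntegrableOn (fun y : ℝ => 2 * y ^ (-2 : ℝ)) (Set.Ioi x) :=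
    (integrableOn_Ioi_rpow_of_lt (by norm_num) hx).const_mul 2
  refine hbound.mono' ?_ ?_
  · exact (hGc.measurable.div (measurable_id.pow_const 2)).aestronglyMeasurable
  · filter_upwards [ae_restrict_mem measurableSet_Ioi] with y hy
    have hy0 : 0 < y := lt_trans hx hy
    rw [Real.norm_eq_abs, abs_div, Real.rpow_neg hy0.le]
    rw [abs_of_pos (pow_pos hy0 2)]
    have : y ^ (2 : ℝ) = y ^ 2 := by
      rw [show (2:ℝ) = (2:ℕ) by norm_num, Real.rpow_natCast]
    rw [this]
    rw [div_le_iff₀ (pow_pos hy0 2), mul_assoc, inv_mul_cancel₀ (ne_of_gt (pow_pos hy0 2)),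
      mul_one]
    exact hGb y

/-- The improper integral `∫ y in x..R, g y / y` converges. -/
lemma sici_tendsto (g G : ℝ → ℝ) (hg : Continuous g)
    (hG : ∀ y, HasDerivAt G (g y) y) (hGb : ∀ y, |G y| ≤ 2) {x : ℝ} (hx : 0 < x) :
    Tendsto (fun R : ℝ => ∫ y in x..R, g y / y) atTop
      (nhds ((∫ y in Set.Ioi x, G y / y ^ 2) - G x / x)) := by
  have hIoi := sici_integrableOn g G hG hGb hx
  have h1 : Tendsto (fun R : ℝ => ∫ y in x..R, G y / y ^ 2) atTop
      (nhds (∫ y in Set.Ioi x, G y / y ^ 2)) :=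
    intervalIntegral_tendsto_integral_Ioi x hIoi tendsto_id
  have h2 : Tendsto (fun R : ℝ => G R / R) atTop (nhds 0) := by
    have hb : ∀ᶠ R in atTop, ‖G R / R‖ ≤ 2 / R := by
      filter_upwards [eventually_gt_atTop 0] with R hR
      rw [Real.norm_eq_abs, abs_div, abs_of_pos hR, div_le_div_iff_of_pos_right hR]
      exact hGb R
    have h0 : Tendsto (fun R : ℝ => 2 / R) atTop (nhds 0) := by
      simpa [div_eq_mul_inv] using (tendsto_inv_atTop_zero (𝕜 := ℝ)).const_mul 2
    exact squeeze_zero_norm' hb h0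
  have h3 : Tendsto (fun R : ℝ => G R / R - G x / x + ∫ y in x..R, G y / y ^ 2) atTop
      (nhds (0 - G x / x + ∫ y in Set.Ioi x, G y / y ^ 2)) :=
    (h2.sub tendsto_const_nhds).add h1
  rw [show (0 : ℝ) - G x / x + ∫ y in Set.Ioi x, G y / y ^ 2
      = (∫ y in Set.Ioi x, G y / y ^ 2) - G x / x by ring] at h3
  refine h3.congr' ?_
  filter_upwards [eventually_ge_atTop x] with R hR
  exact (sici_ibp g G hg hG hx hR).symm

/-- For every `x > 0` the improper integrals `c(x) = ∫_x^∞ (cos y)/y dy` and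
`s(x) = ∫_x^∞ (sin y)/y dy` exist as finite limits and do not vanish
simultaneously: the Nielsen (sici) spiral never passes through the origin. -/
theorem stmt16 (x : ℝ) (hx : 0 < x) :
    ∃ c s : ℝ,
      Tendsto (fun R : ℝ => ∫ y in x..R, Real.cos y / y) atTop (nhds c) ∧
      Tendsto (fun R : ℝ => ∫ y in x..R, Real.sin y / y) atTop (nhds s) ∧
      ¬ (c = 0 ∧ s = 0) := by
  -- existence via integration by parts
  have hcos : ∀ y : ℝ, HasDerivAt Real.sin (Real.cos y) y := Real.hasDerivAt_sin
  have hsin : ∀ y : ℝ, HasDerivAt (fun y => 1 - Real.cos y) (Real.sin y) y := by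
    intro y
    simpa using ((Real.hasDerivAt_cos y).const_sub 1)
  have hsinb : ∀ y : ℝ, |Real.sin y| ≤ 2 := fun y => (Real.abs_sin_le_one y).trans one_le_two
  have hcosb : ∀ y : ℝ, |1 - Real.cos y| ≤ 2 := by
    intro y
    rw [abs_le]
    constructor <;> nlinarith [Real.neg_one_le_cos y, Real.cos_le_one y]
  set c := (∫ y in Set.Ioi x, Real.sin y / y ^ 2) - Real.sin x / x with hc
  set s := (∫ y in Set.Ioi x, (1 - Real.cos y) / y ^ 2) - (1 - Real.cos x) / x with hs
  have hct : Tendsto (fun R : ℝ => ∫ y in x..R, Real.cos y / y) atTop (nhds c) :=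
    sici_tendsto Real.cos Real.sin Real.continuous_cos hcos hsinb hx
  have hst : Tendsto (fun R : ℝ => ∫ y in x..R, Real.sin y / y) atTop (nhds s) :=
    sici_tendsto Real.sin (fun y => 1 - Real.cos y) Real.continuous_sin hsin hcosb hx
  refine ⟨c, s, hct, hst, ?_⟩
  rintro ⟨hc0, hs0⟩
  -- shifted integral: ∫ sin (y - x) / y
  have hgx : Continuous (fun y : ℝ => Real.sin (y - x)) :=
    Real.continuous_sin.comp (continuous_id.sub continuous_const)
  have hGx : ∀ y : ℝ, HasDerivAt (fun y => 1 - Real.cos (y - x)) (Real.sin (y - x)) y := by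
    intro y
    have h1 : HasDerivAt (fun y : ℝ => y - x) 1 y := (hasDerivAt_id y).sub_const x
    have h2 := (Real.hasDerivAt_cos (y - x)).comp y h1
    simpa using h2.const_sub 1
  have hGxb : ∀ y : ℝ, |1 - Real.cos (y - x)| ≤ 2 := fun y => hcosb (y - x)
  have hshift : Tendsto (fun R : ℝ => ∫ y in x..R, Real.sin (y - x) / y) atTop
      (nhds ((∫ y in Set.Ioi x, (1 - Real.cos (y - x)) / y ^ 2) - (1 - Real.cos (x - x)) / x)) :=
    sici_tendsto _ _ hgx hGx hGxb hx
  rw [sub_self, Real.cos_zero, sub_self, zero_div, sub_zero] at hshift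
  -- the shifted integral tends to cos x * s - sin x * c = 0
  have hcomb : Tendsto (fun R : ℝ => ∫ y in x..R, Real.sin (y - x) / y) atTop
      (nhds (Real.cos x * s - Real.sin x * c)) := by
    have h := (hst.const_mul (Real.cos x)).sub (hct.const_mul (Real.sin x))
    refine h.congr' ?_
    filter_upwards [eventually_ge_atTop x] with R hR
    have hsub0 : ∀ y ∈ Set.uIcc x R, y ≠ 0 := by
      rw [Set.uIcc_of_le hR]
      intro y hy
      exact ne_of_gt (lt_of_lt_of_le hx hy.1)
    have hi1 : IntervalIntegrable (fun y => Real.sin y / y) volume x R :=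
      (Real.continuous_sin.continuousOn.div continuousOn_id hsub0).intervalIntegrable
    have hi2 : IntervalIntegrable (fun y => Real.cos y / y) volume x R :=
      (Real.continuous_cos.continuousOn.div continuousOn_id hsub0).intervalIntegrable
    rw [← intervalIntegral.integral_const_mul, ← intervalIntegral.integral_const_mul,
      ← intervalIntegral.integral_sub (hi1.const_mul _) (hi2.const_mul _)]
    congr 1
    funext y
    rw [Real.sin_sub]
    ring
  have huniq : Real.cos x * s - Real.sin x * c
      = ∫ y in Set.Ioi x, (1 - Real.cos (y - x)) / y ^ 2 :=
    tendsto_nhds_unique hcomb hshift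
  rw [hc0, hs0, mul_zero, mul_zero, sub_zero] at huniq
  -- but that integral is strictly positive
  have hpos : 0 < ∫ y in Set.Ioi x, (1 - Real.cos (y - x)) / y ^ 2 := by
    have hint := sici_integrableOn _ _ hGx hGxb hx
    have hnn : 0 ≤ᵐ[volume.restrict (Set.Ioi x)]
        fun y => (1 - Real.cos (y - x)) / y ^ 2 := by
      filter_upwards [ae_restrict_mem measurableSet_Ioi] with y hy
      have hy0 : 0 < y := lt_trans hx hy
      apply div_nonneg _ (pow_pos hy0 2).le
      nlinarith [Real.cos_le_one (y - x)]
    rw [setIntegral_pos_iff_support_of_nonneg_ae hnn hint]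
    have hsubset : Set.Ioo (x + 1) (x + 2) ⊆
        (Function.support fun y => (1 - Real.cos (y - x)) / y ^ 2) ∩ Set.Ioi x := by
      intro y hy
      have hy0 : 0 < y := by
        have := hy.1; linarith
      constructor
      · have h1 : Real.cos (y - x) < 1 := by
          have : Real.cos (y - x) < Real.cos 0 := by
            apply Real.cos_lt_cos_of_nonneg_of_le_pi le_rfl
            · have := hy.2
              have hπ : (3 : ℝ) < π := by
                have := Real.pi_gt_d6
                linarith
              linarith
            · linarith [hy.1]
          simpa using this
        simp only [Function.mem_support]
        apply div_ne_zero
        · linarith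
        · exact ne_of_gt (pow_pos hy0 2)
      · exact Set.mem_Ioi.mpr (by linarith [hy.1])
    calc (0 : ENNReal) < volume (Set.Ioo (x + 1) (x + 2)) := by
          rw [Real.volume_Ioo]
          rw [ENNReal.ofReal_pos]
          linarith
      _ ≤ _ := measure_mono hsubset
  rw [← huniq] at hpos
  exact lt_irrefl 0 hpos
end

section
/- Let ν be a finite complex Borel measure on ℝ with |ν|({0}) = 0. If ∫_ℝ exp(iπξ₁t) dν(t) = 0 for every ξ₁ > 0 and ∫_ℝ exp(iπξ₂/t) dν(t) = 0 for every ξ₂ > 0, then ν = 0. -/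
open MeasureTheory Real
open Set Filter
open scoped Topology ENNReal NNReal


lemma integral_cexp_Ioi (c : ℂ) (hc : c.re < 0) :
    ∫ ξ in Ioi (0:ℝ), Complex.exp (c * ξ) = -c⁻¹ := by
  have hc0 : c ≠ 0 := fun h => by simp [h] at hc
  have hInt : IntegrableOn (fun ξ : ℝ => Complex.exp (c * ξ)) (Ioi 0) := by
    have : IntegrableOn (fun ξ : ℝ => Real.exp (-(-c.re) * ξ)) (Ioi 0) :=
      exp_neg_integrableOn_Ioi 0 (by linarith)
    refine this.congr' ?_ ?_
    · exact (Complex.continuous_exp.comp (continuous_const.mul Complex.continuous_ofReal)).aestronglyMeasurable.restrict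
    · refine Eventually.of_forall fun ξ => ?_
      simp [Complex.norm_exp, neg_neg]
  have key := integral_Ioi_of_hasDerivAt_of_tendsto
    (f := fun ξ : ℝ => c⁻¹ * Complex.exp (c * ξ)) (f' := fun ξ : ℝ => Complex.exp (c * ξ))
    (a := (0:ℝ)) (m := 0) ?_ ?_ hInt ?_
  · simpa using key
  · exact (Continuous.continuousWithinAt (by continuity))
  · intro x hx
    have : HasDerivAt (fun ξ : ℝ => Complex.exp (c * ξ)) (c * Complex.exp (c * x)) x := by
      have h1 : HasDerivAt (fun ξ : ℝ => c * (ξ:ℂ)) c x := by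
        simpa using (Complex.ofRealCLM.hasDerivAt (x := x)).const_mul c
      simpa [mul_comm, Function.comp_def] using (Complex.hasDerivAt_exp (c * x)).comp x h1
    have h3 := this.const_mul c⁻¹
    have : c⁻¹ * (c * Complex.exp (c * x)) = Complex.exp (c * x) := by
      field_simp
    rw [this] at h3; exact h3
  · rw [tendsto_zero_iff_norm_tendsto_zero]
    have : (fun ξ : ℝ => ‖c⁻¹ * Complex.exp (c * ξ)‖) = fun ξ : ℝ => ‖c⁻¹‖ * Real.exp (c.re * ξ) := by
      funext ξ; simp [Complex.norm_exp]
    rw [this]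
    have h2 : Tendsto (fun ξ : ℝ => c.re * ξ) atTop atBot :=
      Tendsto.const_mul_atTop_of_neg hc tendsto_id
    simpa using (Real.tendsto_exp_atBot.comp h2).const_mul ‖c⁻¹‖

lemma key_cauchy (ρ : Measure ℝ) [IsFiniteMeasure ρ] (h : ℝ → ℂ) (hint : Integrable h ρ)
    (k : ℝ → ℝ) (hk : Measurable k) (w : ℂ) (hw : w.im < 0)
    (H : ∀ ξ : ℝ, 0 < ξ → ∫ t, Complex.exp (Complex.I * ((π * ξ * k t : ℝ) : ℂ)) * h t ∂ρ = 0) :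
    ∫ t, (((k t : ℝ) : ℂ) - w)⁻¹ * h t ∂ρ = 0 := by
  set c : ℝ → ℂ := fun t => Complex.I * π * (((k t : ℝ) : ℂ) - w) with hc
  have hcre : ∀ t, (c t).re = π * w.im := by
    intro t
    simp [hc, Complex.mul_re, Complex.mul_im]
  have hcre_neg : ∀ t, (c t).re < 0 := fun t => by
    rw [hcre t]; exact mul_neg_of_pos_of_neg pi_pos hw
  have hc_ne : ∀ t, c t ≠ 0 := fun t h0 => by
    have := hcre_neg t; rw [h0] at this; simp at this
  -- the double-integral function
  set f : ℝ → ℝ → ℂ := fun ξ t => Complex.exp (c t * ξ) * h t with hf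
  have hswap : Integrable (Function.uncurry f) ((volume.restrict (Ioi (0:ℝ))).prod ρ) := by
    constructor
    · apply AEStronglyMeasurable.mul
      · refine (Measurable.aestronglyMeasurable ?_)
        exact Complex.measurable_exp.comp
          (((measurable_const.mul ((Complex.measurable_ofReal.comp (hk.comp measurable_snd)).sub
            measurable_const)).mul (Complex.measurable_ofReal.comp measurable_fst)))
      · exact hint.1.comp_snd
    · have hb : Integrable (fun p : ℝ × ℝ => Real.exp (π * w.im * p.1) * ‖h p.2‖)
          ((volume.restrict (Ioi (0:ℝ))).prod ρ) := by
        have h1 : Integrable (fun ξ : ℝ => Real.exp (π * w.im * ξ)) (volume.restrict (Ioi (0:ℝ))) := by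
          have hlt : (0:ℝ) < -(π * w.im) := by nlinarith [pi_pos]
          have := exp_neg_integrableOn_Ioi (0:ℝ) hlt
          exact this.congr_fun (fun x _ => by ring_nf) measurableSet_Ioi
        exact h1.mul_prod hint.norm
      refine HasFiniteIntegral.mono' hb.2 ?_
      refine Eventually.of_forall fun p => ?_
      have : ‖Function.uncurry f p‖ = Real.exp ((c p.2).re * p.1) * ‖h p.2‖ := by
        simp [Function.uncurry, hf, Complex.norm_exp, Complex.mul_re,
          Complex.ofReal_re, Complex.ofReal_im, norm_mul]
      rw [this, hcre p.2]
  -- inner ξ-integral identity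
  have hinner : ∀ t, ∫ ξ in Ioi (0:ℝ), f ξ t = -(c t)⁻¹ * h t := by
    intro t
    rw [hf]
    simp only
    rw [integral_mul_const, integral_cexp_Ioi (c t) (hcre_neg t)]
  -- the main integrand in terms of inner integrals
  have hpt : ∀ t, (((k t : ℝ) : ℂ) - w)⁻¹ * h t
      = (-(Complex.I * π)) * (-(c t)⁻¹ * h t) := by
    intro t
    have hIπ : (Complex.I * (π:ℂ)) ≠ 0 := by
      simp [Complex.ext_iff, pi_ne_zero]
    have hz : (((k t : ℝ) : ℂ) - w) ≠ 0 := by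
      intro h0
      have := hc_ne t; rw [hc] at this; simp [h0] at this
    field_simp [hc]
    ring
  calc ∫ t, (((k t : ℝ) : ℂ) - w)⁻¹ * h t ∂ρ
      = ∫ t, (-(Complex.I * π)) * (-(c t)⁻¹ * h t) ∂ρ := by
        exact integral_congr_ae (Eventually.of_forall fun t => hpt t)
    _ = (-(Complex.I * π)) * ∫ t, (-(c t)⁻¹ * h t) ∂ρ := integral_const_mul _ _
    _ = (-(Complex.I * π)) * ∫ t, (∫ ξ in Ioi (0:ℝ), f ξ t) ∂ρ := by
        congr 1
        exact integral_congr_ae (Eventually.of_forall fun t => (hinner t).symm)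
    _ = (-(Complex.I * π)) * ∫ ξ in Ioi (0:ℝ), (∫ t, f ξ t ∂ρ) := by
        rw [integral_integral_swap hswap]
    _ = 0 := by
        rw [setIntegral_congr_fun measurableSet_Ioi (g := fun _ => (0:ℂ)) ?_]
        · simp
        · intro ξ hξ
          have hsplit : ∀ t, f ξ t
              = Complex.exp (-(Complex.I * π * w) * ξ) *
                (Complex.exp (Complex.I * ((π * ξ * k t : ℝ) : ℂ)) * h t) := by
            intro t
            have harg : c t * ξ = -(Complex.I * π * w) * ξ + Complex.I * ((π * ξ * k t : ℝ) : ℂ) := by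
              rw [hc]; push_cast; ring
            rw [hf]
            simp only
            rw [harg, Complex.exp_add]
            ring
          simp only [hsplit]
          rw [integral_const_mul, H ξ hξ, mul_zero]

lemma ofReal_sub_ne (t : ℝ) {w : ℂ} (hw : w.im ≠ 0) : ((t : ℂ) - w) ≠ 0 := by
  intro hc
  have := congrArg Complex.im hc
  simp at this
  exact hw this

lemma integrable_kernel (ρ : Measure ℝ) [IsFiniteMeasure ρ] (h : ℝ → ℂ) (hint : Integrable h ρ)
    {w : ℂ} (hw : w.im ≠ 0) :
    Integrable (fun t : ℝ => ((t : ℂ) - w)⁻¹ * h t) ρ := by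
  refine hint.bdd_mul (c := |w.im|⁻¹) ?_ (Eventually.of_forall fun t => ?_)
  · refine Continuous.aestronglyMeasurable ?_
    exact (Complex.continuous_ofReal.sub continuous_const).inv₀ (fun t => ofReal_sub_ne t hw)
  · rw [norm_inv]
    refine inv_anti₀ (abs_pos.mpr hw) ?_
    have h1 : |((t : ℂ) - w).im| ≤ ‖(t : ℂ) - w‖ := by
      simpa using Complex.abs_im_le_norm ((t : ℂ) - w)
    simpa using h1

lemma total_mass (ρ : Measure ℝ) [IsFiniteMeasure ρ] (h : ℝ → ℂ) (hint : Integrable h ρ)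
    (h1 : ∀ ξ₁ : ℝ, 0 < ξ₁ →
      ∫ t : ℝ, Complex.exp (Complex.I * ((π * ξ₁ * t : ℝ) : ℂ)) * h t ∂ρ = 0) :
    ∫ t, h t ∂ρ = 0 := by
  have hseq : ∀ n : ℕ, ∫ t : ℝ, Complex.exp (Complex.I * ((π * (1/(n+1)) * t : ℝ) : ℂ)) * h t ∂ρ = 0 := by
    intro n
    exact h1 _ (by positivity)
  have htend : Tendsto (fun n : ℕ => ∫ t : ℝ,
      Complex.exp (Complex.I * ((π * (1/(n+1)) * t : ℝ) : ℂ)) * h t ∂ρ) atTop (𝓝 (∫ t, h t ∂ρ)) := by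
    refine tendsto_integral_of_dominated_convergence (fun t => ‖h t‖) ?_ hint.norm ?_ ?_
    · intro n
      refine AEStronglyMeasurable.mul ?_ hint.1
      refine Continuous.aestronglyMeasurable ?_
      exact Complex.continuous_exp.comp (continuous_const.mul
        (Complex.continuous_ofReal.comp (by continuity)))
    · intro n
      refine Eventually.of_forall fun t => ?_
      have : ‖Complex.exp (Complex.I * ((π * (1/(n+1)) * t : ℝ) : ℂ))‖ = 1 := by
        simp [Complex.norm_exp, Complex.mul_re]
      rw [norm_mul, this, one_mul]
    · refine Eventually.of_forall fun t => ?_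
      have h2 : Tendsto (fun n : ℕ => (π * (1/(n+1)) * t : ℝ)) atTop (𝓝 0) := by
        have : Tendsto (fun n : ℕ => 1 / ((n : ℝ) + 1)) atTop (𝓝 0) := tendsto_one_div_add_atTop_nhds_zero_nat
        have h3 := (this.const_mul π).mul_const t
        simpa using h3
      have h2c : Tendsto (fun n : ℕ => ((π * (1/(n+1)) * t : ℝ) : ℂ)) atTop (𝓝 ((0:ℝ):ℂ)) :=
        (Complex.continuous_ofReal.tendsto _).comp h2
      have h4 : Tendsto (fun n : ℕ => Complex.exp (Complex.I * ((π * (1/(n+1)) * t : ℝ) : ℂ)))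
          atTop (𝓝 (Complex.exp (Complex.I * ((0:ℝ):ℂ)))) :=
        (Complex.continuous_exp.tendsto _).comp (h2c.const_mul Complex.I)
      have h5 := h4.mul_const (h t)
      simpa using h5
  have h6 : Tendsto (fun _ : ℕ => (0:ℂ)) atTop (𝓝 (∫ t, h t ∂ρ)) := by
    refine htend.congr fun n => ?_
    rw [hseq n]
  exact (tendsto_nhds_unique tendsto_const_nhds h6).symm

lemma cauchy_vanish (ρ : Measure ℝ) [IsFiniteMeasure ρ] (h0 : ρ {0} = 0)
    (h : ℝ → ℂ) (hint : Integrable h ρ)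
    (h1 : ∀ ξ₁ : ℝ, 0 < ξ₁ →
      ∫ t : ℝ, Complex.exp (Complex.I * ((π * ξ₁ * t : ℝ) : ℂ)) * h t ∂ρ = 0)
    (h2 : ∀ ξ₂ : ℝ, 0 < ξ₂ →
      ∫ t : ℝ, Complex.exp (Complex.I * ((π * ξ₂ / t : ℝ) : ℂ)) * h t ∂ρ = 0)
    (w : ℂ) (hw : w.im ≠ 0) :
    ∫ t, ((t : ℂ) - w)⁻¹ * h t ∂ρ = 0 := by
  rcases hw.lt_or_gt with hlt | hgt
  · -- lower half-plane: direct from h1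
    exact key_cauchy ρ h hint id measurable_id w hlt h1
  · -- upper half-plane: via inversion and h2
    have hw0 : w ≠ 0 := fun hc => by simp [hc] at hgt
    set u : ℂ := w⁻¹ with hu
    have hu_im : u.im < 0 := by
      rw [hu, Complex.inv_im]
      have : 0 < Complex.normSq w := Complex.normSq_pos.mpr hw0
      exact div_neg_of_neg_of_pos (neg_neg_iff_pos.mpr hgt) this
    have E0 := key_cauchy ρ h hint (fun t => t⁻¹) measurable_inv u hu_im ?_
    swap
    · intro ξ hξ
      have := h2 ξ hξ
      simpa [div_eq_mul_inv] using this
    -- a.e. rewrite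
    have hae : ∀ᵐ t ∂ρ, t ≠ (0:ℝ) := by
      rw [ae_iff]
      convert h0 using 2
      ext a; simp
    have hzw : ∀ t : ℝ, ((t:ℂ) - w) ≠ 0 := fun t => ofReal_sub_ne t (ne_of_gt hgt)
    have hrw : ∫ t, (((t⁻¹ : ℝ) : ℂ) - u)⁻¹ * h t ∂ρ
        = ∫ t, ((-w) * h t + (-w^2) * (((t:ℂ) - w)⁻¹ * h t)) ∂ρ := by
      refine integral_congr_ae (hae.mono fun t ht => ?_)
      have hz : ((t:ℂ)) ≠ 0 := by exact_mod_cast ht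
      have h1' : (((t⁻¹ : ℝ)) : ℂ) = ((t:ℂ))⁻¹ := by push_cast; ring
      show ((((t⁻¹ : ℝ)) : ℂ) - u)⁻¹ * h t = -w * h t + -w ^ 2 * (((t:ℂ) - w)⁻¹ * h t)
      rw [h1', hu]
      have hzw' : ((t:ℂ) - w) ≠ 0 := hzw t
      have hwt : w - (t:ℂ) ≠ 0 := sub_ne_zero.mpr (sub_ne_zero.mp hzw').symm
      have key : (((t:ℂ))⁻¹ - w⁻¹)⁻¹ = -w - w^2 * (((t:ℂ)) - w)⁻¹ := by
        rw [inv_sub_inv hz hw0, inv_div]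
        field_simp
        ring
      rw [key]
      ring
    rw [hrw, integral_add (hint.const_mul _)
      ((integrable_kernel ρ h hint (ne_of_gt hgt)).const_mul _),
      integral_const_mul, integral_const_mul, total_mass ρ h hint h1] at E0
    have hw2 : (-w^2 : ℂ) ≠ 0 := by simpa using pow_ne_zero 2 hw0
    rw [mul_zero, zero_add] at E0
    exact (mul_eq_zero.mp E0).resolve_left hw2

lemma poisson_vanish (ρ : Measure ℝ) [IsFiniteMeasure ρ] (h0 : ρ {0} = 0)
    (h : ℝ → ℂ) (hint : Integrable h ρ)
    (h1 : ∀ ξ₁ : ℝ, 0 < ξ₁ →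
      ∫ t : ℝ, Complex.exp (Complex.I * ((π * ξ₁ * t : ℝ) : ℂ)) * h t ∂ρ = 0)
    (h2 : ∀ ξ₂ : ℝ, 0 < ξ₂ →
      ∫ t : ℝ, Complex.exp (Complex.I * ((π * ξ₂ / t : ℝ) : ℂ)) * h t ∂ρ = 0)
    (x ε : ℝ) (hε : 0 < ε) :
    ∫ t, ((((t - x)^2 + ε^2 : ℝ)) : ℂ)⁻¹ * h t ∂ρ = 0 := by
  have hw1 : ((x : ℂ) - ε * Complex.I).im ≠ 0 := by simp [hε.ne']
  have hw2 : ((x : ℂ) + ε * Complex.I).im ≠ 0 := by simp [hε.ne']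
  have A1 := cauchy_vanish ρ h0 h hint h1 h2 _ hw1
  have A2 := cauchy_vanish ρ h0 h hint h1 h2 _ hw2
  have hsub : ∫ t, (((t:ℂ) - ((x:ℂ) - ε * Complex.I))⁻¹ * h t
      - ((t:ℂ) - ((x:ℂ) + ε * Complex.I))⁻¹ * h t) ∂ρ = 0 := by
    rw [integral_sub (integrable_kernel ρ h hint hw1) (integrable_kernel ρ h hint hw2), A1, A2,
      sub_zero]
  have hptw : ∀ t : ℝ, ((t:ℂ) - ((x:ℂ) - ε * Complex.I))⁻¹ * h t
      - ((t:ℂ) - ((x:ℂ) + ε * Complex.I))⁻¹ * h t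
      = (-2 * ε * Complex.I) * (((((t - x)^2 + ε^2 : ℝ)) : ℂ)⁻¹ * h t) := by
    intro t
    have ha : ((t:ℂ) - ((x:ℂ) - ε * Complex.I)) ≠ 0 := by
      intro hc; have := congrArg Complex.im hc; simp [hε.ne'] at this
    have hb : ((t:ℂ) - ((x:ℂ) + ε * Complex.I)) ≠ 0 := by
      intro hc; have := congrArg Complex.im hc; simp [hε.ne'] at this
    have hd : ((((t - x)^2 + ε^2 : ℝ)) : ℂ) ≠ 0 := by
      have : (0:ℝ) < (t - x)^2 + ε^2 := by positivity
      exact_mod_cast ne_of_gt this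
    have hde : ((((t - x)^2 + ε^2 : ℝ)) : ℂ)
        = ((t:ℂ) - ((x:ℂ) - ε * Complex.I)) * ((t:ℂ) - ((x:ℂ) + ε * Complex.I)) := by
      push_cast
      ring_nf
      simp [Complex.I_sq]
    rw [hde] at hd ⊢
    field_simp
    ring
  have := hsub
  simp_rw [hptw] at this
  rw [integral_const_mul] at this
  have hc : (-2 * (ε:ℂ) * Complex.I) ≠ 0 := by
    simp [hε.ne']
  exact (mul_eq_zero.mp this).resolve_left hc

lemma integral_reflect {E : Type*} [NormedAddCommGroup E] [NormedSpace ℝ E] (g : ℝ → E) (t : ℝ) :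
    ∫ x : ℝ, g (t - x) = ∫ x : ℝ, g x := by
  calc ∫ x : ℝ, g (t - x) = ∫ x : ℝ, g (t + -x) := by simp_rw [sub_eq_add_neg]
    _ = ∫ x : ℝ, g (t + x) := integral_neg_eq_self (f := fun y => g (t + y)) (μ := volume)
    _ = ∫ x : ℝ, g x := integral_add_left_eq_self (fun y => g y) t

lemma integrable_reflect {E : Type*} [NormedAddCommGroup E] {g : ℝ → E}
    (hg : Integrable g (volume : Measure ℝ)) (t : ℝ) :
    Integrable (fun x : ℝ => g (t - x)) volume :=
  hg.comp_sub_left t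

lemma base_scaled (ε : ℝ) (hε : 0 < ε) :
    ∀ x : ℝ, ((ε * x)^2 + ε^2)⁻¹ = ε⁻¹ * ε⁻¹ * (1 + x^2)⁻¹ := by
  intro x
  have h1 : (ε * x)^2 + ε^2 = ε^2 * (1 + x^2) := by ring
  rw [h1, mul_inv]
  have : (ε^2)⁻¹ = ε⁻¹ * ε⁻¹ := by rw [sq, mul_inv]
  rw [this]

lemma ker_integrable0 (ε : ℝ) (hε : 0 < ε) :
    Integrable (fun x : ℝ => ((x^2 + ε^2)⁻¹ : ℝ)) volume := by
  have hbase : Integrable (fun x : ℝ => ε⁻¹ * ε⁻¹ * (1 + x^2)⁻¹) volume :=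
    (integrable_inv_one_add_sq).const_mul _
  have h2 : Integrable (fun x : ℝ => ((ε * x)^2 + ε^2)⁻¹) volume :=
    hbase.congr (Eventually.of_forall fun x => (base_scaled ε hε x).symm)
  exact (integrable_comp_mul_left_iff (fun x : ℝ => ((x^2 + ε^2)⁻¹ : ℝ)) hε.ne').mp h2

lemma ker_integrable (t ε : ℝ) (hε : 0 < ε) :
    Integrable (fun x : ℝ => (((t - x)^2 + ε^2)⁻¹ : ℝ)) volume :=
  integrable_reflect (ker_integrable0 ε hε) t

lemma ker_integral0 (ε : ℝ) (hε : 0 < ε) :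
    ∫ x : ℝ, ((x^2 + ε^2)⁻¹ : ℝ) = π / ε := by
  have hs := MeasureTheory.Measure.integral_comp_mul_left (fun x : ℝ => ((x^2 + ε^2)⁻¹ : ℝ)) ε
  have h2 : ∫ x : ℝ, (((ε * x)^2 + ε^2)⁻¹ : ℝ) = ε⁻¹ * ε⁻¹ * π := by
    simp_rw [base_scaled ε hε]
    rw [integral_const_mul, integral_univ_inv_one_add_sq]
  rw [h2] at hs
  have habs : |ε⁻¹| = ε⁻¹ := abs_of_pos (by positivity)
  rw [habs, smul_eq_mul] at hs
  have hne : ε ≠ 0 := hε.ne'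
  have h4 := congrArg (fun r : ℝ => ε * r) hs
  calc ∫ x : ℝ, ((x^2 + ε^2)⁻¹ : ℝ)
      = ε * (ε⁻¹ * ∫ y : ℝ, ((y^2 + ε^2)⁻¹ : ℝ)) := by
        rw [← mul_assoc, mul_inv_cancel₀ hne, one_mul]
    _ = ε * (ε⁻¹ * ε⁻¹ * π) := h4.symm
    _ = π / ε := by field_simp

lemma ker_integral (t ε : ℝ) (hε : 0 < ε) :
    ∫ x : ℝ, (((t - x)^2 + ε^2)⁻¹ : ℝ) = π / ε := by
  rw [integral_reflect (fun x : ℝ => ((x^2 + ε^2)⁻¹ : ℝ)) t]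
  exact ker_integral0 ε hε

lemma kerc_integrable (t ε : ℝ) (hε : 0 < ε) :
    Integrable (fun x : ℝ => ((((t - x)^2 + ε^2 : ℝ)) : ℂ)⁻¹) volume := by
  refine ((ker_integrable t ε hε).ofReal (𝕜 := ℂ)).congr (Eventually.of_forall fun x => ?_)
  show ((((t - x)^2 + ε^2)⁻¹ : ℝ) : ℂ) = ((((t - x)^2 + ε^2 : ℝ)) : ℂ)⁻¹
  rw [Complex.ofReal_inv]

lemma kerc_norm (t x ε : ℝ) (hε : 0 < ε) :
    ‖((((t - x)^2 + ε^2 : ℝ)) : ℂ)⁻¹‖ = (((t - x)^2 + ε^2)⁻¹ : ℝ) := by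
  have hpos : (0:ℝ) < (t - x)^2 + ε^2 := by positivity
  rw [norm_inv, Complex.norm_real, Real.norm_eq_abs, abs_of_pos hpos]

lemma fubini_step (ρ : Measure ℝ) [IsFiniteMeasure ρ] (h0 : ρ {0} = 0)
    (h : ℝ → ℂ) (hint : Integrable h ρ)
    (h1 : ∀ ξ₁ : ℝ, 0 < ξ₁ →
      ∫ t : ℝ, Complex.exp (Complex.I * ((π * ξ₁ * t : ℝ) : ℂ)) * h t ∂ρ = 0)
    (h2 : ∀ ξ₂ : ℝ, 0 < ξ₂ →
      ∫ t : ℝ, Complex.exp (Complex.I * ((π * ξ₂ / t : ℝ) : ℂ)) * h t ∂ρ = 0)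
    (φ : ℝ → ℂ) (hφc : Continuous φ) (C : ℝ) (hφb : ∀ x, ‖φ x‖ ≤ C)
    (ε : ℝ) (hε : 0 < ε) :
    ∫ t, (∫ x, φ x * ((((t - x)^2 + ε^2 : ℝ)) : ℂ)⁻¹) * h t ∂ρ = 0 := by
  set F : ℝ × ℝ → ℂ := fun p => φ p.2 * ((((p.1 - p.2)^2 + ε^2 : ℝ)) : ℂ)⁻¹ * h p.1 with hF
  have hkc : Continuous fun p : ℝ × ℝ => ((((p.1 - p.2)^2 + ε^2 : ℝ)) : ℂ)⁻¹ := by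
    refine Continuous.inv₀ (Complex.continuous_ofReal.comp (by fun_prop)) fun p => ?_
    have : (0:ℝ) < (p.1 - p.2)^2 + ε^2 := by positivity
    exact_mod_cast ne_of_gt this
  have hFm : AEStronglyMeasurable F (ρ.prod volume) := by
    refine AEStronglyMeasurable.mul (AEStronglyMeasurable.mul ?_ ?_) ?_
    · exact (hφc.comp continuous_snd).aestronglyMeasurable
    · exact hkc.aestronglyMeasurable
    · exact hint.1.comp_fst
  have hslice : ∀ t : ℝ, Integrable (fun x => F (t, x)) volume := by
    intro t
    refine Integrable.mul_const ?_ (h t)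
    exact (kerc_integrable t ε hε).bdd_mul hφc.aestronglyMeasurable (Eventually.of_forall hφb)
  have hsliceN : ∀ t : ℝ, ∫ x, ‖F (t, x)‖ ≤ C * (π / ε) * ‖h t‖ := by
    intro t
    have hmono : ∫ x, ‖F (t, x)‖ ≤ ∫ x, (C * ‖h t‖) * (((t - x)^2 + ε^2)⁻¹ : ℝ) := by
      refine integral_mono (hslice t).norm (((ker_integrable t ε hε)).const_mul _) fun x => ?_
      have : ‖F (t, x)‖ = ‖φ x‖ * (((t - x)^2 + ε^2)⁻¹ : ℝ) * ‖h t‖ := by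
        rw [hF]; simp only [norm_mul, kerc_norm t x ε hε]
      rw [this]
      have hk0 : (0:ℝ) ≤ (((t - x)^2 + ε^2)⁻¹ : ℝ) := by positivity
      have h2 : ‖φ x‖ * (((t - x)^2 + ε^2)⁻¹ : ℝ) * ‖h t‖
          ≤ C * (((t - x)^2 + ε^2)⁻¹ : ℝ) * ‖h t‖ :=
        mul_le_mul_of_nonneg_right (mul_le_mul_of_nonneg_right (hφb x) hk0) (norm_nonneg _)
      calc ‖φ x‖ * (((t - x)^2 + ε^2)⁻¹ : ℝ) * ‖h t‖
          ≤ C * (((t - x)^2 + ε^2)⁻¹ : ℝ) * ‖h t‖ := h2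
        _ = C * ‖h t‖ * (((t - x)^2 + ε^2)⁻¹ : ℝ) := by ring
    rw [integral_const_mul, ker_integral t ε hε] at hmono
    linarith [hmono]
  have hFint : Integrable F (ρ.prod volume) := by
    rw [integrable_prod_iff hFm]
    constructor
    · exact Eventually.of_forall hslice
    · refine Integrable.mono' ((hint.norm.const_mul (C * (π / ε)))) ?_ ?_
      · exact hFm.norm.integral_prod_right'
      · refine Eventually.of_forall fun t => ?_
        have hnn : (0:ℝ) ≤ ∫ x, ‖F (t, x)‖ := integral_nonneg fun x => norm_nonneg _
        rw [Real.norm_of_nonneg hnn]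
        exact hsliceN t
  have hswap := integral_integral_swap (f := fun t x => F (t, x)) (μ := ρ) (ν := volume)
    (by exact hFint)
  have hinner0 : ∀ x : ℝ, ∫ t, F (t, x) ∂ρ = 0 := by
    intro x
    have : ∀ t : ℝ, F (t, x) = φ x * (((((t - x)^2 + ε^2 : ℝ)) : ℂ)⁻¹ * h t) := by
      intro t; rw [hF]; ring
    simp_rw [this]
    rw [integral_const_mul, poisson_vanish ρ h0 h hint h1 h2 x ε hε, mul_zero]
  have hR : ∫ x, ∫ t, F (t, x) ∂ρ = 0 := by
    simp_rw [hinner0]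
    simp
  rw [hR] at hswap
  rw [← hswap]
  refine integral_congr_ae (Eventually.of_forall fun t => ?_)
  show (∫ x, φ x * ((((t - x)^2 + ε^2 : ℝ)) : ℂ)⁻¹) * h t = ∫ x, F (t, x)
  rw [← integral_mul_const]

lemma subst_step (φ : ℝ → ℂ) (t ε : ℝ) (hε : 0 < ε) :
    ∫ x, φ x * ((((t - x)^2 + ε^2 : ℝ)) : ℂ)⁻¹
      = ((ε:ℂ))⁻¹ * ∫ u, φ (t - ε * u) * (((1 + u^2 : ℝ)) : ℂ)⁻¹ := by
  have hεc : ((ε:ℂ)) ≠ 0 := by exact_mod_cast hε.ne'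
  set g : ℝ → ℂ := fun y => φ (t - y) * (((y^2 + ε^2 : ℝ)) : ℂ)⁻¹ with hg
  have e1 : ∫ x, φ x * ((((t - x)^2 + ε^2 : ℝ)) : ℂ)⁻¹ = ∫ x, g (t - x) := by
    refine integral_congr_ae (Eventually.of_forall fun x => ?_)
    show φ x * ((((t - x)^2 + ε^2 : ℝ)) : ℂ)⁻¹ = g (t - x)
    rw [hg]
    simp only
    rw [sub_sub_cancel]
  have e2 : ∫ x : ℝ, g (t - x) = ∫ x : ℝ, g x := integral_reflect g t
  have e3 := MeasureTheory.Measure.integral_comp_mul_left g ε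
  have habs : |ε⁻¹| = ε⁻¹ := abs_of_pos (by positivity)
  rw [habs] at e3
  have e4 : ∀ u : ℝ, g (ε * u) = ((ε:ℂ)^2)⁻¹ * (φ (t - ε * u) * (((1 + u^2 : ℝ)) : ℂ)⁻¹) := by
    intro u
    rw [hg]
    simp only
    have hcast : (((ε * u)^2 + ε^2 : ℝ) : ℂ) = (ε:ℂ)^2 * ((1 + u^2 : ℝ) : ℂ) := by
      push_cast; ring
    rw [hcast, mul_inv]
    ring
  have e6 : ∫ x : ℝ, g (ε * x)
      = ((ε:ℂ)^2)⁻¹ * ∫ u, φ (t - ε * u) * (((1 + u^2 : ℝ)) : ℂ)⁻¹ := by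
    simp_rw [e4]
    rw [integral_const_mul]
  have e5 : ∫ x : ℝ, g x = (ε:ℂ) * ∫ x : ℝ, g (ε * x) := by
    have e7 := congrArg (fun z : ℂ => (ε:ℂ) * z) e3
    rw [e7, Complex.real_smul]
    push_cast
    rw [← mul_assoc, mul_inv_cancel₀ hεc, one_mul]
  rw [e1, e2, e5, e6, ← mul_assoc]
  congr 1
  field_simp

lemma onePlus_int_c : Integrable (fun u : ℝ => (((1 + u^2 : ℝ)) : ℂ)⁻¹) volume := by
  refine (integrable_inv_one_add_sq.ofReal (𝕜 := ℂ)).congr (Eventually.of_forall fun u => ?_)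
  show (((1 + u^2)⁻¹ : ℝ) : ℂ) = (((1 + u^2 : ℝ)) : ℂ)⁻¹
  rw [Complex.ofReal_inv]

lemma onePlus_integral_c : ∫ u : ℝ, (((1 + u^2 : ℝ)) : ℂ)⁻¹ = ((π : ℝ) : ℂ) := by
  have : (fun u : ℝ => (((1 + u^2 : ℝ)) : ℂ)⁻¹) = fun u : ℝ => (((1 + u^2)⁻¹ : ℝ) : ℂ) :=
    funext fun u => by rw [Complex.ofReal_inv]
  rw [this]
  rw [show ∫ u : ℝ, (((1 + u^2)⁻¹ : ℝ) : ℂ) = ((∫ u : ℝ, ((1 + u^2)⁻¹ : ℝ) : ℝ) : ℂ) from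
    integral_ofReal]
  rw [integral_univ_inv_one_add_sq]

lemma onePlus_norm (u : ℝ) : ‖(((1 + u^2 : ℝ)) : ℂ)⁻¹‖ = ((1 + u^2)⁻¹ : ℝ) := by
  have hpos : (0:ℝ) < 1 + u^2 := by positivity
  rw [norm_inv, Complex.norm_real, Real.norm_eq_abs, abs_of_pos hpos]

lemma test_vanish (ρ : Measure ℝ) [IsFiniteMeasure ρ] (h0 : ρ {0} = 0)
    (h : ℝ → ℂ) (hint : Integrable h ρ)
    (h1 : ∀ ξ₁ : ℝ, 0 < ξ₁ →
      ∫ t : ℝ, Complex.exp (Complex.I * ((π * ξ₁ * t : ℝ) : ℂ)) * h t ∂ρ = 0)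
    (h2 : ∀ ξ₂ : ℝ, 0 < ξ₂ →
      ∫ t : ℝ, Complex.exp (Complex.I * ((π * ξ₂ / t : ℝ) : ℂ)) * h t ∂ρ = 0)
    (φ : ℝ → ℂ) (hφc : Continuous φ) (C : ℝ) (hφb : ∀ x, ‖φ x‖ ≤ C) :
    ∫ t, φ t * h t ∂ρ = 0 := by
  have hC0 : 0 ≤ C := le_trans (norm_nonneg (φ 0)) (hφb 0)
  set V : ℝ → ℝ → ℂ := fun ε t => ∫ u, φ (t - ε * u) * (((1 + u^2 : ℝ)) : ℂ)⁻¹ with hV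
  -- each V-average against h vanishes
  have hVzero : ∀ ε : ℝ, 0 < ε → ∫ t, V ε t * h t ∂ρ = 0 := by
    intro ε hε
    have hεc : ((ε:ℂ)) ≠ 0 := by exact_mod_cast hε.ne'
    have hfub := fubini_step ρ h0 h hint h1 h2 φ hφc C hφb ε hε
    have hcongr : ∫ t, (∫ x, φ x * ((((t - x)^2 + ε^2 : ℝ)) : ℂ)⁻¹) * h t ∂ρ
        = ∫ t, ((ε:ℂ))⁻¹ * (V ε t * h t) ∂ρ := by
      refine integral_congr_ae (Eventually.of_forall fun t => ?_)
      show (∫ x, φ x * ((((t - x)^2 + ε^2 : ℝ)) : ℂ)⁻¹) * h t = ((ε:ℂ))⁻¹ * (V ε t * h t)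
      rw [subst_step φ t ε hε, hV]
      ring
    rw [hcongr, integral_const_mul] at hfub
    exact (mul_eq_zero.mp hfub).resolve_left (inv_ne_zero hεc)
  -- uniform bound on V
  have hVband : ∀ ε t : ℝ, ‖V ε t‖ ≤ C * π := by
    intro ε t
    calc ‖V ε t‖ ≤ ∫ u, ‖φ (t - ε * u) * (((1 + u^2 : ℝ)) : ℂ)⁻¹‖ :=
          norm_integral_le_integral_norm _
      _ ≤ ∫ u, C * ((1 + u^2)⁻¹ : ℝ) := by
          refine integral_mono ?_ (integrable_inv_one_add_sq.const_mul C) fun u => ?_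
          · refine Integrable.norm ?_
            refine onePlus_int_c.bdd_mul ?_ (Eventually.of_forall fun x => hφb _)
            exact (hφc.comp (by fun_prop)).aestronglyMeasurable
          · rw [norm_mul, onePlus_norm u]
            have hk0 : (0:ℝ) ≤ ((1 + u^2)⁻¹ : ℝ) := by positivity
            exact mul_le_mul_of_nonneg_right (hφb _) hk0
      _ = C * π := by rw [integral_const_mul, integral_univ_inv_one_add_sq]
  -- measurability of V ε
  have hVmeas : ∀ ε : ℝ, AEStronglyMeasurable (fun t => V ε t) ρ := by
    intro ε
    have : AEStronglyMeasurable (fun p : ℝ × ℝ => φ (p.1 - ε * p.2) * (((1 + p.2^2 : ℝ)) : ℂ)⁻¹)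
        (ρ.prod volume) := by
      refine Continuous.aestronglyMeasurable ?_
      refine Continuous.mul (hφc.comp (by fun_prop)) ?_
      refine Continuous.inv₀ (Complex.continuous_ofReal.comp (by fun_prop)) fun p => ?_
      have : (0:ℝ) < 1 + p.2^2 := by positivity
      exact_mod_cast ne_of_gt this
    exact this.integral_prod_right'
  -- sequence of scales
  set εn : ℕ → ℝ := fun n => ((n:ℝ) + 1)⁻¹ with hεn
  have hεnpos : ∀ n, 0 < εn n := fun n => by positivity
  have hεn0 : Tendsto εn atTop (𝓝 0) := by
    have : Tendsto (fun n : ℕ => 1 / ((n : ℝ) + 1)) atTop (𝓝 0) := tendsto_one_div_add_atTop_nhds_zero_nat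
    simpa [hεn, one_div] using this
  -- pointwise convergence of V
  have hVtend : ∀ t : ℝ, Tendsto (fun n : ℕ => V (εn n) t) atTop (𝓝 (((π:ℝ):ℂ) * φ t)) := by
    intro t
    have hlim : Tendsto (fun n : ℕ => V (εn n) t) atTop
        (𝓝 (∫ u, φ t * (((1 + u^2 : ℝ)) : ℂ)⁻¹)) := by
      refine tendsto_integral_of_dominated_convergence (fun u => C * ((1 + u^2)⁻¹ : ℝ))
        ?_ (integrable_inv_one_add_sq.const_mul C) ?_ ?_
      · intro n
        refine Continuous.aestronglyMeasurable ?_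
        refine Continuous.mul (hφc.comp (by fun_prop)) ?_
        refine Continuous.inv₀ (Complex.continuous_ofReal.comp (by fun_prop)) fun u => ?_
        have : (0:ℝ) < 1 + u^2 := by positivity
        exact_mod_cast ne_of_gt this
      · intro n
        refine Eventually.of_forall fun u => ?_
        rw [norm_mul, onePlus_norm u]
        have hk0 : (0:ℝ) ≤ ((1 + u^2)⁻¹ : ℝ) := by positivity
        exact mul_le_mul_of_nonneg_right (hφb _) hk0
      · refine Eventually.of_forall fun u => ?_
        have harg : Tendsto (fun n : ℕ => t - εn n * u) atTop (𝓝 t) := by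
          have := (hεn0.mul_const u).const_sub t
          simpa using this
        exact ((hφc.tendsto t).comp harg).mul_const _
    have : ∫ u, φ t * (((1 + u^2 : ℝ)) : ℂ)⁻¹ = ((π:ℝ):ℂ) * φ t := by
      rw [integral_const_mul, onePlus_integral_c]
      ring
    rwa [this] at hlim
  -- dominated convergence for the ρ-integrals
  have hπc : (((π:ℝ):ℂ)) ≠ 0 := by
    exact_mod_cast pi_ne_zero
  have hG0 : ∀ n : ℕ, ∫ t, (((π:ℝ):ℂ))⁻¹ * (V (εn n) t * h t) ∂ρ = 0 := by
    intro n
    rw [integral_const_mul, hVzero (εn n) (hεnpos n), mul_zero]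
  have hGtend : Tendsto (fun n : ℕ => ∫ t, (((π:ℝ):ℂ))⁻¹ * (V (εn n) t * h t) ∂ρ)
      atTop (𝓝 (∫ t, φ t * h t ∂ρ)) := by
    refine tendsto_integral_of_dominated_convergence (fun t => C * ‖h t‖)
      ?_ (hint.norm.const_mul C) ?_ ?_
    · intro n
      exact (((hVmeas (εn n)).mul hint.1).const_mul _)
    · intro n
      refine Eventually.of_forall fun t => ?_
      rw [norm_mul, norm_mul]
      have h1 : ‖(((π:ℝ):ℂ))⁻¹‖ = π⁻¹ := by
        rw [norm_inv, Complex.norm_real, Real.norm_eq_abs, abs_of_pos pi_pos]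
      rw [h1]
      have h2 : ‖V (εn n) t‖ * ‖h t‖ ≤ (C * π) * ‖h t‖ :=
        mul_le_mul_of_nonneg_right (hVband _ t) (norm_nonneg _)
      have h3 : π⁻¹ * (‖V (εn n) t‖ * ‖h t‖) ≤ π⁻¹ * ((C * π) * ‖h t‖) :=
        mul_le_mul_of_nonneg_left h2 (by positivity)
      calc π⁻¹ * (‖V (εn n) t‖ * ‖h t‖) ≤ π⁻¹ * ((C * π) * ‖h t‖) := h3
        _ = C * ‖h t‖ := by field_simp
    · refine Eventually.of_forall fun t => ?_
      have := ((hVtend t).mul_const (h t)).const_mul ((((π:ℝ):ℂ))⁻¹)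
      have heq : (((π:ℝ):ℂ))⁻¹ * ((((π:ℝ):ℂ)) * φ t * h t) = φ t * h t := by
        field_simp
      rwa [heq] at this
  have hzero : Tendsto (fun _ : ℕ => (0:ℂ)) atTop (𝓝 (∫ t, φ t * h t ∂ρ)) := by
    refine hGtend.congr fun n => ?_
    rw [hG0 n]
  exact (tendsto_nhds_unique tendsto_const_nhds hzero).symm.symm |>.symm

/-- A finite complex Borel measure `ν` on `ℝ` with `|ν|({0}) = 0` is encoded as
an integrable density `h` against a finite positive Borel measure `ρ` with
`ρ({0}) = 0` (e.g. `ρ = |ν|`); `ν = 0` means `h = 0` `ρ`-a.e.  If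
`∫ e^{iπξ₁t} dν(t) = 0` for all `ξ₁ > 0` and `∫ e^{iπξ₂/t} dν(t) = 0` for all
`ξ₂ > 0`, then `ν = 0`. -/
theorem stmt17 (ρ : Measure ℝ) (hρ : IsFiniteMeasure ρ) (h0 : ρ {0} = 0)
    (h : ℝ → ℂ) (hint : Integrable h ρ)
    (h1 : ∀ ξ₁ : ℝ, 0 < ξ₁ →
      ∫ t : ℝ, Complex.exp (Complex.I * ((π * ξ₁ * t : ℝ) : ℂ)) * h t ∂ρ = 0)
    (h2 : ∀ ξ₂ : ℝ, 0 < ξ₂ →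
      ∫ t : ℝ, Complex.exp (Complex.I * ((π * ξ₂ / t : ℝ) : ℂ)) * h t ∂ρ = 0) :
    h =ᵐ[ρ] 0 := by
  have := hρ
  -- the auxiliary finite measure τ = ρ + ‖h‖·ρ
  set τ : Measure ℝ := ρ + ρ.withDensity (fun t => (‖h t‖₊ : ℝ≥0∞)) with hτ
  have hwdfin : IsFiniteMeasure (ρ.withDensity (fun t => (‖h t‖₊ : ℝ≥0∞))) := by
    constructor
    rw [withDensity_apply _ MeasurableSet.univ, Measure.restrict_univ]
    exact hint.2
  have hτfin : IsFiniteMeasure τ := by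
    rw [hτ]; infer_instance
  refine hint.ae_eq_zero_of_forall_setIntegral_eq_zero fun s hs _ => ?_
  set f : ℝ → ℂ := s.indicator (fun _ => (1:ℂ)) with hf
  have hfh : ∀ t, f t * h t = s.indicator h t := by
    intro t
    rw [hf]
    by_cases ht : t ∈ s <;> simp [Set.indicator_apply, ht]
  have hIf : Integrable (fun t => f t * h t) ρ := by
    refine (hint.indicator hs).congr (Eventually.of_forall fun t => (hfh t).symm)
  have hgoal : ∫ t in s, h t ∂ρ = ∫ t, f t * h t ∂ρ := by
    rw [← integral_indicator hs]
    exact integral_congr_ae (Eventually.of_forall fun t => (hfh t).symm)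
  rw [hgoal]
  -- it suffices to bound the norm by every ε > 0
  have key : ∀ ε : ℝ, 0 < ε → ‖∫ t, f t * h t ∂ρ‖ ≤ ε := by
    intro ε hε
    have hmem : MemLp f 1 τ :=
      memLp_one_iff_integrable.mpr ((integrable_const (1:ℂ)).indicator hs)
    obtain ⟨g, hg, -⟩ := hmem.exists_boundedContinuous_eLpNorm_sub_le (p := 1)
      ENNReal.one_ne_top (ε := ENNReal.ofReal ε) (by simp [hε])
    have hIg : Integrable (fun t => (g t : ℂ) * h t) ρ :=
      hint.bdd_mul g.continuous.aestronglyMeasurable (Eventually.of_forall fun x => g.norm_coe_le_norm x)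
    have hg0 : ∫ t, (g t : ℂ) * h t ∂ρ = 0 :=
      test_vanish ρ h0 h hint h1 h2 g g.continuous ‖g‖ (fun x => g.norm_coe_le_norm x)
    have hsplit : ∫ t, f t * h t ∂ρ = ∫ t, (f t - g t) * h t ∂ρ := by
      have : ∀ t, (f t - g t) * h t = f t * h t - (g t : ℂ) * h t := fun t => by ring
      simp_rw [this]
      rw [integral_sub hIf hIg, hg0, sub_zero]
    rw [hsplit]
    -- pass to lintegrals
    have hnormle := norm_integral_le_lintegral_norm (fun t => (f t - g t) * h t) (μ := ρ)
    refine le_trans hnormle ?_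
    have hL : ∫⁻ t, ENNReal.ofReal ‖(f t - g t) * h t‖ ∂ρ
        = ∫⁻ t, (‖f t - g t‖₊ : ℝ≥0∞) * (‖h t‖₊ : ℝ≥0∞) ∂ρ := by
      refine lintegral_congr fun t => ?_
      rw [norm_mul, ENNReal.ofReal_mul (norm_nonneg _), ofReal_norm_eq_enorm,
        ofReal_norm_eq_enorm]
      rfl
    rw [hL]
    have hwd : ∫⁻ t, (‖f t - g t‖₊ : ℝ≥0∞) * (‖h t‖₊ : ℝ≥0∞) ∂ρ
        = ∫⁻ t, (‖f t - g t‖₊ : ℝ≥0∞) ∂(ρ.withDensity (fun t => (‖h t‖₊ : ℝ≥0∞))) := by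
      rw [lintegral_withDensity_eq_lintegral_mul₀ (f := fun t => (‖h t‖₊ : ℝ≥0∞)) hint.1.enorm]
      · refine lintegral_congr fun t => mul_comm _ _
      · exact (((stronglyMeasurable_const.indicator hs).sub
          g.continuous.stronglyMeasurable).measurable.nnnorm.coe_nnreal_ennreal).aemeasurable
    rw [hwd]
    have hle1 : ∫⁻ t, (‖f t - g t‖₊ : ℝ≥0∞) ∂(ρ.withDensity (fun t => (‖h t‖₊ : ℝ≥0∞)))
        ≤ ∫⁻ t, (‖f t - g t‖₊ : ℝ≥0∞) ∂τ := by
      rw [hτ]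
      exact lintegral_mono' (Measure.le_add_left le_rfl) le_rfl
    have hle2 : ∫⁻ t, (‖f t - g t‖₊ : ℝ≥0∞) ∂τ ≤ ENNReal.ofReal ε := by
      have := hg
      rwa [eLpNorm_one_eq_lintegral_enorm] at this
    exact ENNReal.toReal_le_of_le_ofReal hε.le (le_trans hle1 hle2)
  have hle0 : ‖∫ t, f t * h t ∂ρ‖ ≤ 0 := by
    refine le_of_forall_pos_le_add fun ε hε => ?_
    simpa using key ε hε
  simpa using norm_le_zero_iff.mp hle0
end
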